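/- arXiv:2505.04828 — 7 statements merged into one kernel-verified Lean document; each statement's English description precedes it below -/
import Mathlib

section
/- The normalization constant of the complex Ginibre eigenvalue density satisfies (1/π^N)∫_{ℂ^N} exp(−∑_{k=1}^N |z_k|²) ∏_{1≤i<j≤N}|z_i−z_j|² d²z₁⋯d²z_N = ∏_{k=1}^N Γ(k+1). -/
open MeasureTheory Real Filter Finset Topology Asymptotics

open Complex

open scoped Nat

lemma ginibre_integrable_norm_pow (n : ℕ) :
    Integrable (fun z : ℂ => ‖z‖ ^ n * rexp (-‖z‖ ^ 2)) := by
  have hg : ∀ b : ℝ, 0 < b → Integrable (fun z : ℂ => rexp (-b * ‖z‖ ^ 2)) := by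
    intro b hb
    have h := (GaussianFourier.integrable_cexp_neg_mul_sq_norm_add (V := ℂ) (b := (b : ℂ))
      (by simpa using hb) 0 0).norm
    refine h.congr ?_
    filter_upwards with z
    simp [Complex.norm_exp, ← Complex.ofReal_pow]
  have hdom := ((hg (1/2) (by norm_num)).const_mul ((2:ℝ) ^ n * n !)).add (hg 1 one_pos)
  refine hdom.mono' ?_ ?_
  · exact (((continuous_norm.pow n).mul
      ((continuous_norm.pow 2).neg.rexp)).aestronglyMeasurable)
  · filter_upwards with z
    simp only [Pi.add_apply]
    have hr : (0:ℝ) ≤ ‖z‖ := norm_nonneg z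
    rw [Real.norm_of_nonneg (by positivity)]
    rcases le_total ‖z‖ 1 with h1 | h1
    · have : ‖z‖ ^ n ≤ 1 := pow_le_one₀ hr h1
      have h2 : ‖z‖ ^ n * rexp (-‖z‖ ^ 2) ≤ rexp (-1 * ‖z‖ ^ 2) := by
        rw [neg_one_mul]
        nlinarith [Real.exp_pos (-‖z‖^2)]
      have h3 : (0:ℝ) ≤ 2 ^ n * ↑n ! * rexp (-(1/2) * ‖z‖ ^ 2) := by positivity
      linarith
    · have key : ‖z‖ ^ n ≤ 2 ^ n * ↑n ! * rexp (‖z‖ ^ 2 / 2) := by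
        have h4 := Real.pow_div_factorial_le_exp (x := ‖z‖^2/2) (by positivity) n
        have h5 : ‖z‖ ^ n ≤ (‖z‖ ^ 2) ^ n := by
          rw [← pow_mul]
          exact pow_le_pow_right₀ h1 (by omega)
        have h6 : (‖z‖ ^ 2) ^ n = 2 ^ n * (‖z‖^2/2) ^ n := by
          rw [← mul_pow]; ring_nf
        have h7 : (‖z‖^2/2) ^ n ≤ ↑n ! * rexp (‖z‖ ^ 2 / 2) := by
          rw [div_le_iff₀ (by positivity : (0:ℝ) < (n ! : ℝ))] at h4
          linarith [h4]
        calc ‖z‖ ^ n ≤ (‖z‖^2) ^ n := h5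
          _ = 2 ^ n * (‖z‖^2/2) ^ n := h6
          _ ≤ 2 ^ n * (↑n ! * rexp (‖z‖ ^ 2 / 2)) := by
              have : (0:ℝ) ≤ 2 ^ n := by positivity
              nlinarith
          _ = 2 ^ n * ↑n ! * rexp (‖z‖ ^ 2 / 2) := by ring
      have h8 : ‖z‖ ^ n * rexp (-‖z‖ ^ 2) ≤ 2 ^ n * ↑n ! * rexp (-(1/2) * ‖z‖ ^ 2) := by
        have e1 : rexp (‖z‖ ^ 2 / 2) * rexp (-‖z‖ ^ 2) = rexp (-(1/2) * ‖z‖ ^ 2) := by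
          rw [← Real.exp_add]; ring_nf
        calc ‖z‖ ^ n * rexp (-‖z‖ ^ 2)
            ≤ (2 ^ n * ↑n ! * rexp (‖z‖ ^ 2 / 2)) * rexp (-‖z‖ ^ 2) := by
              have := Real.exp_pos (-‖z‖^2); nlinarith
          _ = 2 ^ n * ↑n ! * rexp (-(1/2) * ‖z‖ ^ 2) := by rw [mul_assoc, e1]
      have h9 : (0:ℝ) < rexp (-1 * ‖z‖ ^ 2) := Real.exp_pos _
      linarith

lemma ginibre_single (a b : ℕ) :
    (∫ z : ℂ, z ^ a * (starRingEnd ℂ) z ^ b * (rexp (-‖z‖ ^ 2) : ℂ)) =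
      if a = b then ((π * Real.Gamma (a + 1) : ℝ) : ℂ) else 0 := by
  by_cases hab : a = b
  · subst hab
    have hpt : ∀ z : ℂ, z ^ a * (starRingEnd ℂ) z ^ a * (rexp (-‖z‖ ^ 2) : ℂ) =
        ((‖z‖ ^ (2 * a) * rexp (-‖z‖ ^ 2) : ℝ) : ℂ) := by
      intro z
      rw [← mul_pow, Complex.mul_conj, Complex.normSq_eq_norm_sq]
      push_cast
      rw [← pow_mul]
    have h1 : (∫ z : ℂ, z ^ a * (starRingEnd ℂ) z ^ a * (rexp (-‖z‖ ^ 2) : ℂ)) =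
        ∫ z : ℂ, ((‖z‖ ^ (2 * a) * rexp (-‖z‖ ^ 2) : ℝ) : ℂ) :=
      integral_congr_ae (Filter.Eventually.of_forall hpt)
    have h2 : (∫ z : ℂ, ‖z‖ ^ (2 * a) * rexp (-‖z‖ ^ 2)) =
        ∫ z : ℂ, ‖z‖ ^ ((2 * a : ℕ) : ℝ) * rexp (-‖z‖ ^ (2:ℝ)) := by
      congr 1; ext z
      rw [Real.rpow_natCast, show ((2:ℝ)) = ((2:ℕ):ℝ) by norm_num, Real.rpow_natCast]
    have hreal : (∫ z : ℂ, ‖z‖ ^ (2 * a) * rexp (-‖z‖ ^ 2)) = π * Real.Gamma (a + 1) := by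
      rw [h2, Complex.integral_rpow_mul_exp_neg_rpow (p := 2) one_le_two
        (by
          have h9 : (0:ℝ) ≤ ((2 * a : ℕ) : ℝ) := by positivity
          linarith)]
      push_cast
      rw [show ((2:ℝ) * a + 2) / 2 = a + 1 by ring]
      ring
    rw [if_pos rfl, h1, ← hreal]
    exact integral_ofReal
  · simp only [if_neg hab]
    set f : ℂ → ℂ := fun z => z ^ a * (starRingEnd ℂ) z ^ b * (rexp (-‖z‖ ^ 2) : ℂ) with hf
    set n : ℤ := (a : ℤ) - b with hn
    have hnz : n ≠ 0 := sub_ne_zero.mpr (by exact_mod_cast hab)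
    have hn0 : (n : ℝ) ≠ 0 := Int.cast_ne_zero.mpr hnz
    set θ : ℝ := π / n with hθ
    set u : Circle := Circle.exp θ with hu
    have hrot : (∫ z : ℂ, f z) = ∫ z : ℂ, f (rotation u z) :=
      (MeasureTheory.integral_comp (rotation u) f).symm
    have hcu : (u : ℂ) = Complex.exp (θ * Complex.I) := Circle.coe_exp θ
    have hconj : (starRingEnd ℂ) (Complex.exp (θ * Complex.I)) =
        Complex.exp (-(θ * Complex.I)) := by
      rw [← Complex.exp_conj]
      congr 1
      simp [Complex.conj_ofReal]
    have hscale : ∀ z : ℂ, f (rotation u z) = Complex.exp (n * θ * Complex.I) * f z := by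
      intro z
      rw [rotation_apply, hf]
      simp only
      rw [norm_mul]
      have hu1 : ‖(u : ℂ)‖ = 1 := Circle.norm_coe u
      rw [hu1, one_mul, map_mul, mul_pow, mul_pow, hcu, hconj,
        ← Complex.exp_nat_mul, ← Complex.exp_nat_mul]
      rw [show Complex.exp ((a:ℂ) * (θ * Complex.I)) * z ^ a *
          (Complex.exp ((b:ℂ) * -(θ * Complex.I)) * (starRingEnd ℂ) z ^ b) *
          (rexp (-‖z‖ ^ 2) : ℂ) =
          Complex.exp ((a:ℂ) * (θ * Complex.I)) * Complex.exp ((b:ℂ) * -(θ * Complex.I)) *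
          (z ^ a * (starRingEnd ℂ) z ^ b * (rexp (-‖z‖ ^ 2) : ℂ)) by ring, ← Complex.exp_add]
      congr 2
      simp only [hn]
      push_cast
      ring
    have hexp : Complex.exp ((n : ℂ) * θ * Complex.I) = -1 := by
      rw [show ((n : ℂ)) * (θ : ℂ) * Complex.I = ((n * θ : ℝ) : ℂ) * Complex.I by push_cast; ring]
      rw [show (n : ℝ) * θ = π from by rw [hθ]; field_simp]
      exact Complex.exp_pi_mul_I
    have hkey : (∫ z : ℂ, f z) = -(∫ z : ℂ, f z) := by
      calc (∫ z : ℂ, f z) = ∫ z : ℂ, f (rotation u z) := hrot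
        _ = ∫ z : ℂ, Complex.exp (n * θ * Complex.I) * f z :=
            integral_congr_ae (Filter.Eventually.of_forall hscale)
        _ = Complex.exp (n * θ * Complex.I) * ∫ z : ℂ, f z := integral_const_mul _ _
        _ = -(∫ z : ℂ, f z) := by rw [hexp]; ring
    have h2 : (2 : ℂ) * ∫ z : ℂ, f z = 0 := by linear_combination hkey
    exact (mul_eq_zero.mp h2).resolve_left two_ne_zero

lemma ginibre_single_integrable (a b : ℕ) :
    Integrable (fun z : ℂ => z ^ a * (starRingEnd ℂ) z ^ b * (rexp (-‖z‖ ^ 2) : ℂ)) := by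
  refine (ginibre_integrable_norm_pow (a + b)).mono' ?_ ?_
  · apply Continuous.aestronglyMeasurable
    exact ((continuous_pow a).mul ((Complex.continuous_conj).pow b)).mul
      (Complex.continuous_ofReal.comp ((continuous_norm.pow 2).neg.rexp))
  · filter_upwards with z
    have hc : ‖(starRingEnd ℂ) z‖ = ‖z‖ := norm_star z
    rw [norm_mul, norm_mul, norm_pow, norm_pow, hc,
      Complex.norm_real, Real.norm_of_nonneg (Real.exp_pos _).le, ← pow_add]

lemma ginibre_prod_pairs {M : Type*} [CommMonoid M] (N : ℕ) (f : Fin N → Fin N → M) :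
    ∏ p ∈ Finset.univ.filter (fun p : Fin N × Fin N => p.1 < p.2), f p.1 p.2 =
      ∏ i, ∏ j ∈ Finset.Ioi i, f i j := by
  rw [Finset.prod_sigma']
  refine Finset.prod_nbij' (fun p => ⟨p.1, p.2⟩) (fun s => (s.1, s.2)) ?_ ?_ ?_ ?_ ?_
  · intro p hp
    simp only [Finset.mem_filter, Finset.mem_univ, true_and] at hp
    simp [Finset.mem_sigma, Finset.mem_Ioi, hp]
  · intro s hs
    simp only [Finset.mem_sigma, Finset.mem_univ, true_and, Finset.mem_Ioi] at hs
    simp [hs]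
  · intro p _; rfl
  · intro s _; rfl
  · intro p _; rfl

lemma ginibre_factorial_prod (N : ℕ) :
    N ! * ∏ i ∈ Finset.range N, i ! = ∏ k ∈ Finset.Icc 1 N, k ! := by
  induction N with
  | zero => simp
  | succ n ih =>
    rw [Finset.prod_range_succ, ← Finset.Ico_add_one_right_eq_Icc,
      Finset.prod_Ico_succ_top (by omega), Finset.Ico_add_one_right_eq_Icc, ← ih, Nat.factorial_succ]
    ring

/-- The normalization constant of the complex Ginibre eigenvalue density:
`(1/π^N) ∫_{ℂ^N} exp(-∑|z_k|²) ∏_{i<j}|z_i - z_j|² d²z = ∏_{k=1}^N Γ(k+1)`. -/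
theorem ginibre_normalization (N : ℕ) :
    (Real.pi ^ N)⁻¹ *
      (∫ z : Fin N → ℂ,
        Real.exp (-∑ k, ‖z k‖ ^ 2) *
          ∏ p ∈ Finset.univ.filter (fun p : Fin N × Fin N => p.1 < p.2), ‖z p.1 - z p.2‖ ^ 2) =
      ∏ k ∈ Finset.Icc 1 N, Real.Gamma ((k : ℝ) + 1) := by
  classical
  set c : Equiv.Perm (Fin N) → ℂ := fun σ => ((Equiv.Perm.sign σ : ℤ) : ℂ) with hc
  set F : Fin N → Fin N → ℂ → ℂ := fun a b w =>
    w ^ (a : ℕ) * (starRingEnd ℂ) w ^ (b : ℕ) * (rexp (-‖w‖ ^ 2) : ℂ) with hF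
  -- pointwise identity
  have hdet : ∀ z : Fin N → ℂ, Matrix.det (Matrix.vandermonde z) =
      ∑ σ : Equiv.Perm (Fin N), c σ * ∏ i, z i ^ ((σ i : Fin N) : ℕ) := by
    intro z
    rw [← Matrix.det_transpose, Matrix.det_apply']
    refine Finset.sum_congr rfl fun σ _ => ?_
    congr 1
  have hpt : ∀ z : Fin N → ℂ,
      ((Real.exp (-∑ k, ‖z k‖ ^ 2) *
        ∏ p ∈ Finset.univ.filter (fun p : Fin N × Fin N => p.1 < p.2),
          ‖z p.1 - z p.2‖ ^ 2 : ℝ) : ℂ) =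
      ∑ q : Equiv.Perm (Fin N) × Equiv.Perm (Fin N),
        (c q.1 * c q.2) * ∏ i, F (q.1 i) (q.2 i) (z i) := by
    intro z
    rw [Complex.ofReal_mul, Complex.ofReal_prod]
    have hexp : ((Real.exp (-∑ k, ‖z k‖ ^ 2) : ℝ) : ℂ) =
        ∏ i, ((rexp (-‖z i‖ ^ 2) : ℝ) : ℂ) := by
      have hsgn : (-∑ k, ‖z k‖ ^ 2) = ∑ i, -‖z i‖ ^ 2 := by
        simp
      rw [hsgn, Real.exp_sum, Complex.ofReal_prod]
    have hpair : (∏ p ∈ Finset.univ.filter (fun p : Fin N × Fin N => p.1 < p.2),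
        ((‖z p.1 - z p.2‖ ^ 2 : ℝ) : ℂ)) =
        Matrix.det (Matrix.vandermonde z) *
          (starRingEnd ℂ) (Matrix.det (Matrix.vandermonde z)) := by
      rw [ginibre_prod_pairs N (fun i j => ((‖z i - z j‖ ^ 2 : ℝ) : ℂ))]
      have : ∀ i j : Fin N, ((‖z i - z j‖ ^ 2 : ℝ) : ℂ) =
          (z j - z i) * (starRingEnd ℂ) (z j - z i) := by
        intro i j
        rw [Complex.mul_conj, Complex.normSq_eq_norm_sq,
          norm_sub_rev]
      simp_rw [this]
      rw [Finset.prod_congr rfl (fun i _ => Finset.prod_mul_distrib),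
        Finset.prod_mul_distrib, Matrix.det_vandermonde]
      congr 1
      calc ∏ i : Fin N, ∏ j ∈ Finset.Ioi i, (starRingEnd ℂ) (z j - z i)
          = ∏ i : Fin N, (starRingEnd ℂ) (∏ j ∈ Finset.Ioi i, (z j - z i)) :=
            Finset.prod_congr rfl fun i _ => (map_prod _ _ _).symm
        _ = (starRingEnd ℂ) (∏ i : Fin N, ∏ j ∈ Finset.Ioi i, (z j - z i)) :=
            (map_prod _ _ _).symm
    rw [hexp, hpair, hdet, map_sum]
    have hconj : ∀ σ : Equiv.Perm (Fin N),
        (starRingEnd ℂ) (c σ * ∏ i, z i ^ ((σ i : Fin N) : ℕ)) =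
          c σ * ∏ i, (starRingEnd ℂ) (z i) ^ ((σ i : Fin N) : ℕ) := by
      intro σ
      rw [map_mul, map_prod]
      congr 1
      · rw [hc]; exact map_intCast _ _
      · exact Finset.prod_congr rfl (fun i _ => map_pow _ _ _)
    rw [Finset.sum_congr rfl (fun σ _ => hconj σ)]
    rw [← Finset.univ_product_univ, Finset.sum_product]
    rw [Finset.sum_mul_sum, Finset.mul_sum]
    refine Finset.sum_congr rfl fun σ _ => ?_
    rw [Finset.mul_sum]
    refine Finset.sum_congr rfl fun τ _ => ?_
    rw [hF]
    simp only
    rw [show (∏ i, z i ^ ((σ i : Fin N) : ℕ) * (starRingEnd ℂ) (z i) ^ ((τ i : Fin N) : ℕ) *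
        ((rexp (-‖z i‖ ^ 2) : ℝ) : ℂ)) =
        (∏ i, z i ^ ((σ i : Fin N) : ℕ)) * (∏ i, (starRingEnd ℂ) (z i) ^ ((τ i : Fin N) : ℕ)) *
        ∏ i, ((rexp (-‖z i‖ ^ 2) : ℝ) : ℂ) from by
      rw [← Finset.prod_mul_distrib, ← Finset.prod_mul_distrib]]
    ring
  -- integrate
  have hint : ∀ q : Equiv.Perm (Fin N) × Equiv.Perm (Fin N),
      Integrable (fun z : Fin N → ℂ => (c q.1 * c q.2) * ∏ i, F (q.1 i) (q.2 i) (z i)) :=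
    fun q => (Integrable.fintype_prod (f := fun i => F (q.1 i) (q.2 i))
      (fun i => ginibre_single_integrable _ _)).const_mul _
  have hC : (∫ z : Fin N → ℂ,
      ((Real.exp (-∑ k, ‖z k‖ ^ 2) *
        ∏ p ∈ Finset.univ.filter (fun p : Fin N × Fin N => p.1 < p.2),
          ‖z p.1 - z p.2‖ ^ 2 : ℝ) : ℂ)) =
      ∑ q : Equiv.Perm (Fin N) × Equiv.Perm (Fin N),
        (c q.1 * c q.2) * ∏ i : Fin N,
          (if ((q.1 i : Fin N) : ℕ) = ((q.2 i : Fin N) : ℕ)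
            then ((π * Real.Gamma (((q.1 i : Fin N) : ℕ) + 1) : ℝ) : ℂ) else 0) := by
    rw [integral_congr_ae (Filter.Eventually.of_forall hpt),
      integral_finset_sum _ (fun q _ => hint q)]
    refine Finset.sum_congr rfl fun q _ => ?_
    rw [integral_const_mul, volume_pi, integral_fintype_prod_eq_prod (ι := Fin N) (fun i => F (q.1 i) (q.2 i))]
    congr 1
    exact Finset.prod_congr rfl (fun i _ => ginibre_single _ _)
  -- evaluate the sum
  have hsum : (∑ q : Equiv.Perm (Fin N) × Equiv.Perm (Fin N),
        (c q.1 * c q.2) * ∏ i : Fin N,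
          (if ((q.1 i : Fin N) : ℕ) = ((q.2 i : Fin N) : ℕ)
            then ((π * Real.Gamma (((q.1 i : Fin N) : ℕ) + 1) : ℝ) : ℂ) else 0)) =
      (N ! : ℂ) * ∏ i : Fin N, ((π * Real.Gamma ((i : ℕ) + 1) : ℝ) : ℂ) := by
    rw [← Finset.univ_product_univ, Finset.sum_product]
    have hdiag : ∀ σ : Equiv.Perm (Fin N),
        (∑ τ : Equiv.Perm (Fin N), (c σ * c τ) * ∏ i : Fin N,
          (if ((σ i : Fin N) : ℕ) = ((τ i : Fin N) : ℕ)
            then ((π * Real.Gamma (((σ i : Fin N) : ℕ) + 1) : ℝ) : ℂ) else 0)) =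
        ∏ i : Fin N, ((π * Real.Gamma ((i : ℕ) + 1) : ℝ) : ℂ) := by
      intro σ
      rw [Finset.sum_eq_single σ]
      · have h1 : (c σ * c σ) = 1 := by
          have h2 : ((Equiv.Perm.sign σ : ℤ) : ℂ) * ((Equiv.Perm.sign σ : ℤ) : ℂ) = 1 := by
            rcases Int.units_eq_one_or (Equiv.Perm.sign σ) with h | h <;> simp [h]
          rw [hc]
          exact h2
        rw [h1, one_mul]
        rw [Finset.prod_congr rfl (fun i _ => if_pos rfl)]
        exact Equiv.prod_comp σ (fun j => ((π * Real.Gamma ((j : ℕ) + 1) : ℝ) : ℂ))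
      · intro τ _ hτ
        have hστ : ∃ i, σ i ≠ τ i := by
          by_contra hcon
          push_neg at hcon
          exact hτ (Equiv.ext hcon).symm
        obtain ⟨i, hi⟩ := hστ
        have h0 : (if ((σ i : Fin N) : ℕ) = ((τ i : Fin N) : ℕ)
            then ((π * Real.Gamma (((σ i : Fin N) : ℕ) + 1) : ℝ) : ℂ) else 0) = 0 :=
          if_neg (fun h => hi (Fin.val_injective h))
        rw [Finset.prod_eq_zero (Finset.mem_univ i) h0, mul_zero]
      · intro h; exact absurd (Finset.mem_univ σ) h
    rw [Finset.sum_congr rfl (fun σ _ => hdiag σ), Finset.sum_const, Finset.card_univ,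
      Fintype.card_perm, Fintype.card_fin, nsmul_eq_mul]
  -- back to the reals
  have hreal : (∫ z : Fin N → ℂ,
      Real.exp (-∑ k, ‖z k‖ ^ 2) *
        ∏ p ∈ Finset.univ.filter (fun p : Fin N × Fin N => p.1 < p.2), ‖z p.1 - z p.2‖ ^ 2) =
      (N ! : ℝ) * ∏ i : Fin N, (π * Real.Gamma ((i : ℕ) + 1)) := by
    have h1 : ((∫ z : Fin N → ℂ,
        Real.exp (-∑ k, ‖z k‖ ^ 2) *
          ∏ p ∈ Finset.univ.filter (fun p : Fin N × Fin N => p.1 < p.2),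
            ‖z p.1 - z p.2‖ ^ 2 : ℝ) : ℂ) =
        (((N ! : ℝ) * ∏ i : Fin N, (π * Real.Gamma ((i : ℕ) + 1)) : ℝ) : ℂ) := by
      have h2 : (∫ z : Fin N → ℂ,
          ((Real.exp (-∑ k, ‖z k‖ ^ 2) *
            ∏ p ∈ Finset.univ.filter (fun p : Fin N × Fin N => p.1 < p.2),
              ‖z p.1 - z p.2‖ ^ 2 : ℝ) : ℂ)) =
          ((∫ z : Fin N → ℂ,
            Real.exp (-∑ k, ‖z k‖ ^ 2) *
              ∏ p ∈ Finset.univ.filter (fun p : Fin N × Fin N => p.1 < p.2),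
                ‖z p.1 - z p.2‖ ^ 2 : ℝ) : ℂ) := integral_ofReal
      rw [← h2, hC, hsum]
      norm_cast
    exact_mod_cast h1
  rw [hreal]
  have hprod : (∏ i : Fin N, (π * Real.Gamma ((i : ℕ) + 1))) =
      π ^ N * ∏ i : Fin N, Real.Gamma ((i : ℕ) + 1) := by
    rw [Finset.prod_mul_distrib, Finset.prod_const, Finset.card_univ, Fintype.card_fin]
  rw [hprod]
  have hπ : (Real.pi ^ N) ≠ 0 := pow_ne_zero _ Real.pi_ne_zero
  rw [show (Real.pi ^ N)⁻¹ * ((N ! : ℝ) * (π ^ N * ∏ i : Fin N, Real.Gamma ((i : ℕ) + 1))) =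
      (π ^ N)⁻¹ * π ^ N * ((N ! : ℝ) * ∏ i : Fin N, Real.Gamma ((i : ℕ) + 1)) from by ring,
    inv_mul_cancel₀ hπ, one_mul]
  have hΓ : ∀ i : Fin N, Real.Gamma ((i : ℕ) + 1) = ((i : ℕ)! : ℝ) := by
    intro i
    exact_mod_cast Real.Gamma_nat_eq_factorial (i : ℕ)
  rw [Finset.prod_congr rfl (fun i _ => hΓ i),
    Fin.prod_univ_eq_prod_range (fun i => ((i ! : ℕ) : ℝ))]
  have hΓ2 : ∀ k ∈ Finset.Icc 1 N, Real.Gamma ((k : ℝ) + 1) = ((k ! : ℕ) : ℝ) := fun k _ => by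
    exact_mod_cast Real.Gamma_nat_eq_factorial k
  rw [Finset.prod_congr rfl hΓ2]
  have hfin := ginibre_factorial_prod N
  have h3 : ((N ! : ℕ) : ℝ) * ∏ i ∈ Finset.range N, ((i ! : ℕ) : ℝ) =
      ∏ k ∈ Finset.Icc 1 N, ((k ! : ℕ) : ℝ) := by
    rw [← Nat.cast_prod, ← Nat.cast_prod, ← Nat.cast_mul, hfin]
  exact h3
end

section
/- For a random N×N complex induced Ginibre matrix G with rectangularity index L ≥ 0, the probability that the minimum eigenvalue modulus is at least r equals ∏_{k=1}^N Γ(k+L, r²)/Γ(k+L). -/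
open MeasureTheory Real Filter Finset Topology Asymptotics

/-- Joint eigenvalue density of the `N × N` complex induced Ginibre ensemble with
rectangularity index `L`. -/
noncomputable def inducedGinibreDensity (N : ℕ) (L : ℝ) (z : Fin N → ℂ) : ℝ :=
  ((N.factorial : ℝ) * Real.pi ^ N * ∏ k ∈ Finset.Icc 1 N, Real.Gamma ((k : ℝ) + L))⁻¹ *
    (∏ p ∈ Finset.univ.filter (fun p : Fin N × Fin N => p.1 < p.2), ‖z p.1 - z p.2‖ ^ 2) *
    (∏ j, ‖z j‖ ^ (2 * L)) * Real.exp (-∑ j, ‖z j‖ ^ 2)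

-- bound: t^c ≤ exp(n²/2) * exp(t²/2)
lemma rpow_le_exp_sq (c : ℝ) (hc : 0 ≤ c) : ∃ C : ℝ, 0 < C ∧ ∀ t : ℝ, 0 ≤ t →
    t ^ c ≤ C * Real.exp (t ^ 2 / 2) := by
  obtain ⟨n, hn⟩ : ∃ n : ℕ, c ≤ n := exists_nat_ge c
  refine ⟨Real.exp ((n : ℝ) ^ 2 / 2), Real.exp_pos _, fun t ht => ?_⟩
  rcases le_or_gt t 1 with h1 | h1
  · calc t ^ c ≤ 1 := Real.rpow_le_one ht h1 hc
    _ ≤ Real.exp ((n:ℝ)^2/2) * Real.exp (t^2/2) := by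
        rw [← Real.exp_add]
        refine Real.one_le_exp (by positivity)
  · have ht0 : 0 < t := lt_trans one_pos h1
    calc t ^ c ≤ t ^ (n : ℝ) := Real.rpow_le_rpow_of_exponent_le h1.le hn
    _ = Real.exp ((n : ℝ) * Real.log t) := by
        rw [Real.rpow_def_of_pos ht0, mul_comm]
    _ ≤ Real.exp ((n:ℝ)^2/2 + t^2/2) := by
        apply Real.exp_le_exp.2
        have hlog : Real.log t ≤ t := (Real.log_le_sub_one_of_pos ht0).trans (by linarith)
        nlinarith [sq_nonneg ((n:ℝ) - t), Real.log_nonneg h1.le, (Nat.cast_nonneg n : (0:ℝ) ≤ n)]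
    _ = _ := by rw [Real.exp_add]

lemma integrable_gaussian_complex : Integrable (fun z : ℂ => Real.exp (-(‖z‖ ^ 2) / 2)) := by
  have hmp := Complex.volume_preserving_equiv_real_prod
  have he := Complex.measurableEquivRealProd.measurableEmbedding
  have h1 : Integrable (fun x : ℝ => Real.exp (-(x^2)/2)) := by
    have := integrable_exp_neg_mul_sq (by norm_num : (0:ℝ) < 1/2)
    convert this using 2 with x
    ring_nf
  have h2 : Integrable (fun p : ℝ × ℝ => Real.exp (-(p.1^2)/2) * Real.exp (-(p.2^2)/2)) := by
    rw [show (volume : Measure (ℝ × ℝ)) = Measure.prod volume volume from rfl]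
    exact Integrable.mul_prod h1 h1
  have := (hmp.integrable_comp_emb he).2 h2
  simp only [Function.comp_def] at this
  convert this using 2 with z
  · rfl
  rw [← Real.exp_add]
  congr 1
  have : ‖z‖ ^ 2 = z.re ^ 2 + z.im ^ 2 := by
    rw [← Complex.normSq_eq_norm_sq]; simp [Complex.normSq_apply, sq]
  rw [this]; simp [Complex.measurableEquivRealProd]; ring

lemma integrable_norm_rpow_exp (c : ℝ) (hc : 0 ≤ c) :
    Integrable (fun z : ℂ => ‖z‖ ^ c * Real.exp (-‖z‖ ^ 2)) := by
  obtain ⟨C, hC, hbound⟩ := rpow_le_exp_sq c hc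
  refine Integrable.mono' (integrable_gaussian_complex.const_mul C) ?_ ?_
  · exact ((continuous_norm.rpow_const (fun z => Or.inr hc)).mul
      (Real.continuous_exp.comp (continuous_norm.pow 2).neg)).aestronglyMeasurable
  · refine Filter.Eventually.of_forall fun z => ?_
    rw [Real.norm_eq_abs, abs_of_nonneg (by positivity)]
    calc ‖z‖ ^ c * Real.exp (-‖z‖^2) ≤ (C * Real.exp (‖z‖^2/2)) * Real.exp (-‖z‖^2) := by
          gcongr; exact hbound _ (norm_nonneg z)
    _ = C * Real.exp (-(‖z‖^2)/2) := by rw [mul_assoc, ← Real.exp_add]; ring_nf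

lemma angular_integral (n : ℤ) :
    ∫ θ in Set.Ioo (-π) π, Complex.exp (n * θ * Complex.I) =
      if n = 0 then (2 * π : ℂ) else 0 := by
  rw [← MeasureTheory.integral_Ioc_eq_integral_Ioo,
    ← intervalIntegral.integral_of_le (by linarith [Real.pi_pos] : -π ≤ π)]
  rcases eq_or_ne n 0 with h | h
  · simp [h]
    norm_num
    ring
  · rw [if_neg h]
    have h' : (n : ℂ) * Complex.I ≠ 0 := by
      simp [Complex.I_ne_zero, h]
    have : ∀ θ : ℝ, Complex.exp ((n : ℂ) * θ * Complex.I) =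
        Complex.exp ((n * Complex.I) * θ) := by intro θ; ring_nf
    simp_rw [this]
    rw [integral_exp_mul_complex h']
    have e1 : Complex.exp ((n : ℂ) * Complex.I * π) = ((-1 : ℂ)) ^ n := by
      rw [show (n:ℂ) * Complex.I * (π:ℂ) = (n:ℂ) * (π * Complex.I) by ring,
        Complex.exp_int_mul, Complex.exp_pi_mul_I]
    have e2 : Complex.exp ((n : ℂ) * Complex.I * (-π:ℝ)) = ((-1 : ℂ)) ^ n := by
      push_cast
      rw [show (n:ℂ) * Complex.I * (-π) = (-n:ℤ) * (π * Complex.I) by push_cast; ring,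
        Complex.exp_int_mul, Complex.exp_pi_mul_I, zpow_neg]
      rw [inv_eq_iff_eq_inv, ← zpow_neg]
      rcases Int.even_or_odd n with he | ho
      · rw [he.neg_one_zpow, he.neg.neg_one_zpow]
      · rw [ho.neg_one_zpow, ho.neg.neg_one_zpow]
    rw [e1, e2, sub_self, zero_div]

/-- Upper incomplete Gamma function `Γ(a,x) = ∫_x^∞ t^(a-1) e^(-t) dt`. -/
noncomputable def uGamma (a x : ℝ) : ℝ := ∫ t in Set.Ioi x, t ^ (a - 1) * Real.exp (-t)

lemma sq_image_Ioi {r : ℝ} (hr : 0 ≤ r) :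
    (fun x : ℝ => x ^ 2) '' Set.Ioi r = Set.Ioi (r ^ 2) := by
  ext t
  constructor
  · rintro ⟨x, hx, rfl⟩
    simp only [Set.mem_Ioi] at hx ⊢
    nlinarith
  · intro ht
    simp only [Set.mem_Ioi] at ht
    refine ⟨Real.sqrt t, ?_, Real.sq_sqrt (by nlinarith)⟩
    simp only [Set.mem_Ioi]
    have : Real.sqrt (r ^ 2) < Real.sqrt t := Real.sqrt_lt_sqrt (by positivity) ht
    rwa [Real.sqrt_sq hr] at this

lemma radial_integral (c : ℝ) {r : ℝ} (hr : 0 ≤ r) :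
    ∫ ρ in Set.Ioi r, ρ ^ (2 * c + 1) * Real.exp (-ρ ^ 2) = uGamma (c + 1) (r ^ 2) / 2 := by
  have hder : ∀ x ∈ Set.Ioi r, HasDerivWithinAt (fun x : ℝ => x ^ 2) (2 * x) (Set.Ioi r) x := by
    intro x _
    simpa using (hasDerivAt_pow 2 x).hasDerivWithinAt
  have hinj : Set.InjOn (fun x : ℝ => x ^ 2) (Set.Ioi r) := by
    intro x hx y hy h
    simp only [Set.mem_Ioi] at hx hy
    simp only at h
    nlinarith [hx, hy, hr, h]
  have key := integral_image_eq_integral_abs_deriv_smul measurableSet_Ioi hder hinj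
    (fun t => t ^ c * Real.exp (-t))
  rw [sq_image_Ioi hr] at key
  have : uGamma (c + 1) (r ^ 2) = ∫ t in Set.Ioi (r ^ 2), t ^ c * Real.exp (-t) := by
    unfold uGamma; norm_num
  rw [this, key]
  have h2 : ∫ x in Set.Ioi r, |2 * x| • ((x ^ 2) ^ c * Real.exp (-x ^ 2)) =
      ∫ x in Set.Ioi r, 2 * (x ^ (2 * c + 1) * Real.exp (-x ^ 2)) := by
    refine setIntegral_congr_fun measurableSet_Ioi fun x hx => ?_
    simp only [Set.mem_Ioi] at hx
    have hx0 : 0 < x := lt_of_le_of_lt hr hx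
    have h1 : ((x ^ 2) : ℝ) ^ c = x ^ (2 * c) := by
      rw [← Real.rpow_natCast x 2, ← Real.rpow_mul hx0.le]
      norm_num
    rw [smul_eq_mul, abs_of_nonneg (by positivity : (0:ℝ) ≤ 2 * x), h1,
      Real.rpow_add hx0, Real.rpow_one]
    ring
  rw [h2, integral_const_mul]
  ring

noncomputable def hfun (L : ℝ) (a b : ℕ) (z : ℂ) : ℂ :=
  z ^ a * (starRingEnd ℂ z) ^ b * ((‖z‖ ^ (2 * L) * Real.exp (-‖z‖ ^ 2) : ℝ) : ℂ)

lemma hfun_continuous (L : ℝ) (hL : 0 ≤ L) (a b : ℕ) : Continuous (hfun L a b) := by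
  unfold hfun
  exact ((continuous_id.pow a).mul (Complex.continuous_conj.pow b)).mul
    (Complex.continuous_ofReal.comp
      ((continuous_norm.rpow_const fun z => Or.inr (by positivity)).mul
        (Real.continuous_exp.comp (continuous_norm.pow 2).neg)))

lemma hfun_integrable (L : ℝ) (hL : 0 ≤ L) (a b : ℕ) : Integrable (hfun L a b) := by
  refine Integrable.mono' (integrable_norm_rpow_exp ((a : ℝ) + b + 2 * L) (by positivity))
    (hfun_continuous L hL a b).aestronglyMeasurable ?_
  have h0 : ∀ᵐ z : ℂ, z ≠ 0 := by
    refine ae_iff.2 ?_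
    have : {z : ℂ | ¬ z ≠ 0} = {(0 : ℂ)} := by ext z; simp
    rw [this]
    exact measure_singleton 0
  filter_upwards [h0] with z hz
  have hz' : 0 < ‖z‖ := norm_pos_iff.2 hz
  have e : ‖hfun L a b z‖ = ‖z‖ ^ ((a : ℝ) + b + 2 * L) * Real.exp (-‖z‖ ^ 2) := by
    unfold hfun
    rw [norm_mul, norm_mul, norm_pow, norm_pow, Complex.norm_conj, Complex.norm_real, Real.norm_eq_abs, abs_of_nonneg (by positivity),
      Real.rpow_add hz', Real.rpow_add hz', Real.rpow_natCast, Real.rpow_natCast]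
    ring
  exact le_of_eq e

lemma hfun_setIntegral (L : ℝ) (hL : 0 ≤ L) {r : ℝ} (hr : 0 ≤ r) (a b : ℕ) :
    ∫ z in {w : ℂ | r ≤ ‖w‖}, hfun L a b z =
      if a = b then ((π * uGamma ((a : ℝ) + 1 + L) (r ^ 2) : ℝ) : ℂ) else 0 := by
  have hS : MeasurableSet {w : ℂ | r ≤ ‖w‖} :=
    (isClosed_le continuous_const continuous_norm).measurableSet
  rw [← integral_indicator hS, ← Complex.integral_comp_polarCoord_symm, polarCoord_target]
  have step : ∀ p ∈ (Set.Ioi (0:ℝ)) ×ˢ (Set.Ioo (-π) π),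
      p.1 • Set.indicator {w : ℂ | r ≤ ‖w‖} (hfun L a b) (Complex.polarCoord.symm p) =
        (Set.indicator (Set.Ici r)
          (fun ρ : ℝ => ((ρ ^ ((a:ℝ) + b + 2 * L + 1) * Real.exp (-ρ ^ 2) : ℝ) : ℂ)) p.1) *
        Complex.exp ((((a:ℤ) - (b:ℤ) : ℤ) : ℂ) * (p.2 : ℝ) * Complex.I) := by
    rintro ⟨ρ, θ⟩ ⟨hρ, hθ⟩
    simp only [Set.mem_Ioi] at hρ
    have hz : Complex.polarCoord.symm (ρ, θ) = (ρ : ℂ) * Complex.exp ((θ : ℂ) * Complex.I) := by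
      rw [Complex.polarCoord_symm_apply, Complex.ofReal_cos, Complex.ofReal_sin,
        ← Complex.exp_mul_I]
    have hnorm : ‖Complex.polarCoord.symm (ρ, θ)‖ = ρ := by
      rw [hz, norm_mul, Complex.norm_real, Real.norm_eq_abs, abs_of_pos hρ,
        Complex.norm_exp]
      simp
    simp only [Set.indicator_apply, Set.mem_setOf_eq, Set.mem_Ici, hnorm]
    split_ifs with hcond
    · rw [hz]
      unfold hfun
      rw [hz] at hnorm
      rw [hnorm]
      have hconj : (starRingEnd ℂ) ((ρ:ℂ) * Complex.exp ((θ:ℂ) * Complex.I)) =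
          (ρ:ℂ) * Complex.exp (-((θ:ℂ) * Complex.I)) := by
        rw [map_mul, Complex.conj_ofReal, ← Complex.exp_conj, map_mul, Complex.conj_ofReal,
          Complex.conj_I, mul_neg]
      rw [hconj, mul_pow, mul_pow, ← Complex.exp_nat_mul, ← Complex.exp_nat_mul,
        Complex.real_smul]
      have hrad : ρ ^ ((a:ℝ) + b + 2 * L + 1) = ρ ^ a * ρ ^ b * ρ ^ (2 * L) * ρ := by
        rw [Real.rpow_add hρ, Real.rpow_add hρ, Real.rpow_add hρ, Real.rpow_natCast,
          Real.rpow_natCast, Real.rpow_one]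
      rw [hrad]
      have hexp : Complex.exp ((((a:ℤ) - (b:ℤ) : ℤ) : ℂ) * (θ : ℝ) * Complex.I) =
          Complex.exp ((a : ℂ) * ((θ:ℂ) * Complex.I)) *
            Complex.exp ((b : ℂ) * (-((θ:ℂ) * Complex.I))) := by
        rw [← Complex.exp_add]
        congr 1
        push_cast
        ring
      rw [hexp]
      push_cast
      ring
    · simp
  rw [setIntegral_congr_fun (measurableSet_Ioi.prod measurableSet_Ioo) step,
    show (volume : Measure (ℝ × ℝ)) = (volume : Measure ℝ).prod volume from rfl,
    setIntegral_prod_mul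
      (fun ρ : ℝ => (Set.Ici r).indicator
        (fun ρ : ℝ => ((ρ ^ ((a:ℝ) + b + 2 * L + 1) * Real.exp (-ρ ^ 2) : ℝ) : ℂ)) ρ)
      (fun θ : ℝ => Complex.exp ((((a:ℤ) - (b:ℤ) : ℤ) : ℂ) * (θ : ℝ) * Complex.I))
      (Set.Ioi 0) (Set.Ioo (-π) π), angular_integral]
  -- radial part
  have hcast : (Set.indicator (Set.Ici r)
      (fun ρ : ℝ => ((ρ ^ ((a:ℝ) + b + 2 * L + 1) * Real.exp (-ρ ^ 2) : ℝ) : ℂ))) =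
      fun ρ : ℝ => ((Set.indicator (Set.Ici r)
        (fun ρ : ℝ => ρ ^ ((a:ℝ) + b + 2 * L + 1) * Real.exp (-ρ ^ 2)) ρ : ℝ) : ℂ) := by
    ext ρ
    simp only [Set.indicator_apply]
    split_ifs <;> simp
  rw [hcast]
  beta_reduce
  rw [integral_complex_ofReal]
  have hrreal : (∫ ρ in Set.Ioi (0:ℝ), Set.indicator (Set.Ici r)
      (fun ρ : ℝ => ρ ^ ((a:ℝ) + b + 2 * L + 1) * Real.exp (-ρ ^ 2)) ρ) =
      ∫ ρ in Set.Ioi r, ρ ^ ((a:ℝ) + b + 2 * L + 1) * Real.exp (-ρ ^ 2) := by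
    rw [integral_indicator measurableSet_Ici, Measure.restrict_restrict measurableSet_Ici]
    refine setIntegral_congr_set ?_
    have h1 : (Set.Ici r ∩ Set.Ioi 0 : Set ℝ) =ᵐ[volume] (Set.Ioi r ∩ Set.Ioi 0 : Set ℝ) :=
      ae_eq_set_inter Ioi_ae_eq_Ici.symm (Filter.EventuallyEq.refl _ _)
    have h2 : Set.Ioi r ∩ Set.Ioi (0:ℝ) = Set.Ioi r :=
      Set.inter_eq_left.2 (Set.Ioi_subset_Ioi hr)
    rw [← h2]
    exact h1
  rcases eq_or_ne a b with hab | hab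
  · subst hab
    rw [if_pos rfl, if_pos (sub_self (a:ℤ))]
    have he : ((a:ℝ) + a + 2 * L + 1) = 2 * ((a:ℝ) + L) + 1 := by ring
    rw [hrreal, he, radial_integral ((a:ℝ) + L) hr]
    have : ((a:ℝ) + L + 1) = ((a:ℝ) + 1 + L) := by ring
    rw [this]
    push_cast
    ring
  · rw [if_neg hab, if_neg (sub_ne_zero.2 (by exact_mod_cast hab)), mul_zero]

lemma pairs_prod_eq_det (N : ℕ) (z : Fin N → ℂ) :
    (∏ p ∈ Finset.univ.filter (fun p : Fin N × Fin N => p.1 < p.2),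
        ((‖z p.1 - z p.2‖ ^ 2 : ℝ) : ℂ)) =
      (Matrix.vandermonde z).det * (starRingEnd ℂ) ((Matrix.vandermonde z).det) := by
  have key : ∀ w : ℂ, ((‖w‖ ^ 2 : ℝ) : ℂ) = w * (starRingEnd ℂ) w := by
    intro w
    rw [Complex.mul_conj, Complex.sq_norm]
  have h1 : (∏ p ∈ Finset.univ.filter (fun p : Fin N × Fin N => p.1 < p.2),
      ((‖z p.1 - z p.2‖ ^ 2 : ℝ) : ℂ)) =
      (∏ p ∈ Finset.univ.filter (fun p : Fin N × Fin N => p.1 < p.2), (z p.2 - z p.1)) *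
      (starRingEnd ℂ) (∏ p ∈ Finset.univ.filter (fun p : Fin N × Fin N => p.1 < p.2),
        (z p.2 - z p.1)) := by
    rw [map_prod, ← Finset.prod_mul_distrib]
    refine Finset.prod_congr rfl fun p _ => ?_
    rw [← key, norm_sub_rev]
  rw [h1]
  have h2 : (∏ p ∈ Finset.univ.filter (fun p : Fin N × Fin N => p.1 < p.2), (z p.2 - z p.1)) =
      (Matrix.vandermonde z).det := by
    rw [Matrix.det_vandermonde, Finset.prod_sigma']
    refine Finset.prod_nbij' (fun p : Fin N × Fin N => (⟨p.1, p.2⟩ : Σ _ : Fin N, Fin N))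
      (fun x => (x.1, x.2)) ?_ ?_ ?_ ?_ ?_
    · rintro ⟨i, j⟩ hij
      simp only [Finset.mem_filter, Finset.mem_univ, true_and] at hij
      simp [Finset.mem_Ioi, hij]
    · rintro ⟨i, j⟩ hij
      simp only [Finset.mem_sigma, Finset.mem_univ, Finset.mem_Ioi, true_and] at hij
      simp [hij]
    · rintro ⟨i, j⟩ _; rfl
    · rintro ⟨i, j⟩ _; rfl
    · rintro ⟨i, j⟩ _; rfl
  rw [h2]

lemma vandermonde_det_expand (N : ℕ) (z : Fin N → ℂ) :
    (Matrix.vandermonde z).det =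
      ∑ σ : Equiv.Perm (Fin N), ((Equiv.Perm.sign σ : ℤ) : ℂ) * ∏ j, z j ^ ((σ j : ℕ)) := by
  rw [← Matrix.det_transpose, Matrix.det_apply']
  refine Finset.sum_congr rfl fun σ _ => ?_
  congr 1

/-- For the complex induced Ginibre ensemble with rectangularity index `L ≥ 0`, the probability
that the minimum eigenvalue modulus is at least `r` equals `∏_{k=1}^N Γ(k+L, r²)/Γ(k+L)`. -/
theorem induced_ginibre_min_modulus_gap_probability (N : ℕ) (L : ℝ) (hL : 0 ≤ L)
    (r : ℝ) (hr : 0 ≤ r) :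
    (∫ z in {z : Fin N → ℂ | ∀ j, r ≤ ‖z j‖}, inducedGinibreDensity N L z) =
      ∏ k ∈ Finset.Icc 1 N, uGamma ((k : ℝ) + L) (r ^ 2) / Real.Gamma ((k : ℝ) + L) := by
  classical
  set S : Set ℂ := {w : ℂ | r ≤ ‖w‖} with hSdef
  set T : Set (Fin N → ℂ) := {z : Fin N → ℂ | ∀ j, r ≤ ‖z j‖} with hTdef
  have hSmeas : MeasurableSet S := (isClosed_le continuous_const continuous_norm).measurableSet
  have hTmeas : MeasurableSet T := by
    have hT2 : T = ⋂ j, (fun z : Fin N → ℂ => z j) ⁻¹' S := by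
      ext z; simp [hSdef, hTdef, Set.mem_iInter]
    rw [hT2]
    exact MeasurableSet.iInter fun j => hSmeas.preimage (measurable_pi_apply j)
  set C : ℝ :=
    ((N.factorial : ℝ) * π ^ N * ∏ k ∈ Finset.Icc 1 N, Real.Gamma ((k : ℝ) + L))⁻¹ with hC
  set ε : Equiv.Perm (Fin N) → ℂ := fun σ => ((Equiv.Perm.sign σ : ℤ) : ℂ) with hε
  -- pointwise expansion of the complexified density
  have expand : ∀ z : Fin N → ℂ, ((inducedGinibreDensity N L z : ℝ) : ℂ) =
      (C : ℂ) * ∑ p ∈ (Finset.univ ×ˢ Finset.univ :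
          Finset (Equiv.Perm (Fin N) × Equiv.Perm (Fin N))),
        (ε p.1 * ε p.2) * ∏ j, hfun L ((p.1 j : ℕ)) ((p.2 j : ℕ)) (z j) := by
    intro z
    have hw : ((∏ j, ‖z j‖ ^ (2 * L) : ℝ) : ℂ) * ((Real.exp (-∑ j, ‖z j‖ ^ 2) : ℝ) : ℂ) =
        ∏ j, ((‖z j‖ ^ (2 * L) * Real.exp (-‖z j‖ ^ 2) : ℝ) : ℂ) := by
      rw [← Complex.ofReal_mul, ← Complex.ofReal_prod]
      congr 1
      rw [Finset.prod_mul_distrib]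
      congr 1
      rw [← Real.exp_sum]
      congr 1
      rw [← Finset.sum_neg_distrib]
    have hconjdet : (starRingEnd ℂ) ((Matrix.vandermonde z).det) =
        ∑ τ : Equiv.Perm (Fin N), ε τ * ∏ j, ((starRingEnd ℂ) (z j)) ^ ((τ j : ℕ)) := by
      rw [vandermonde_det_expand, map_sum]
      refine Finset.sum_congr rfl fun τ _ => ?_
      rw [map_mul, map_prod]
      congr 1
      · simp [hε]
      · exact Finset.prod_congr rfl fun j _ => by rw [map_pow]
    rw [inducedGinibreDensity]
    rw [Complex.ofReal_mul, Complex.ofReal_mul, Complex.ofReal_mul, Complex.ofReal_prod]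
    simp_rw [Complex.ofReal_pow]
    rw [show (∏ p ∈ Finset.univ.filter (fun p : Fin N × Fin N => p.1 < p.2),
        ((‖z p.1 - z p.2‖ : ℂ)) ^ 2) = ∏ p ∈ Finset.univ.filter
          (fun p : Fin N × Fin N => p.1 < p.2), ((‖z p.1 - z p.2‖ ^ 2 : ℝ) : ℂ) from
      Finset.prod_congr rfl fun p _ => by push_cast; ring]
    rw [pairs_prod_eq_det, hconjdet, vandermonde_det_expand]
    rw [mul_assoc ((C:ℂ)) _ _, mul_assoc ((C:ℂ)) _ _]
    congr 1
    rw [mul_assoc, hw, Finset.sum_mul_sum]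
    rw [← Finset.sum_product']
    rw [Finset.sum_mul]
    refine Finset.sum_congr rfl fun p _ => ?_
    have : (∏ j, z j ^ ((p.1 j : ℕ))) * (∏ j, ((starRingEnd ℂ) (z j)) ^ ((p.2 j : ℕ))) *
        (∏ j, ((‖z j‖ ^ (2 * L) * Real.exp (-‖z j‖ ^ 2) : ℝ) : ℂ)) =
        ∏ j, hfun L ((p.1 j : ℕ)) ((p.2 j : ℕ)) (z j) := by
      rw [← Finset.prod_mul_distrib, ← Finset.prod_mul_distrib]
      exact Finset.prod_congr rfl fun j _ => rfl
    rw [← this, hε]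
    ring
  -- indicator product identity
  have hprod_ind : ∀ σ τ : Equiv.Perm (Fin N),
      T.indicator (fun z : Fin N → ℂ => ∏ j, hfun L ((σ j : ℕ)) ((τ j : ℕ)) (z j)) =
        fun z : Fin N → ℂ => ∏ j, S.indicator (hfun L ((σ j : ℕ)) ((τ j : ℕ))) (z j) := by
    intro σ τ
    ext z
    by_cases hz : z ∈ T
    · rw [Set.indicator_of_mem hz]
      exact Finset.prod_congr rfl fun j _ =>
        (Set.indicator_of_mem (show z j ∈ S from hz j) (hfun L _ _)).symm
    · rw [Set.indicator_of_notMem hz]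
      have : ∃ j, ¬ r ≤ ‖z j‖ := by
        by_contra hcon
        push_neg at hcon
        exact hz fun j => hcon j
      obtain ⟨j, hj⟩ := this
      symm
      exact Finset.prod_eq_zero (Finset.mem_univ j)
        (Set.indicator_of_notMem (show z j ∉ S from hj) (hfun L _ _))
  have hprodint : ∀ σ τ : Equiv.Perm (Fin N),
      IntegrableOn (fun z : Fin N → ℂ => ∏ j, hfun L ((σ j : ℕ)) ((τ j : ℕ)) (z j)) T := by
    intro σ τ
    have : IntegrableOn (fun z : Fin N → ℂ => ∏ j, hfun L ((σ j : ℕ)) ((τ j : ℕ)) (z j)) T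
        ↔ Integrable (T.indicator
          (fun z : Fin N → ℂ => ∏ j, hfun L ((σ j : ℕ)) ((τ j : ℕ)) (z j))) :=
      (integrable_indicator_iff hTmeas).symm
    rw [this, hprod_ind]
    exact MeasureTheory.Integrable.fintype_prod
      (f := fun j => S.indicator (hfun L ((σ j : ℕ)) ((τ j : ℕ))))
      fun j => (hfun_integrable L hL _ _).indicator hSmeas
  have hint_eval : ∀ σ τ : Equiv.Perm (Fin N),
      (∫ z in T, ∏ j, hfun L ((σ j : ℕ)) ((τ j : ℕ)) (z j)) =
        ∏ j, (if ((σ j : ℕ)) = ((τ j : ℕ)) then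
          ((π * uGamma (((σ j : ℕ) : ℝ) + 1 + L) (r ^ 2) : ℝ) : ℂ) else 0) := by
    intro σ τ
    rw [← integral_indicator hTmeas, hprod_ind]
    rw [MeasureTheory.volume_pi]
    beta_reduce
    rw [MeasureTheory.integral_fintype_prod_eq_prod (ι := Fin N)
      (fun j => S.indicator (hfun L ((σ j : ℕ)) ((τ j : ℕ))))]
    refine Finset.prod_congr rfl fun j _ => ?_
    rw [integral_indicator hSmeas, hfun_setIntegral L hL hr]
  -- assemble the integral
  have main : (∫ z in T, ((inducedGinibreDensity N L z : ℝ) : ℂ)) =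
      ((C * (N.factorial * (π ^ N * ∏ k ∈ Finset.Icc 1 N, uGamma ((k : ℝ) + L) (r ^ 2)))
        : ℝ) : ℂ) := by
    rw [setIntegral_congr_fun hTmeas fun z _ => expand z]
    rw [integral_const_mul]
    rw [integral_finset_sum _ fun p _ => ((hprodint p.1 p.2).const_mul _)]
    have step1 : ∑ p ∈ (Finset.univ ×ˢ Finset.univ :
        Finset (Equiv.Perm (Fin N) × Equiv.Perm (Fin N))),
        ∫ z in T, (ε p.1 * ε p.2) * ∏ j, hfun L ((p.1 j : ℕ)) ((p.2 j : ℕ)) (z j) =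
        (N.factorial : ℂ) *
          ∏ j : Fin N, ((π * uGamma (((j : ℕ) : ℝ) + 1 + L) (r ^ 2) : ℝ) : ℂ) := by
      have term_eval : ∀ p : Equiv.Perm (Fin N) × Equiv.Perm (Fin N),
          (∫ z in T, (ε p.1 * ε p.2) * ∏ j, hfun L ((p.1 j : ℕ)) ((p.2 j : ℕ)) (z j)) =
          (ε p.1 * ε p.2) * ∏ j, (if ((p.1 j : ℕ)) = ((p.2 j : ℕ)) then
            ((π * uGamma (((p.1 j : ℕ) : ℝ) + 1 + L) (r ^ 2) : ℝ) : ℂ) else 0) := by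
        intro p
        rw [integral_const_mul, hint_eval]
      simp_rw [term_eval]
      rw [Finset.sum_product]
      have inner : ∀ σ : Equiv.Perm (Fin N),
          (∑ τ : Equiv.Perm (Fin N), (ε σ * ε τ) * ∏ j,
            (if ((σ j : ℕ)) = ((τ j : ℕ)) then
              ((π * uGamma (((σ j : ℕ) : ℝ) + 1 + L) (r ^ 2) : ℝ) : ℂ) else 0)) =
          ∏ j : Fin N, ((π * uGamma (((j : ℕ) : ℝ) + 1 + L) (r ^ 2) : ℝ) : ℂ) := by
        intro σ
        rw [Finset.sum_eq_single σ]
        · have hsgn : ε σ * ε σ = 1 := by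
            rcases Int.units_eq_one_or (Equiv.Perm.sign σ) with h | h <;> simp [hε, h]
          rw [hsgn, one_mul]
          have : (∏ j : Fin N, (if ((σ j : ℕ)) = ((σ j : ℕ)) then
              ((π * uGamma (((σ j : ℕ) : ℝ) + 1 + L) (r ^ 2) : ℝ) : ℂ) else 0)) =
              ∏ j : Fin N, ((π * uGamma (((σ j : ℕ) : ℝ) + 1 + L) (r ^ 2) : ℝ) : ℂ) :=
            Finset.prod_congr rfl fun j _ => if_pos rfl
          rw [this]
          exact Equiv.prod_comp σ fun j => ((π * uGamma (((j : ℕ) : ℝ) + 1 + L) (r ^ 2) : ℝ) : ℂ)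
        · intro τ _ hτ
          have : ∃ j, σ j ≠ τ j := by
            by_contra hcon
            push_neg at hcon
            exact hτ (Equiv.ext fun j => (hcon j)).symm
          obtain ⟨j, hj⟩ := this
          rw [Finset.prod_eq_zero (Finset.mem_univ j), mul_zero]
          rw [if_neg]
          exact fun hval => hj (Fin.val_injective hval)
        · intro h
          exact absurd (Finset.mem_univ σ) h
      rw [Finset.sum_congr rfl fun σ _ => inner σ]
      rw [Finset.sum_const, Finset.card_univ, Fintype.card_perm, Fintype.card_fin,
        nsmul_eq_mul]
    rw [step1]
    rw [show (∏ j : Fin N, ((π * uGamma (((j : ℕ) : ℝ) + 1 + L) (r ^ 2) : ℝ) : ℂ)) =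
        ((∏ j : Fin N, (π * uGamma (((j : ℕ) : ℝ) + 1 + L) (r ^ 2)) : ℝ) : ℂ) from
      (Complex.ofReal_prod _ _).symm]
    have hreal : (∏ j : Fin N, (π * uGamma (((j : ℕ) : ℝ) + 1 + L) (r ^ 2))) =
        π ^ N * ∏ k ∈ Finset.Icc 1 N, uGamma ((k : ℝ) + L) (r ^ 2) := by
      rw [Finset.prod_mul_distrib, Finset.prod_const, Finset.card_univ, Fintype.card_fin]
      congr 1
      rw [Fin.prod_univ_eq_prod_range (fun i => uGamma ((i : ℝ) + 1 + L) (r ^ 2)) N,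
        show Finset.Icc 1 N = Finset.Ico 1 (N + 1) from (Finset.Ico_add_one_right_eq_Icc (a := 1) (b := N)).symm,
        Finset.prod_Ico_eq_prod_range]
      refine Finset.prod_congr (by norm_num) fun i _ => ?_
      congr 1
      push_cast
      ring
    rw [hreal]
    push_cast
    ring
  -- final arithmetic
  have hΓne : (∏ k ∈ Finset.Icc 1 N, Real.Gamma ((k : ℝ) + L)) ≠ 0 := by
    refine Finset.prod_ne_zero_iff.2 fun k hk => ?_
    have hk1 : 1 ≤ k := (Finset.mem_Icc.1 hk).1
    have : (0 : ℝ) < (k : ℝ) + L := by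
      have : (1 : ℝ) ≤ (k : ℝ) := by exact_mod_cast hk1
      linarith
    exact (Real.Gamma_pos_of_pos this).ne'
  have harith : C * (N.factorial * (π ^ N * ∏ k ∈ Finset.Icc 1 N, uGamma ((k : ℝ) + L) (r ^ 2)))
      = ∏ k ∈ Finset.Icc 1 N, uGamma ((k : ℝ) + L) (r ^ 2) / Real.Gamma ((k : ℝ) + L) := by
    rw [Finset.prod_div_distrib, hC]
    have hfac : (N.factorial : ℝ) ≠ 0 := by exact_mod_cast N.factorial_ne_zero
    have hpi : (π : ℝ) ^ N ≠ 0 := pow_ne_zero _ Real.pi_ne_zero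
    field_simp
  have := main
  rw [integral_complex_ofReal] at this
  rw [Complex.ofReal_inj] at this
  rw [this, harith]
end

section
/- For a random N×N complex induced Ginibre matrix G with rectangularity index L ≥ 0 and any radii 0 ≤ r ≤ R, the probability that all eigenvalue moduli lie in [r, R] equals ∏_{k=1}^N (γ(k+L, R²) − γ(k+L, r²))/Γ(k+L). -/
open MeasureTheory Real Filter Finset Topology Asymptotics

/-- Lower incomplete Gamma function `γ(a,x) = ∫_0^x t^(a-1) e^(-t) dt`. -/
noncomputable def lGamma (a x : ℝ) : ℝ := ∫ t in Set.Ioc 0 x, t ^ (a - 1) * Real.exp (-t)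

namespace GinibreAux


/-- closed annulus -/
def ann (r R : ℝ) : Set ℂ := {z : ℂ | ‖z‖ ∈ Set.Icc r R}

lemma measurableSet_ann (r R : ℝ) : MeasurableSet (ann r R) :=
  (isClosed_Icc.preimage continuous_norm).measurableSet

lemma isCompact_ann (r R : ℝ) : IsCompact (ann r R) := by
  refine Metric.isCompact_of_isClosed_isBounded (isClosed_Icc.preimage continuous_norm) ?_
  refine (Metric.isBounded_iff_subset_closedBall 0).2 ⟨R, fun z hz => ?_⟩
  simpa [Metric.mem_closedBall] using hz.2

lemma cont_norm_rpow (c : ℝ) (hc : 0 ≤ c) : Continuous fun z : ℂ => ‖z‖ ^ c := by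
  rw [continuous_iff_continuousAt]
  intro z
  exact (Real.continuousAt_rpow_const _ _ (Or.inr hc)).comp continuous_norm.continuousAt

lemma cont_rpow (c : ℝ) (hc : 0 ≤ c) : Continuous fun t : ℝ => t ^ c := by
  rw [continuous_iff_continuousAt]
  intro t
  exact Real.continuousAt_rpow_const _ _ (Or.inr hc)

/-- radial weight -/
noncomputable def w (L : ℝ) (z : ℂ) : ℝ := ‖z‖ ^ (2 * L) * Real.exp (-‖z‖ ^ 2)

lemma cont_w (L : ℝ) (hL : 0 ≤ L) : Continuous (w L) := by
  exact (cont_norm_rpow _ (by linarith)).mul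
    (((continuous_norm.pow 2).neg).rexp)

/-- basic one-variable integrand -/
noncomputable def φ (L r R : ℝ) (a b : ℕ) : ℂ → ℂ :=
  (ann r R).indicator fun z => z ^ a * (starRingEnd ℂ) z ^ b * ((w L z : ℝ) : ℂ)

lemma integrable_φ (L r R : ℝ) (hL : 0 ≤ L) (a b : ℕ) : Integrable (φ L r R a b) := by
  rw [φ, integrable_indicator_iff (measurableSet_ann r R)]
  refine ContinuousOn.integrableOn_compact (isCompact_ann r R) ?_
  exact (((continuous_pow a).mul ((Complex.continuous_conj.pow b))).mul
    (Complex.continuous_ofReal.comp (cont_w L hL))).continuousOn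

noncomputable def J (L r R : ℝ) (a b : ℕ) : ℂ := ∫ z : ℂ, φ L r R a b z

lemma J_eq_zero (L r R : ℝ) {a b : ℕ} (hab : a ≠ b) : J L r R a b = 0 := by
  set d : ℤ := (a : ℤ) - b with hd
  have hd0 : (d : ℝ) ≠ 0 := by
    simp only [hd]
    have h1 : d ≠ 0 := sub_ne_zero.2 (fun h => hab (by exact_mod_cast h))
    exact Int.cast_ne_zero.mpr h1
  set θ : ℝ := Real.pi / d with hθ
  set c : Circle := Circle.exp θ with hc
  have hrot : MeasurePreserving (rotation c) volume volume :=
    (rotation c).measurePreserving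
  have hcomp : ∫ z : ℂ, φ L r R a b (rotation c z) = J L r R a b :=
    hrot.integral_comp ((rotation c).toHomeomorph.measurableEmbedding) _
  have hnorm : ∀ z : ℂ, ‖(c : ℂ) * z‖ = ‖z‖ := by
    intro z; rw [norm_mul, Circle.norm_coe, one_mul]
  have hkey : ∀ z : ℂ, φ L r R a b (rotation c z) =
      ((c : ℂ) ^ a * (starRingEnd ℂ) ((c : ℂ)) ^ b) * φ L r R a b z := by
    intro z
    simp only [φ, rotation_apply]
    by_cases hz : z ∈ ann r R
    · have hz' : (c : ℂ) * z ∈ ann r R := by show ‖(c : ℂ) * z‖ ∈ Set.Icc r R; rw [hnorm z]; exact hz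
      rw [Set.indicator_of_mem hz', Set.indicator_of_mem hz]
      simp only [w, hnorm z, mul_pow, map_mul]
      ring
    · have hz' : (c : ℂ) * z ∉ ann r R := by show ‖(c : ℂ) * z‖ ∉ Set.Icc r R; rw [hnorm z]; exact hz
      rw [Set.indicator_of_notMem hz', Set.indicator_of_notMem hz, mul_zero]
  have hval : (c : ℂ) ^ a * (starRingEnd ℂ) ((c : ℂ)) ^ b = -1 := by
    simp only [hc, Circle.coe_exp]
    rw [← Complex.exp_conj]
    simp only [map_mul, Complex.conj_ofReal, Complex.conj_I, mul_neg]
    rw [← Complex.exp_nat_mul, ← Complex.exp_nat_mul, ← Complex.exp_add]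
    have : (a : ℂ) * (θ * Complex.I) + (b : ℂ) * -(θ * Complex.I)
        = Real.pi * Complex.I := by
      have hdC : ((d : ℝ) : ℂ) ≠ 0 := by exact_mod_cast hd0
      have : ((d : ℝ) : ℂ) * (θ : ℂ) = (Real.pi : ℂ) := by
        rw [hθ]
        push_cast
        have hdC' : ((d : ℤ) : ℂ) ≠ 0 := by exact_mod_cast hd0
        field_simp
      push_cast [hd] at this ⊢
      linear_combination Complex.I * this
    rw [this, Complex.exp_pi_mul_I]
  have : -J L r R a b = J L r R a b := by
    calc -J L r R a b = ∫ z : ℂ, ((c:ℂ)^a * (starRingEnd ℂ) ((c:ℂ))^b) * φ L r R a b z := by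
          rw [MeasureTheory.integral_const_mul, hval, J, neg_one_mul]
      _ = ∫ z : ℂ, φ L r R a b (rotation c z) := by
          congr 1; ext z; rw [hkey z]
      _ = J L r R a b := hcomp
  have h2 : J L r R a b + J L r R a b = 0 := by linear_combination -this
  have := add_self_eq_zero.mp h2
  exact this


lemma lGamma_diff (c : ℝ) (hc : 1 ≤ c) {r R : ℝ} (hr : 0 ≤ r) (hrR : r ≤ R) :
    lGamma c (R ^ 2) - lGamma c (r ^ 2) =
      ∫ t in Set.Ioc (r ^ 2) (R ^ 2), t ^ (c - 1) * Real.exp (-t) := by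
  have h2 : r ^ 2 ≤ R ^ 2 := by nlinarith
  have hint : ∀ x y : ℝ, IntegrableOn (fun t => t ^ (c - 1) * Real.exp (-t)) (Set.Ioc x y) := by
    intro x y
    exact (((cont_rpow _ (by linarith)).mul (continuous_neg.rexp))).integrableOn_Ioc
  have hunion : Set.Ioc (0:ℝ) (r ^ 2) ∪ Set.Ioc (r ^ 2) (R ^ 2) = Set.Ioc 0 (R ^ 2) :=
    Set.Ioc_union_Ioc_eq_Ioc (by positivity) h2
  have := setIntegral_union (Set.Ioc_disjoint_Ioc_of_le le_rfl) measurableSet_Ioc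
    (hint 0 (r ^ 2)) (hint (r ^ 2) (R ^ 2))
    (f := fun t => t ^ (c - 1) * Real.exp (-t)) (μ := volume)
  rw [lGamma, lGamma, ← hunion, this]
  ring

lemma J_diag (L r R : ℝ) (hL : 0 ≤ L) (hr : 0 ≤ r) (hrR : r ≤ R) (a : ℕ) :
    J L r R a a = ((Real.pi * (lGamma ((a : ℝ) + 1 + L) (R ^ 2)
      - lGamma ((a : ℝ) + 1 + L) (r ^ 2)) : ℝ) : ℂ) := by
  classical
  set g : ℝ → ℝ := fun s => s ^ (2 * a) * (s ^ (2 * L) * Real.exp (-s ^ 2)) with hg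
  set h : ℝ → ℝ := (Set.Icc r R).indicator g with hh
  have hφ : ∀ z : ℂ, φ L r R a a z = ((h ‖z‖ : ℝ) : ℂ) := by
    intro z
    simp only [φ, hh, ann, Set.indicator, Set.mem_setOf_eq, Set.mem_Icc]
    by_cases hz : ‖z‖ ∈ Set.Icc r R
    · simp only [Set.mem_Icc] at hz
      rw [if_pos hz, if_pos hz]
      have : z ^ a * (starRingEnd ℂ) z ^ a = ((‖z‖ ^ (2 * a) : ℝ) : ℂ) := by
        rw [← mul_pow, Complex.mul_conj, Complex.normSq_eq_norm_sq]
        push_cast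
        rw [← pow_mul, mul_comm 2 a]
      rw [this, hg, w]
      push_cast
      ring
    · simp only [Set.mem_Icc] at hz
      rw [if_neg hz, if_neg hz, Complex.ofReal_zero]
  have step1 : J L r R a a = ((∫ z : ℂ, h ‖z‖ : ℝ) : ℂ) := by
    rw [J]
    simp_rw [hφ]
    exact integral_ofReal
  rw [step1]
  norm_cast
  -- radial integration
  rw [MeasureTheory.integral_fun_norm_addHaar volume h, Complex.finrank_real_complex]
  have hball : volume.real (Metric.ball (0:ℂ) 1) = Real.pi := by
    rw [measureReal_def, Complex.volume_ball]
    simp [ENNReal.toReal_mul]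
  rw [hball]
  have hind : ∀ y : ℝ, y ^ (2 - 1) • h y
      = (Set.Icc r R).indicator (fun y => y * g y) y := by
    intro y
    simp only [pow_one, smul_eq_mul, hh, Set.indicator]
    by_cases hy : y ∈ Set.Icc r R <;> simp [hy]
  rw [show (∫ y in Set.Ioi (0:ℝ), y ^ (2-1) • h y)
      = ∫ y in Set.Ioi (0:ℝ), (Set.Icc r R).indicator (fun y => y * g y) y by
    exact setIntegral_congr_fun measurableSet_Ioi (fun y _ => hind y)]
  rw [MeasureTheory.integral_indicator measurableSet_Icc,
    Measure.restrict_restrict measurableSet_Icc]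
  have hae : (Set.Icc r R ∩ Set.Ioi 0 : Set ℝ) =ᵐ[volume] (Set.Ioc r R : Set ℝ) := by
    apply MeasureTheory.ae_eq_set.2
    constructor
    · refine measure_mono_null (fun y hy => ?_) (measure_singleton r)
      simp only [Set.mem_diff, Set.mem_inter_iff, Set.mem_Icc, Set.mem_Ioi,
        Set.mem_Ioc, not_and, not_le, Set.mem_singleton_iff] at hy ⊢
      rcases hy with ⟨⟨⟨h1, h2⟩, h3⟩, h4⟩
      by_contra hne
      have hlt : r < y := lt_of_le_of_ne h1 (Ne.symm hne)
      exact absurd h2 (not_le.2 (h4 hlt))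
    · refine measure_mono_null (fun y hy => ?_) measure_empty
      simp only [Set.mem_diff, Set.mem_Ioc, Set.mem_inter_iff, Set.mem_Icc, Set.mem_Ioi,
        not_and] at hy
      rcases hy with ⟨⟨h1, h2⟩, h3⟩
      exact absurd (lt_of_le_of_lt hr h1) (h3 ⟨le_of_lt h1, h2⟩)
  rw [Measure.restrict_congr_set hae]
  have h2 : r ^ 2 ≤ R ^ 2 := by nlinarith
  have hc1 : (1:ℝ) ≤ ((a + 1 : ℕ) : ℝ) + L := by
    push_cast; linarith [Nat.cast_nonneg (α := ℝ) a]
  rw [lGamma_diff _ hc1 hr hrR]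
  have hexp : ((a + 1 : ℕ) : ℝ) + L - 1 = (a : ℝ) + L := by push_cast; ring
  rw [hexp]
  -- substitution y ↦ y^2
  set G : ℝ → ℝ := fun t => (1/2 : ℝ) • (t ^ ((a : ℝ) + L) * Real.exp (-t)) with hG
  have hsub : (∫ x in r..R, (2 * x) • (G ∘ (fun x => x ^ 2)) x)
      = ∫ u in (r ^ 2)..(R ^ 2), G u := by
    apply intervalIntegral.integral_comp_smul_deriv'' (f := fun x : ℝ => x ^ 2)
      (f' := fun x : ℝ => 2 * x)
    · exact (continuous_pow 2).continuousOn
    · intro x _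
      have := (hasDerivAt_pow 2 x).hasDerivWithinAt (s := Set.Ioi x)
      simpa using this
    · exact (continuous_const.mul continuous_id).continuousOn
    · refine Continuous.continuousOn ?_
      show Continuous (fun t : ℝ => (1/2 : ℝ) • (t ^ ((a : ℝ) + L) * Real.exp (-t)))
      exact ((cont_rpow ((a : ℝ) + L) (by linarith [Nat.cast_nonneg (α := ℝ) a])).mul
        continuous_neg.rexp).const_smul (1/2 : ℝ)
  have heq : Set.EqOn (fun x : ℝ => (2 * x) • (G ∘ (fun x => x ^ 2)) x)
      (fun x : ℝ => x * g x) (Set.uIcc r R) := by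
    intro y hy
    have hy0 : 0 ≤ y := by
      rcases Set.mem_uIcc.1 hy with h | h
      · linarith [h.1]
      · linarith [h.1, hrR]
    simp only [Function.comp, hG, smul_eq_mul, hg]
    rcases eq_or_lt_of_le hy0 with h0 | h0
    · rw [← h0]; ring
    · have e1 : ((y ^ 2 : ℝ)) ^ ((a : ℝ) + L) = y ^ (2 * a) * y ^ (2 * L) := by
        rw [← Real.rpow_natCast y 2, ← Real.rpow_mul hy0, mul_add, Real.rpow_add h0,
          ← Real.rpow_natCast y (2 * a)]
        push_cast
        ring_nf
      rw [e1]
      ring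
  rw [intervalIntegral.integral_congr heq] at hsub
  rw [intervalIntegral.integral_of_le hrR] at hsub
  rw [hsub, intervalIntegral.integral_of_le h2]
  rw [MeasureTheory.integral_smul]
  simp only [smul_eq_mul, nsmul_eq_mul]
  ring


lemma prod_pairs {N : ℕ} (f : Fin N → Fin N → ℝ) :
    ∏ p ∈ Finset.univ.filter (fun p : Fin N × Fin N => p.1 < p.2), f p.1 p.2
      = ∏ i, ∏ j ∈ Finset.Ioi i, f i j := by
  rw [Finset.prod_filter, ← Finset.univ_product_univ, Finset.prod_product]
  refine Finset.prod_congr rfl fun i _ => ?_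
  rw [← Finset.filter_lt_eq_Ioi, Finset.prod_filter]

lemma det_vandermonde_expand {N : ℕ} (z : Fin N → ℂ) :
    (Matrix.vandermonde z).det
      = ∑ σ : Equiv.Perm (Fin N), ((Equiv.Perm.sign σ : ℤ) : ℂ) * ∏ i, z i ^ ((σ i : Fin N) : ℕ) := by
  rw [Matrix.det_apply]
  rw [← Equiv.sum_comp (Equiv.inv (Equiv.Perm (Fin N)))
    (fun σ => Equiv.Perm.sign σ • ∏ i, Matrix.vandermonde z (σ i) i)]
  refine Finset.sum_congr rfl fun σ _ => ?_
  simp only [Equiv.inv_apply]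
  rw [Equiv.Perm.sign_inv]
  have : ∏ i, Matrix.vandermonde z (σ⁻¹ i) i = ∏ i, z i ^ ((σ i : Fin N) : ℕ) := by
    rw [← Equiv.prod_comp σ (fun i => Matrix.vandermonde z (σ⁻¹ i) i)]
    simp [Matrix.vandermonde_apply]
  rw [this, Units.smul_def, zsmul_eq_mul]

lemma conj_det_vandermonde_expand {N : ℕ} (z : Fin N → ℂ) :
    (starRingEnd ℂ) (Matrix.vandermonde z).det
      = ∑ σ : Equiv.Perm (Fin N), ((Equiv.Perm.sign σ : ℤ) : ℂ)
          * ∏ i, ((starRingEnd ℂ) (z i)) ^ ((σ i : Fin N) : ℕ) := by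
  rw [det_vandermonde_expand, map_sum]
  refine Finset.sum_congr rfl fun σ _ => ?_
  rw [map_mul, map_prod]
  simp [map_pow]


theorem main (N : ℕ) (L : ℝ) (hL : 0 ≤ L)
    (r R : ℝ) (hr : 0 ≤ r) (hrR : r ≤ R) :
    (∫ z in {z : Fin N → ℂ | ∀ j, r ≤ ‖z j‖ ∧ ‖z j‖ ≤ R}, inducedGinibreDensity N L z) =
      ∏ k ∈ Finset.Icc 1 N,
        (lGamma ((k : ℝ) + L) (R ^ 2) - lGamma ((k : ℝ) + L) (r ^ 2)) /
          Real.Gamma ((k : ℝ) + L) := by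
  classical
  set S : Set (Fin N → ℂ) := {z : Fin N → ℂ | ∀ j, r ≤ ‖z j‖ ∧ ‖z j‖ ≤ R} with hSdef
  have hS : S = {z : Fin N → ℂ | ∀ j, z j ∈ ann r R} := by
    ext z; simp [hSdef, ann, Set.mem_Icc]
  have hSmeas : MeasurableSet S := by
    have : S = Set.univ.pi (fun _ : Fin N => ann r R) := by
      rw [hS]; ext z; simp [Set.mem_univ_pi]
    rw [this]
    exact MeasurableSet.univ_pi (fun _ => measurableSet_ann r R)
  set c : ℝ := (N.factorial : ℝ) * Real.pi ^ N * ∏ k ∈ Finset.Icc 1 N, Real.Gamma ((k : ℝ) + L)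
    with hc
  set P : (Fin N → ℂ) → ℝ := fun z =>
    (∏ p ∈ Finset.univ.filter (fun p : Fin N × Fin N => p.1 < p.2), ‖z p.1 - z p.2‖ ^ 2) *
    ((∏ j, ‖z j‖ ^ (2 * L)) * Real.exp (-∑ j, ‖z j‖ ^ 2)) with hP
  have step1 : (∫ z in S, inducedGinibreDensity N L z) = c⁻¹ * ∫ z in S, P z := by
    rw [← MeasureTheory.integral_const_mul]
    refine setIntegral_congr_fun hSmeas (fun z _ => ?_)
    simp only [inducedGinibreDensity, hP, ← hc]
    ring
  rw [step1]
  -- the complexified integrand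
  set Pc : (Fin N → ℂ) → ℂ := fun z =>
    (Matrix.vandermonde z).det * (starRingEnd ℂ) (Matrix.vandermonde z).det
      * ∏ j, ((w L (z j) : ℝ) : ℂ) with hPc
  have hPPc : ∀ z : Fin N → ℂ, ((P z : ℝ) : ℂ) = Pc z := by
    intro z
    have h1 : (∏ p ∈ Finset.univ.filter (fun p : Fin N × Fin N => p.1 < p.2),
        ‖z p.1 - z p.2‖ ^ 2) = Complex.normSq ((Matrix.vandermonde z).det) := by
      rw [Matrix.det_vandermonde, map_prod]
      rw [prod_pairs (fun i j => ‖z i - z j‖ ^ 2)]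
      refine Finset.prod_congr rfl fun i _ => ?_
      rw [map_prod]
      refine Finset.prod_congr rfl fun j _ => ?_
      rw [Complex.normSq_eq_norm_sq, norm_sub_rev]
    have h2 : (∏ j, ‖z j‖ ^ (2 * L)) * Real.exp (-∑ j, ‖z j‖ ^ 2) = ∏ j, w L (z j) := by
      simp only [w]
      rw [Finset.prod_mul_distrib, ← Real.exp_sum]
      congr 1
      rw [← Finset.sum_neg_distrib]
    simp only [hP, hPc]
    rw [h2, h1]
    push_cast
    rw [Complex.mul_conj]
  have key : ∫ z in S, Pc z
      = ((N.factorial : ℂ)) * ∏ k : Fin N, ((Real.pi * (lGamma ((k : ℕ) + 1 + L) (R ^ 2)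
          - lGamma ((k : ℕ) + 1 + L) (r ^ 2)) : ℝ) : ℂ) := by
    set f : (Equiv.Perm (Fin N) × Equiv.Perm (Fin N)) → Fin N → ℂ → ℂ :=
      fun p i x => x ^ ((p.1 i : Fin N) : ℕ) * ((starRingEnd ℂ) x) ^ ((p.2 i : Fin N) : ℕ)
        * ((w L x : ℝ) : ℂ) with hf
    set C : (Equiv.Perm (Fin N) × Equiv.Perm (Fin N)) → ℂ :=
      fun p => ((Equiv.Perm.sign p.1 : ℤ) : ℂ) * ((Equiv.Perm.sign p.2 : ℤ) : ℂ) with hC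
    have hexpand : ∀ z : Fin N → ℂ, Pc z
        = ∑ p : Equiv.Perm (Fin N) × Equiv.Perm (Fin N), C p * ∏ i, f p i (z i) := by
      intro z
      simp only [hPc]
      rw [conj_det_vandermonde_expand, det_vandermonde_expand, Finset.sum_mul_sum,
        Finset.sum_mul]
      rw [Fintype.sum_prod_type]
      refine Finset.sum_congr rfl fun σ _ => ?_
      rw [Finset.sum_mul]
      refine Finset.sum_congr rfl fun τ _ => ?_
      simp only [hf, hC]
      rw [Finset.prod_mul_distrib, Finset.prod_mul_distrib]
      ring
    have hind : ∀ z : Fin N → ℂ, S.indicator Pc z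
        = ∑ p : Equiv.Perm (Fin N) × Equiv.Perm (Fin N),
            C p * ∏ i, φ L r R (p.1 i) (p.2 i) (z i) := by
      intro z
      by_cases hz : z ∈ S
      · rw [Set.indicator_of_mem hz, hexpand]
        refine Finset.sum_congr rfl fun p _ => ?_
        congr 1
        refine Finset.prod_congr rfl fun i _ => ?_
        rw [φ, Set.indicator_of_mem ((hS ▸ hz) i)]
      · rw [Set.indicator_of_notMem hz]
        have : ∃ j, z j ∉ ann r R := by
          by_contra hcon
          push_neg at hcon
          exact hz (hS ▸ hcon)
        obtain ⟨j, hj⟩ := this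
        symm
        refine Finset.sum_eq_zero fun p _ => ?_
        rw [Finset.prod_eq_zero (Finset.mem_univ j) (by rw [φ, Set.indicator_of_notMem hj]),
          mul_zero]
    rw [← MeasureTheory.integral_indicator hSmeas]
    calc ∫ z : Fin N → ℂ, S.indicator Pc z
        = ∫ z : Fin N → ℂ, ∑ p : Equiv.Perm (Fin N) × Equiv.Perm (Fin N),
            C p * ∏ i, φ L r R (p.1 i) (p.2 i) (z i) := by
          refine integral_congr_ae (Eventually.of_forall fun z => ?_)
          exact hind z
      _ = ∑ p : Equiv.Perm (Fin N) × Equiv.Perm (Fin N),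
            ∫ z : Fin N → ℂ, C p * ∏ i, φ L r R (p.1 i) (p.2 i) (z i) := by
          refine integral_finset_sum _ fun p _ => ?_
          exact (Integrable.fintype_prod (fun i => integrable_φ L r R hL _ _)).const_mul _
      _ = ∑ p : Equiv.Perm (Fin N) × Equiv.Perm (Fin N),
            C p * ∏ i, J L r R (p.1 i) (p.2 i) := by
          refine Finset.sum_congr rfl fun p _ => ?_
          rw [MeasureTheory.integral_const_mul,
            MeasureTheory.integral_fintype_prod_volume_eq_prod
              (fun i => φ L r R (p.1 i) (p.2 i))]
          rfl
      _ = ∑ σ : Equiv.Perm (Fin N), ∑ τ : Equiv.Perm (Fin N),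
            C (σ, τ) * ∏ i, J L r R (σ i) (τ i) := by
          rw [Fintype.sum_prod_type]
      _ = ∑ σ : Equiv.Perm (Fin N), ∏ i : Fin N, J L r R i i := by
          refine Finset.sum_congr rfl fun σ _ => ?_
          rw [Finset.sum_eq_single σ]
          · have hsq : C (σ, σ) = 1 := by
              simp only [hC]
              rcases Int.units_eq_one_or (Equiv.Perm.sign σ) with h | h <;> rw [h] <;> norm_num
            rw [hsq, one_mul, ← Equiv.prod_comp σ (fun k : Fin N => J L r R k k)]
          · intro τ _ hτ
            have : ∃ i, σ i ≠ τ i := by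
              by_contra hcon
              push_neg at hcon
              exact hτ (Equiv.ext fun i => (hcon i).symm)
            obtain ⟨i, hi⟩ := this
            have : J L r R (σ i) (τ i) = 0 :=
              J_eq_zero L r R (fun h => hi (Fin.val_injective h))
            rw [Finset.prod_eq_zero (Finset.mem_univ i) this, mul_zero]
          · intro h
            exact absurd (Finset.mem_univ σ) h
      _ = ((N.factorial : ℂ)) * ∏ i : Fin N, J L r R i i := by
          rw [Finset.sum_const, Finset.card_univ, Fintype.card_perm, Fintype.card_fin,
            nsmul_eq_mul]
    congr 1
    refine Finset.prod_congr rfl fun k _ => ?_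
    rw [J_diag L r R hL hr hrR k]
  -- go back to the reals
  have hreal : (∫ z in S, P z)
      = (N.factorial : ℝ) * ∏ k : Fin N, (Real.pi * (lGamma ((k : ℕ) + 1 + L) (R ^ 2)
          - lGamma ((k : ℕ) + 1 + L) (r ^ 2))) := by
    have h1 : ∫ z in S, Pc z = (((∫ z in S, P z) : ℝ) : ℂ) := by
      rw [show (fun z => Pc z) = (fun z => ((P z : ℝ) : ℂ)) from funext fun z => (hPPc z).symm]
      exact integral_ofReal
    rw [key] at h1
    have h2 : (((∫ z in S, P z) : ℝ) : ℂ)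
        = (((N.factorial : ℝ) * ∏ k : Fin N, (Real.pi * (lGamma ((k : ℕ) + 1 + L) (R ^ 2)
          - lGamma ((k : ℕ) + 1 + L) (r ^ 2))) : ℝ) : ℂ) := by
      rw [← h1]
      push_cast
      rfl
    exact_mod_cast h2
  rw [hreal]
  -- final bookkeeping
  have hprodsplit : ∏ k : Fin N, (Real.pi * (lGamma ((k : ℕ) + 1 + L) (R ^ 2)
      - lGamma ((k : ℕ) + 1 + L) (r ^ 2)))
      = Real.pi ^ N * ∏ k ∈ Finset.Icc 1 N,
          (lGamma ((k : ℝ) + L) (R ^ 2) - lGamma ((k : ℝ) + L) (r ^ 2)) := by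
    rw [Finset.prod_mul_distrib, Finset.prod_const, Finset.card_univ, Fintype.card_fin]
    congr 1
    rw [Fin.prod_univ_eq_prod_range
      (fun m : ℕ => lGamma ((m : ℝ) + 1 + L) (R ^ 2) - lGamma ((m : ℝ) + 1 + L) (r ^ 2)) N]
    rw [← Finset.Ico_add_one_right_eq_Icc, Finset.prod_Ico_eq_prod_range]
    try simp only [Nat.add_sub_cancel]
    refine Finset.prod_congr rfl fun m _ => ?_
    rw [show ((1 + m : ℕ) : ℝ) = (m : ℝ) + 1 by push_cast; ring]
  rw [hprodsplit]
  have hGpos : ∀ k ∈ Finset.Icc 1 N, (0 : ℝ) < Real.Gamma ((k : ℝ) + L) := by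
    intro k hk
    have h1 : 1 ≤ k := (Finset.mem_Icc.1 hk).1
    refine Real.Gamma_pos_of_pos ?_
    have : (1 : ℝ) ≤ (k : ℝ) := by exact_mod_cast h1
    linarith
  have hGne : (∏ k ∈ Finset.Icc 1 N, Real.Gamma ((k : ℝ) + L)) ≠ 0 :=
    Finset.prod_ne_zero_iff.2 fun k hk => (hGpos k hk).ne'
  rw [Finset.prod_div_distrib]
  rw [hc]
  have hfacne : ((N.factorial : ℝ)) ≠ 0 := by positivity
  have hpine : (Real.pi : ℝ) ^ N ≠ 0 := by positivity
  field_simp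

end GinibreAux

/-- For the complex induced Ginibre ensemble with rectangularity index `L ≥ 0` and radii
`0 ≤ r ≤ R`, the probability that all eigenvalue moduli lie in `[r, R]` equals
`∏_{k=1}^N (γ(k+L, R²) - γ(k+L, r²))/Γ(k+L)`. -/
theorem induced_ginibre_annulus_probability (N : ℕ) (L : ℝ) (hL : 0 ≤ L)
    (r R : ℝ) (hr : 0 ≤ r) (hrR : r ≤ R) :
    (∫ z in {z : Fin N → ℂ | ∀ j, r ≤ ‖z j‖ ∧ ‖z j‖ ≤ R}, inducedGinibreDensity N L z) =
      ∏ k ∈ Finset.Icc 1 N,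
        (lGamma ((k : ℝ) + L) (R ^ 2) - lGamma ((k : ℝ) + L) (r ^ 2)) /
          Real.Gamma ((k : ℝ) + L) :=
  GinibreAux.main N L hL r R hr hrR
end

section
/- For a random N×N complex induced Ginibre matrix G with rectangularity index L ≥ 0, the joint probability P(r_min^{(N)}(G) ≥ r and r_max^{(N)}(G) ≤ R) factorizes as P(r_max^{(N)}(G) ≤ R) · ∏_{k=1}^N [1 − γ(k+L, r²)/γ(k+L, R²)], for 0 < r ≤ R. -/
open MeasureTheory Real Filter Finset Topology Asymptotics

namespace InducedGinibreAux

noncomputable def gw (L : ℝ) (w : ℂ) : ℝ := ‖w‖ ^ (2*L) * Real.exp (-‖w‖^2)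

noncomputable def h (L : ℝ) (m n : ℕ) (w : ℂ) : ℂ :=
  w ^ m * (starRingEnd ℂ w) ^ n * ((gw L w : ℝ) : ℂ)

def ann (a b : ℝ) : Set ℂ := {w | a ≤ ‖w‖ ∧ ‖w‖ ≤ b}

noncomputable def J (L a b : ℝ) (m n : ℕ) : ℂ := ∫ w in ann a b, h L m n w

lemma isClosed_ann (a b : ℝ) : IsClosed (ann a b) :=
  (isClosed_le continuous_const continuous_norm).inter
    (isClosed_le continuous_norm continuous_const)

lemma measurableSet_ann (a b : ℝ) : MeasurableSet (ann a b) :=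
  (isClosed_ann a b).measurableSet

lemma isCompact_ann (a b : ℝ) : IsCompact (ann a b) := by
  have : ann a b ⊆ Metric.closedBall 0 b := fun w hw => by
    simpa [Metric.mem_closedBall, dist_eq_norm] using hw.2
  exact (isCompact_closedBall 0 b).of_isClosed_subset (isClosed_ann a b) this

lemma continuous_gw {L : ℝ} (hL : 0 ≤ L) : Continuous (gw L) := by
  apply Continuous.mul
  · exact (Real.continuous_rpow_const (by linarith)).comp continuous_norm
  · exact Real.continuous_exp.comp (continuous_neg.comp ((continuous_norm.pow 2)))

lemma continuous_h {L : ℝ} (hL : 0 ≤ L) (m n : ℕ) : Continuous (h L m n) := by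
  apply Continuous.mul
  · exact (continuous_pow m).mul ((Complex.continuous_conj.pow n))
  · exact Complex.continuous_ofReal.comp (continuous_gw hL)

lemma J_polar (L a b : ℝ) (ha : 0 ≤ a) (m n : ℕ) :
    J L a b m n =
      (∫ ρ in Set.Ioc a b, ((ρ * (ρ ^ m * ρ ^ n * (ρ ^ (2*L) * Real.exp (-ρ^2))) : ℝ) : ℂ)) *
        ∫ θ in Set.Ioo (-π) π, Complex.exp (((m : ℂ) - n) * θ * Complex.I) := by
  rw [J, ← integral_indicator (measurableSet_ann a b), ← Complex.integral_comp_polarCoord_symm]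
  have htgt : polarCoord.target = Set.Ioi (0:ℝ) ×ˢ Set.Ioo (-π) π := polarCoord_target
  rw [htgt]
  have key : ∀ p ∈ Set.Ioi (0:ℝ) ×ˢ Set.Ioo (-π) π,
      p.1 • (ann a b).indicator (h L m n) (Complex.polarCoord.symm p) =
      (Set.indicator (Set.Icc a b)
        (fun ρ => ((ρ * (ρ ^ m * ρ ^ n * (ρ ^ (2*L) * Real.exp (-ρ^2))) : ℝ) : ℂ)) p.1) *
        Complex.exp (((m : ℂ) - n) * p.2 * Complex.I) := by
    rintro ⟨ρ, θ⟩ ⟨hρ, hθ⟩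
    simp only [Set.mem_Ioi] at hρ
    have hw : Complex.polarCoord.symm (ρ, θ) = (ρ:ℂ) * Complex.exp ((θ:ℂ) * Complex.I) := by
      rw [Complex.polarCoord_symm_apply, Complex.exp_mul_I]
      push_cast
      ring
    have hnorm : ‖Complex.polarCoord.symm (ρ, θ)‖ = ρ := by
      rw [Complex.norm_polarCoord_symm, abs_of_pos hρ]
    have hmemiff : Complex.polarCoord.symm (ρ, θ) ∈ ann a b ↔ ρ ∈ Set.Icc a b := by
      simp [ann, hnorm, Set.mem_Icc, abs_of_pos hρ]
    by_cases hmem : ρ ∈ Set.Icc a b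
    · rw [Set.indicator_of_mem (hmemiff.mpr hmem), Set.indicator_of_mem hmem]
      have hconj : (starRingEnd ℂ) ((ρ:ℂ) * Complex.exp ((θ:ℂ) * Complex.I)) =
          (ρ:ℂ) * Complex.exp (-((θ:ℂ) * Complex.I)) := by
        rw [map_mul, Complex.conj_ofReal, ← Complex.exp_conj]
        congr 1
        simp [map_mul, Complex.conj_ofReal, Complex.conj_I]
      have hgw : gw L (Complex.polarCoord.symm (ρ, θ)) = ρ ^ (2*L) * Real.exp (-ρ^2) := by
        rw [gw, hnorm]
      rw [h, hgw, hw, hconj]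
      simp only [smul_eq_mul, mul_pow, ← Complex.exp_nat_mul]
      rw [show ((m:ℂ) * ((θ:ℂ) * Complex.I)) = ((m:ℂ) * θ * Complex.I) by ring,
        show ((n:ℂ) * -((θ:ℂ) * Complex.I)) = (-(n:ℂ) * θ * Complex.I) by ring]
      push_cast
      have hexp : Complex.exp ((m:ℂ)*θ*Complex.I) * Complex.exp (-(n:ℂ)*θ*Complex.I) =
          Complex.exp (((m:ℂ)-n)*θ*Complex.I) := by
        rw [← Complex.exp_add]; ring_nf
      rw [← hexp, Complex.real_smul]
      ring
    · rw [Set.indicator_of_notMem (fun hc => hmem (hmemiff.mp hc)),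
        Set.indicator_of_notMem hmem]
      simp
  rw [setIntegral_congr_fun (measurableSet_Ioi.prod measurableSet_Ioo) key]
  rw [Measure.volume_eq_prod ℝ ℝ]
  rw [MeasureTheory.setIntegral_prod_mul
    (f := fun ρ : ℝ => (Set.Icc a b).indicator
      (fun ρ => ((ρ * (ρ ^ m * ρ ^ n * (ρ ^ (2*L) * Real.exp (-ρ^2))) : ℝ) : ℂ)) ρ)
    (g := fun θ : ℝ => Complex.exp (((m : ℂ) - n) * θ * Complex.I))]
  congr 1
  · rw [setIntegral_indicator measurableSet_Icc]
    apply setIntegral_congr_set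
    have h1 : (Set.Ioi 0 ∩ Set.Icc a b : Set ℝ) \ Set.Ioc a b ⊆ {a} := by
      rintro x ⟨⟨hx0, hxa, hxb⟩, hnot⟩
      simp only [Set.mem_Ioc, not_and, not_le] at hnot
      by_contra hne
      exact absurd (hnot (lt_of_le_of_ne hxa (Ne.symm (by simpa using hne)))) (not_lt.mpr hxb)
    have h2 : Set.Ioc a b \ (Set.Ioi 0 ∩ Set.Icc a b : Set ℝ) ⊆ ∅ := by
      rintro x ⟨⟨hxa, hxb⟩, hnot⟩
      exact hnot ⟨lt_of_le_of_lt ha hxa, le_of_lt hxa, hxb⟩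
    refine MeasureTheory.ae_eq_set.mpr ⟨measure_mono_null h1 ?_, measure_mono_null h2 ?_⟩
    · exact Real.volume_singleton
    · exact measure_empty

lemma ang_zero (m n : ℕ) (hmn : m ≠ n) :
    ∫ θ in Set.Ioo (-π) π, Complex.exp (((m : ℂ) - n) * θ * Complex.I) = 0 := by
  have hc : ((m : ℂ) - n) * Complex.I ≠ 0 :=
    mul_ne_zero (sub_ne_zero.mpr (by exact_mod_cast hmn)) Complex.I_ne_zero
  have h1 : ∀ θ : ℝ, ((m : ℂ) - n) * θ * Complex.I = (((m : ℂ) - n) * Complex.I) * θ := by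
    intro θ; ring
  simp_rw [h1]
  rw [← integral_Ioc_eq_integral_Ioo,
    ← intervalIntegral.integral_of_le (by linarith [Real.pi_pos] : -π ≤ π),
    integral_exp_mul_complex hc]
  rw [sub_eq_zero.mpr, zero_div]
  apply Complex.exp_eq_exp_iff_exists_int.mpr
  exact ⟨(m : ℤ) - n, by push_cast; ring⟩

lemma ang_diag (m : ℕ) :
    ∫ θ in Set.Ioo (-π) π, Complex.exp (((m : ℂ) - m) * θ * Complex.I) = ((2 * π : ℝ) : ℂ) := by
  simp only [sub_self, zero_mul, Complex.exp_zero]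
  rw [setIntegral_const]
  simp [Real.volume_Ioo, two_mul, ENNReal.toReal_ofReal (by positivity : (0:ℝ) ≤ π + π),
    max_eq_left (by positivity : (0:ℝ) ≤ π + π)]

lemma lGamma_diff {c : ℝ} (hc : 0 ≤ c - 1) {u v : ℝ} (hu : 0 ≤ u) (huv : u ≤ v) :
    ∫ t in Set.Ioc u v, t ^ (c - 1) * Real.exp (-t) = lGamma c v - lGamma c u := by
  have hg : Continuous (fun t : ℝ => t ^ (c - 1) * Real.exp (-t)) :=
    (Real.continuous_rpow_const hc).mul (Real.continuous_exp.comp continuous_neg)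
  have hsplit : ∫ t in Set.Ioc 0 u ∪ Set.Ioc u v, t ^ (c - 1) * Real.exp (-t) =
      (∫ t in Set.Ioc 0 u, t ^ (c - 1) * Real.exp (-t)) +
        ∫ t in Set.Ioc u v, t ^ (c - 1) * Real.exp (-t) :=
    setIntegral_union (Set.Ioc_disjoint_Ioc_of_le le_rfl) measurableSet_Ioc
      hg.integrableOn_Ioc hg.integrableOn_Ioc
  rw [Set.Ioc_union_Ioc_eq_Ioc hu huv] at hsplit
  rw [lGamma, lGamma]
  linarith [hsplit]

lemma radial (L : ℝ) (hL : 0 ≤ L) (m : ℕ) (a b : ℝ) (ha : 0 ≤ a) (hab : a ≤ b) :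
    ∫ ρ in Set.Ioc a b, ρ * (ρ ^ m * ρ ^ m * (ρ ^ (2*L) * Real.exp (-ρ^2))) =
      (1/2) * (lGamma ((m : ℝ) + 1 + L) (b^2) - lGamma ((m : ℝ) + 1 + L) (a^2)) := by
  set c : ℝ := (m : ℝ) + 1 + L with hc
  have hm : (0:ℝ) ≤ (m:ℝ) := Nat.cast_nonneg m
  have hc1 : 0 ≤ c - 1 := by rw [hc]; linarith
  have hg : Continuous (fun t : ℝ => t ^ (c - 1) * Real.exp (-t)) :=
    (Real.continuous_rpow_const hc1).mul (Real.continuous_exp.comp continuous_neg)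
  have step1 : ∫ ρ in Set.Ioc a b, ρ * (ρ ^ m * ρ ^ m * (ρ ^ (2*L) * Real.exp (-ρ^2))) =
      ∫ ρ in Set.Ioc a b, (1/2 : ℝ) • ((2*ρ) • ((ρ^2) ^ (c - 1) * Real.exp (-ρ^2))) := by
    apply setIntegral_congr_fun measurableSet_Ioc
    intro ρ hρ
    have hρ0 : 0 < ρ := lt_of_le_of_lt ha hρ.1
    have h2 : (ρ^2 : ℝ) ^ (c - 1) = ρ ^ m * ρ ^ m * ρ ^ (2*L) := by
      have e1 : c - 1 = (m : ℝ) + L := by rw [hc]; ring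
      have e2 : (ρ^2 : ℝ) = ρ ^ ((2:ℕ):ℝ) := by rw [Real.rpow_natCast]
      rw [e1, e2, ← Real.rpow_mul hρ0.le, ← Real.rpow_natCast ρ m,
        ← Real.rpow_add hρ0, ← Real.rpow_add hρ0]
      congr 1
      push_cast
      ring
    simp only [smul_eq_mul]
    rw [h2]
    ring
  rw [step1, integral_smul, ← intervalIntegral.integral_of_le hab]
  have hderiv : ∀ x ∈ Set.uIcc a b, HasDerivAt (fun x : ℝ => x^2) (2*x) x := by
    intro x _
    simpa using hasDerivAt_pow 2 x
  have := intervalIntegral.integral_comp_smul_deriv hderiv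
    (by fun_prop : ContinuousOn (fun x : ℝ => 2*x) (Set.uIcc a b)) hg
  rw [show (fun x : ℝ => (2*x) • (((x^2) ^ (c - 1)) * Real.exp (-x^2))) =
      (fun x : ℝ => (2*x) • ((fun t : ℝ => t ^ (c-1) * Real.exp (-t)) ∘ (fun x : ℝ => x^2)) x)
      from rfl, this]
  rw [intervalIntegral.integral_of_le (pow_le_pow_left₀ ha hab 2)]
  rw [lGamma_diff hc1 (by positivity) (pow_le_pow_left₀ ha hab 2), smul_eq_mul]

lemma J_zero (L : ℝ) {a b : ℝ} (ha : 0 ≤ a) {m n : ℕ} (hmn : m ≠ n) : J L a b m n = 0 := by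
  rw [J_polar L a b ha m n, ang_zero m n hmn, mul_zero]

lemma J_diag (L : ℝ) (hL : 0 ≤ L) {a b : ℝ} (ha : 0 ≤ a) (hab : a ≤ b) (m : ℕ) :
    J L a b m m = ((π * (lGamma ((m:ℝ) + 1 + L) (b^2) - lGamma ((m:ℝ) + 1 + L) (a^2)) : ℝ) : ℂ) := by
  have hi : (∫ ρ in Set.Ioc a b, ((ρ * (ρ ^ m * ρ ^ m * (ρ ^ (2*L) * Real.exp (-ρ^2))) : ℝ) : ℂ)) =
      ((∫ ρ in Set.Ioc a b, ρ * (ρ ^ m * ρ ^ m * (ρ ^ (2*L) * Real.exp (-ρ^2))) : ℝ) : ℂ) :=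
    integral_ofReal
  rw [J_polar L a b ha m m, ang_diag m, hi, radial L hL m a b ha hab, ← Complex.ofReal_mul]
  congr 1
  ring

lemma det_vdm (N : ℕ) (z : Fin N → ℂ) :
    Matrix.det (Matrix.vandermonde z) =
      ∑ σ : Equiv.Perm (Fin N), ((Equiv.Perm.sign σ : ℤ) : ℂ) * ∏ i, z i ^ (σ i : ℕ) := by
  rw [← Matrix.det_transpose, Matrix.det_apply']
  apply Finset.sum_congr rfl
  intro σ _
  simp [Matrix.transpose_apply, Matrix.vandermonde_apply, Units.smul_def, zsmul_eq_mul]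

lemma pair_prod (N : ℕ) (z : Fin N → ℂ) :
    (∏ p ∈ Finset.univ.filter (fun p : Fin N × Fin N => p.1 < p.2), ‖z p.1 - z p.2‖ ^ 2) =
      Complex.normSq (Matrix.det (Matrix.vandermonde z)) := by
  rw [Matrix.det_vandermonde, map_prod]
  have : ∀ i : Fin N, Complex.normSq (∏ j ∈ Finset.Ioi i, (z j - z i)) =
      ∏ j ∈ Finset.Ioi i, Complex.normSq (z j - z i) := fun i => map_prod _ _ _
  simp_rw [this]
  rw [Finset.prod_sigma']
  apply Finset.prod_nbij' (fun p : Fin N × Fin N => (⟨p.1, p.2⟩ : Σ _ : Fin N, Fin N))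
    (fun q => (q.1, q.2))
  · rintro ⟨i, j⟩ hp
    simp only [Finset.mem_filter, Finset.mem_univ, true_and] at hp
    simp [Finset.mem_sigma, Finset.mem_Ioi, hp]
  · rintro ⟨i, j⟩ hq
    simp only [Finset.mem_sigma, Finset.mem_univ, Finset.mem_Ioi, true_and] at hq
    simp [hq]
  · rintro ⟨i, j⟩ _; rfl
  · rintro ⟨i, j⟩ _; rfl
  · rintro ⟨i, j⟩ _
    rw [show ‖z i - z j‖ ^ 2 = Complex.normSq (z i - z j) by
      rw [Complex.normSq_eq_norm_sq]]
    rw [show (z j - z i) = -(z i - z j) by ring, Complex.normSq_neg]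

lemma expand (N : ℕ) (L : ℝ) (z : Fin N → ℂ) :
    (((∏ p ∈ Finset.univ.filter (fun p : Fin N × Fin N => p.1 < p.2), ‖z p.1 - z p.2‖ ^ 2) *
      (∏ j, ‖z j‖ ^ (2 * L)) * Real.exp (-∑ j, ‖z j‖ ^ 2) : ℝ) : ℂ) =
      ∑ σ : Equiv.Perm (Fin N), ∑ τ : Equiv.Perm (Fin N),
        (((Equiv.Perm.sign σ : ℤ) : ℂ) * ((Equiv.Perm.sign τ : ℤ) : ℂ)) *
          ∏ j, h L (σ j) (τ j) (z j) := by
  have hW : (∏ j, ‖z j‖ ^ (2 * L)) * Real.exp (-∑ j, ‖z j‖ ^ 2) = ∏ j, gw L (z j) := by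
    rw [show (-∑ j, ‖z j‖ ^ 2) = ∑ j, -(‖z j‖ ^ 2) by rw [← Finset.sum_neg_distrib],
      Real.exp_sum, ← Finset.prod_mul_distrib]
    rfl
  have hsplit : ∀ (σ τ : Equiv.Perm (Fin N)),
      (∏ j, h L (σ j) (τ j) (z j)) =
        (∏ j, z j ^ (σ j : ℕ)) * (∏ j, (starRingEnd ℂ (z j)) ^ (τ j : ℕ)) *
          ((∏ j, gw L (z j) : ℝ) : ℂ) := by
    intro σ τ
    rw [← Finset.prod_mul_distrib, Complex.ofReal_prod, ← Finset.prod_mul_distrib]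
    rfl
  simp_rw [hsplit]
  have hRHS : ∑ σ : Equiv.Perm (Fin N), ∑ τ : Equiv.Perm (Fin N),
      (((Equiv.Perm.sign σ : ℤ) : ℂ) * ((Equiv.Perm.sign τ : ℤ) : ℂ)) *
        ((∏ j, z j ^ (σ j : ℕ)) * (∏ j, (starRingEnd ℂ (z j)) ^ (τ j : ℕ)) *
          ((∏ j, gw L (z j) : ℝ) : ℂ)) =
      (Matrix.det (Matrix.vandermonde z)) *
        (starRingEnd ℂ (Matrix.det (Matrix.vandermonde z))) * ((∏ j, gw L (z j) : ℝ) : ℂ) := by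
    rw [det_vdm, map_sum, Finset.sum_mul_sum, Finset.sum_mul]
    apply Finset.sum_congr rfl
    intro σ _
    rw [Finset.sum_mul]
    apply Finset.sum_congr rfl
    intro τ _
    rw [map_mul, map_intCast, map_prod]
    simp_rw [map_pow]
    ring
  rw [hRHS, Complex.mul_conj, ← Complex.ofReal_mul]
  exact congrArg _ (by rw [mul_assoc, hW, pair_prod])

theorem master (N : ℕ) (L : ℝ) (hL : 0 ≤ L) (a b : ℝ) (ha : 0 ≤ a) (hab : a ≤ b) :
    (∫ z in {z : Fin N → ℂ | ∀ j, a ≤ ‖z j‖ ∧ ‖z j‖ ≤ b},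
      (∏ p ∈ Finset.univ.filter (fun p : Fin N × Fin N => p.1 < p.2), ‖z p.1 - z p.2‖ ^ 2) *
      (∏ j, ‖z j‖ ^ (2 * L)) * Real.exp (-∑ j, ‖z j‖ ^ 2)) =
      (N.factorial : ℝ) *
        ∏ k ∈ Finset.Icc 1 N, (π * (lGamma ((k:ℝ) + L) (b^2) - lGamma ((k:ℝ) + L) (a^2))) := by
  set S : Set (Fin N → ℂ) := {z : Fin N → ℂ | ∀ j, a ≤ ‖z j‖ ∧ ‖z j‖ ≤ b} with hS
  have hSpi : S = Set.pi Set.univ (fun _ : Fin N => ann a b) := by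
    ext z; simp [hS, ann, Set.mem_pi]
  have hSmeas : MeasurableSet S := by
    rw [hSpi]; exact MeasurableSet.univ_pi (fun i => measurableSet_ann a b)
  have hScomp : IsCompact S := by
    rw [hSpi]; exact isCompact_univ_pi (fun i => isCompact_ann a b)
  have hint : ∀ σ τ : Equiv.Perm (Fin N),
      IntegrableOn (fun z : Fin N → ℂ =>
        (((Equiv.Perm.sign σ : ℤ) : ℂ) * ((Equiv.Perm.sign τ : ℤ) : ℂ)) *
          ∏ j, h L (σ j) (τ j) (z j)) S volume := by
    intro σ τ
    have hcont : Continuous (fun z : Fin N → ℂ =>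
        (((Equiv.Perm.sign σ : ℤ) : ℂ) * ((Equiv.Perm.sign τ : ℤ) : ℂ)) *
          ∏ j, h L (σ j) (τ j) (z j)) :=
      continuous_const.mul (continuous_finset_prod _ (fun j _ =>
        (continuous_h hL _ _).comp (continuous_apply j)))
    exact hcont.continuousOn.integrableOn_compact hScomp
  have hC : (∫ z in S,
      ((((∏ p ∈ Finset.univ.filter (fun p : Fin N × Fin N => p.1 < p.2), ‖z p.1 - z p.2‖ ^ 2) *
      (∏ j, ‖z j‖ ^ (2 * L)) * Real.exp (-∑ j, ‖z j‖ ^ 2) : ℝ)) : ℂ)) =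
      (((N.factorial : ℝ) *
        ∏ k ∈ Finset.Icc 1 N, (π * (lGamma ((k:ℝ) + L) (b^2) - lGamma ((k:ℝ) + L) (a^2))) : ℝ) : ℂ) := by
    simp_rw [expand N L]
    rw [integral_finset_sum _ (fun σ _ => integrable_finset_sum _ (fun τ _ => hint σ τ))]
    have hswap : ∀ σ : Equiv.Perm (Fin N),
        (∫ z in S, ∑ τ : Equiv.Perm (Fin N),
          (((Equiv.Perm.sign σ : ℤ) : ℂ) * ((Equiv.Perm.sign τ : ℤ) : ℂ)) *
            ∏ j, h L (σ j) (τ j) (z j)) =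
        ∑ τ : Equiv.Perm (Fin N),
          (((Equiv.Perm.sign σ : ℤ) : ℂ) * ((Equiv.Perm.sign τ : ℤ) : ℂ)) *
            ∫ z in S, ∏ j, h L (σ j) (τ j) (z j) := by
      intro σ
      rw [integral_finset_sum _ (fun τ _ => hint σ τ)]
      exact Finset.sum_congr rfl (fun τ _ => MeasureTheory.integral_const_mul _ _)
    simp_rw [hswap]
    have hfub : ∀ σ τ : Equiv.Perm (Fin N),
        (∫ z in S, ∏ j, h L (σ j) (τ j) (z j)) = ∏ j, J L a b (σ j) (τ j) := by
      intro σ τ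
      rw [← integral_indicator hSmeas]
      have hind : (fun z : Fin N → ℂ => S.indicator (fun z => ∏ j, h L (σ j) (τ j) (z j)) z) =
          fun z : Fin N → ℂ => ∏ j, (ann a b).indicator (h L (σ j) (τ j)) (z j) := by
        funext z
        by_cases hz : z ∈ S
        · rw [Set.indicator_of_mem hz]
          refine Finset.prod_congr rfl (fun j _ => ?_)
          rw [Set.indicator_of_mem]
          rw [hSpi] at hz
          exact hz j (Set.mem_univ j)
        · rw [Set.indicator_of_notMem hz]
          rw [hSpi] at hz
          simp only [Set.mem_pi, Set.mem_univ, forall_true_left, not_forall] at hz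
          obtain ⟨j, hj⟩ := hz
          refine (Finset.prod_eq_zero (Finset.mem_univ j) ?_).symm
          rw [Set.indicator_of_notMem hj]
      rw [hind,
        MeasureTheory.integral_fintype_prod_volume_eq_prod (ι := Fin N)
          (f := fun j (w : ℂ) => (ann a b).indicator (h L (σ j) (τ j)) w)]
      exact Finset.prod_congr rfl (fun j _ => integral_indicator (measurableSet_ann a b))
    simp_rw [hfub]
    have hdiagsum : ∀ σ : Equiv.Perm (Fin N),
        (∑ τ : Equiv.Perm (Fin N),
          (((Equiv.Perm.sign σ : ℤ) : ℂ) * ((Equiv.Perm.sign τ : ℤ) : ℂ)) *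
            ∏ j, J L a b (σ j) (τ j)) = ∏ j : Fin N, J L a b j j := by
      intro σ
      rw [Finset.sum_eq_single σ]
      · have hs : (((Equiv.Perm.sign σ : ℤ) : ℂ) * ((Equiv.Perm.sign σ : ℤ) : ℂ)) = 1 := by
          rcases Int.units_eq_one_or (Equiv.Perm.sign σ) with hu | hu <;> rw [hu] <;> norm_num
        rw [hs, one_mul]
        exact Equiv.prod_comp σ (fun j => J L a b j j)
      · intro τ _ hτ
        have : ∃ j, σ j ≠ τ j := by
          by_contra hc
          push_neg at hc
          exact hτ (Equiv.ext (fun j => hc j)).symm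
        obtain ⟨j, hj⟩ := this
        rw [Finset.prod_eq_zero (Finset.mem_univ j)
          (J_zero L ha (fun hc => hj (Fin.val_injective hc))), mul_zero]
      · intro hσ; exact absurd (Finset.mem_univ σ) hσ
    simp_rw [hdiagsum, Finset.sum_const, Finset.card_univ, Fintype.card_perm, Fintype.card_fin]
    have hJd : ∀ j : Fin N, J L a b j j =
        ((π * (lGamma ((j:ℝ) + 1 + L) (b^2) - lGamma ((j:ℝ) + 1 + L) (a^2)) : ℝ) : ℂ) :=
      fun j => J_diag L hL ha hab j
    simp_rw [hJd, ← Complex.ofReal_prod]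
    rw [nsmul_eq_mul]
    rw [← Complex.ofReal_natCast, ← Complex.ofReal_mul]
    congr 1
    congr 1
    · rw [Fin.prod_univ_eq_prod_range (fun k => π * (lGamma ((k:ℝ) + 1 + L) (b^2) -
        lGamma ((k:ℝ) + 1 + L) (a^2)))]
      rw [show Finset.Icc 1 N = Finset.Ico 1 (N+1) by rw [Finset.Ico_add_one_right_eq_Icc],
        Finset.prod_Ico_eq_prod_range]
      simp only [Nat.add_sub_cancel]
      apply Finset.prod_congr rfl
      intro k _
      push_cast
      ring_nf
  have h3 : ((∫ z in S,
      (∏ p ∈ Finset.univ.filter (fun p : Fin N × Fin N => p.1 < p.2), ‖z p.1 - z p.2‖ ^ 2) *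
      (∏ j, ‖z j‖ ^ (2 * L)) * Real.exp (-∑ j, ‖z j‖ ^ 2) : ℝ) : ℂ) =
      (((N.factorial : ℝ) *
        ∏ k ∈ Finset.Icc 1 N, (π * (lGamma ((k:ℝ) + L) (b^2) - lGamma ((k:ℝ) + L) (a^2))) : ℝ) : ℂ) := by
    rw [← hC]
    exact integral_ofReal.symm
  exact_mod_cast h3

lemma lGamma_zero (c : ℝ) : lGamma c 0 = 0 := by
  rw [lGamma, Set.Ioc_self, Measure.restrict_empty, integral_zero_measure]

lemma lGamma_pos {c x : ℝ} (hc : 0 ≤ c - 1) (hx : 0 < x) : 0 < lGamma c x := by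
  have hg : Continuous (fun t : ℝ => t ^ (c - 1) * Real.exp (-t)) :=
    (Real.continuous_rpow_const hc).mul (Real.continuous_exp.comp continuous_neg)
  rw [lGamma]
  have hpos : ∀ t ∈ Set.Ioc (0:ℝ) x, 0 < t ^ (c - 1) * Real.exp (-t) := by
    intro t ht
    exact mul_pos (Real.rpow_pos_of_pos ht.1 _) (Real.exp_pos _)
  rw [setIntegral_pos_iff_support_of_nonneg_ae]
  · have hsub : Set.Ioc 0 x ⊆ Function.support (fun t : ℝ => t ^ (c - 1) * Real.exp (-t)) :=
      fun t ht => ne_of_gt (hpos t ht)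
    rw [Set.inter_eq_self_of_subset_right hsub, Real.volume_Ioc]
    simpa using hx
  · rw [EventuallyLE, ae_restrict_iff' measurableSet_Ioc]
    exact Eventually.of_forall (fun t ht => (hpos t ht).le)
  · exact hg.integrableOn_Ioc

end InducedGinibreAux

/-- For the complex induced Ginibre ensemble with rectangularity index `L ≥ 0` and
`0 < r ≤ R`, the joint probability `P(r_min ≥ r and r_max ≤ R)` factorizes as
`P(r_max ≤ R) · ∏_{k=1}^N [1 - γ(k+L, r²)/γ(k+L, R²)]`. -/
theorem induced_ginibre_joint_factorization (N : ℕ) (L : ℝ) (hL : 0 ≤ L)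
    (r R : ℝ) (hr : 0 < r) (hrR : r ≤ R) :
    (∫ z in {z : Fin N → ℂ | ∀ j, r ≤ ‖z j‖ ∧ ‖z j‖ ≤ R}, inducedGinibreDensity N L z) =
      (∫ z in {z : Fin N → ℂ | ∀ j, ‖z j‖ ≤ R}, inducedGinibreDensity N L z) *
        ∏ k ∈ Finset.Icc 1 N,
          (1 - lGamma ((k : ℝ) + L) (r ^ 2) / lGamma ((k : ℝ) + L) (R ^ 2)) := by
  set c : ℝ :=
    ((N.factorial : ℝ) * Real.pi ^ N * ∏ k ∈ Finset.Icc 1 N, Real.Gamma ((k : ℝ) + L))⁻¹ with hc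
  have hd : ∀ z : Fin N → ℂ, inducedGinibreDensity N L z =
      c * ((∏ p ∈ Finset.univ.filter (fun p : Fin N × Fin N => p.1 < p.2), ‖z p.1 - z p.2‖ ^ 2) *
        (∏ j, ‖z j‖ ^ (2 * L)) * Real.exp (-∑ j, ‖z j‖ ^ 2)) := by
    intro z
    rw [inducedGinibreDensity]
    ring
  have hsetR : {z : Fin N → ℂ | ∀ j, ‖z j‖ ≤ R} =
      {z : Fin N → ℂ | ∀ j, (0:ℝ) ≤ ‖z j‖ ∧ ‖z j‖ ≤ R} := by
    ext z
    simp [norm_nonneg]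
  have hR0 : (0:ℝ) ≤ R := le_trans hr.le hrR
  simp_rw [hd]
  rw [MeasureTheory.integral_const_mul, hsetR, MeasureTheory.integral_const_mul]
  rw [InducedGinibreAux.master N L hL r R hr.le hrR, InducedGinibreAux.master N L hL 0 R le_rfl hR0]
  have hzero : ∀ k : ℕ, lGamma ((k:ℝ) + L) ((0:ℝ)^2) = 0 := by
    intro k
    rw [show ((0:ℝ)^2) = 0 by norm_num, InducedGinibreAux.lGamma_zero]
  have hprod : (∏ k ∈ Finset.Icc 1 N, (π * (lGamma ((k:ℝ) + L) (R^2) - lGamma ((k:ℝ) + L) ((0:ℝ)^2)))) *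
      ∏ k ∈ Finset.Icc 1 N, (1 - lGamma ((k : ℝ) + L) (r ^ 2) / lGamma ((k : ℝ) + L) (R ^ 2)) =
      ∏ k ∈ Finset.Icc 1 N, (π * (lGamma ((k:ℝ) + L) (R^2) - lGamma ((k:ℝ) + L) (r^2))) := by
    rw [← Finset.prod_mul_distrib]
    apply Finset.prod_congr rfl
    intro k hk
    have hk1 : 1 ≤ k := (Finset.mem_Icc.mp hk).1
    have hRpos : 0 < R := lt_of_lt_of_le hr hrR
    have hpos : 0 < lGamma ((k:ℝ) + L) (R^2) := by
      apply InducedGinibreAux.lGamma_pos _ (pow_pos hRpos 2)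
      have : (1:ℝ) ≤ (k:ℝ) := by exact_mod_cast hk1
      linarith
    rw [hzero k]
    field_simp
    ring
  rw [← hprod]
  ring
end

section
/- For fixed r > 0, the infinite product ∏_{k=1}^∞ Γ(k+1, r²)/Γ(k+1) of regularized upper incomplete Gamma functions converges to a strictly positive limit. -/
open MeasureTheory Real Filter Finset Topology Asymptotics

lemma key_prod (g : ℕ → ℝ) (hg0 : ∀ n, 0 < g n) (hg1 : ∀ n, g n ≤ 1) (b : ℕ → ℝ)
    (hb : Summable b) (hle : ∀ n, 1 - g n ≤ b n) :
    ∃ P : ℝ, 0 < P ∧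
      Tendsto (fun N : ℕ => ∏ n ∈ Finset.range N, g n) atTop (nhds P) := by
  obtain ⟨N₀, hN₀⟩ := (Filter.eventually_atTop).mp
    (hb.tendsto_atTop_zero.eventually (gt_mem_nhds (by norm_num : (0:ℝ) < 1/2)))
  set L : ℕ → ℝ := fun n => Real.log (g n) with hL
  have hghalf : ∀ n ≥ N₀, (1:ℝ)/2 ≤ g n := by
    intro n hn
    have := hle n
    have := hN₀ n hn
    linarith
  have hbound : ∀ n ≥ N₀, ‖L n‖ ≤ 2 * b n := by
    intro n hn
    have hg := hg0 n
    have hlog : L n ≤ 0 := Real.log_nonpos (le_of_lt hg) (hg1 n)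
    rw [Real.norm_eq_abs, abs_of_nonpos hlog]
    have h1 : -L n = Real.log (g n)⁻¹ := by rw [Real.log_inv]
    have h2 : Real.log (g n)⁻¹ ≤ (g n)⁻¹ - 1 :=
      Real.log_le_sub_one_of_pos (inv_pos.mpr hg)
    have h3 : (g n)⁻¹ - 1 = (1 - g n) / g n := by field_simp
    have h4 : (1 - g n) / g n ≤ 2 * (1 - g n) := by
      rw [div_le_iff₀ hg]
      nlinarith [hghalf n hn, hle n, hg1 n]
    have h5 := hle n
    nlinarith [h1, h2]
  have hLs : Summable L := by
    rw [← summable_nat_add_iff N₀]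
    refine Summable.of_norm_bounded (g := fun n => 2 * b (n + N₀))
      (((summable_nat_add_iff N₀).mpr hb).mul_left 2) ?_
    intro n
    exact hbound (n + N₀) (Nat.le_add_left _ _)
  refine ⟨Real.exp (∑' n, L n), Real.exp_pos _, ?_⟩
  have h1 : Tendsto (fun N => Real.exp (∑ n ∈ Finset.range N, L n)) atTop
      (nhds (Real.exp (∑' n, L n))) :=
    (Real.continuous_exp.tendsto _).comp hLs.hasSum.tendsto_sum_nat
  convert h1 using 2 with N
  rw [Real.exp_sum]
  exact Finset.prod_congr rfl fun n _ => (Real.exp_log (hg0 n)).symm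

/-- For fixed `r > 0`, the infinite product `∏_{k=1}^∞ Γ(k+1, r²)/Γ(k+1)` of regularized
upper incomplete Gamma functions converges to a strictly positive limit. -/
theorem regularized_uGamma_infinite_product_pos (r : ℝ) (hr : 0 < r) :
    ∃ P : ℝ, 0 < P ∧
      Filter.Tendsto
        (fun N : ℕ => ∏ k ∈ Finset.Icc 1 N, uGamma ((k : ℝ) + 1) (r ^ 2) /
          Real.Gamma ((k : ℝ) + 1)) Filter.atTop (nhds P) := by
  set x := r ^ 2 with hxdef
  have hx : 0 < x := by positivity
  -- basic integrand facts
  have hint : ∀ k : ℕ, IntegrableOn (fun t : ℝ => t ^ k * Real.exp (-t)) (Set.Ioi 0) := by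
    intro k
    have := Real.GammaIntegral_convergent (s := (k : ℝ) + 1) (by positivity)
    refine this.congr_fun ?_ measurableSet_Ioi
    intro t ht
    simp [mul_comm, Real.rpow_natCast]
  have huG : ∀ k : ℕ, uGamma ((k : ℝ) + 1) x = ∫ t in Set.Ioi x, t ^ k * Real.exp (-t) := by
    intro k
    unfold uGamma
    congr 1
    funext t
    rw [add_sub_cancel_right, Real.rpow_natCast]
  have hGam : ∀ k : ℕ, Real.Gamma ((k : ℝ) + 1) = (Nat.factorial k : ℝ) := fun k =>
    Real.Gamma_nat_eq_factorial k
  -- splitting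
  have hsplit : ∀ k : ℕ, Real.Gamma ((k : ℝ) + 1) =
      (∫ t in Set.Ioc 0 x, t ^ k * Real.exp (-t)) + uGamma ((k : ℝ) + 1) x := by
    intro k
    rw [huG k, Real.Gamma_eq_integral (by positivity : (0:ℝ) < (k:ℝ) + 1)]
    have h1 : (∫ t in Set.Ioi (0:ℝ), Real.exp (-t) * t ^ ((k:ℝ) + 1 - 1)) =
        ∫ t in Set.Ioi (0:ℝ), t ^ k * Real.exp (-t) := by
      congr 1; funext t; rw [add_sub_cancel_right, Real.rpow_natCast, mul_comm]
    rw [h1, ← Set.Ioc_union_Ioi_eq_Ioi hx.le,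
      setIntegral_union (Set.Ioc_disjoint_Ioi le_rfl) measurableSet_Ioi
        ((hint k).mono_set Set.Ioc_subset_Ioi_self) ((hint k).mono_set (Set.Ioi_subset_Ioi hx.le))]
  -- lower integral bounds
  have hLnonneg : ∀ k : ℕ, 0 ≤ ∫ t in Set.Ioc 0 x, t ^ k * Real.exp (-t) := by
    intro k
    apply setIntegral_nonneg measurableSet_Ioc
    intro t ht
    have : 0 ≤ t := le_of_lt ht.1
    positivity
  have hLle : ∀ k : ℕ, (∫ t in Set.Ioc 0 x, t ^ k * Real.exp (-t)) ≤ x ^ (k+1) / (k+1) := by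
    intro k
    have h1 : (∫ t in Set.Ioc 0 x, t ^ k * Real.exp (-t)) ≤ ∫ t in Set.Ioc 0 x, t ^ k := by
      apply setIntegral_mono_on ((hint k).mono_set Set.Ioc_subset_Ioi_self)
        ((continuous_pow k).integrableOn_Ioc) measurableSet_Ioc
      intro t ht
      nlinarith [Real.exp_le_one_iff.mpr (neg_nonpos.mpr ht.1.le), pow_nonneg ht.1.le k,
        Real.exp_pos (-t)]
    have h2 : (∫ t in Set.Ioc 0 x, (t:ℝ) ^ k) = x ^ (k+1) / (k+1) := by
      rw [← intervalIntegral.integral_of_le hx.le, integral_pow]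
      simp
    linarith
  -- positivity of uGamma
  have hupos : ∀ k : ℕ, 0 < uGamma ((k : ℝ) + 1) x := by
    intro k
    rw [huG k]
    rw [setIntegral_pos_iff_support_of_nonneg_ae]
    · have : Set.Ioi x ⊆ Function.support (fun t : ℝ => t ^ k * Real.exp (-t)) ∩ Set.Ioi x := by
        intro t ht
        have ht0 : 0 < t := lt_trans hx ht
        refine ⟨?_, ht⟩
        simp only [Function.mem_support]
        positivity
      calc (0:ENNReal) < volume (Set.Ioi x) := by simp [Real.volume_Ioi]
        _ ≤ _ := measure_mono this
    · filter_upwards [ae_restrict_mem measurableSet_Ioi] with t ht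
      have : 0 < t := lt_trans hx ht
      positivity
    · exact (hint k).mono_set (Set.Ioi_subset_Ioi hx.le)
  have hGampos : ∀ k : ℕ, 0 < Real.Gamma ((k : ℝ) + 1) := fun k =>
    Real.Gamma_pos_of_pos (by positivity)
  -- define g
  set f : ℕ → ℝ := fun k => uGamma ((k : ℝ) + 1) x / Real.Gamma ((k : ℝ) + 1) with hf
  have hf0 : ∀ k, 0 < f k := fun k => div_pos (hupos k) (hGampos k)
  have hf1 : ∀ k, f k ≤ 1 := by
    intro k
    rw [hf, div_le_one (hGampos k)]
    nlinarith [hsplit k, hLnonneg k]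
  have hfb : ∀ k : ℕ, 1 - f k ≤ x ^ (k+1) / Nat.factorial (k+1) := by
    intro k
    have hG := hGampos k
    have h1 : 1 - f k = (∫ t in Set.Ioc 0 x, t ^ k * Real.exp (-t)) / Real.Gamma ((k:ℝ)+1) := by
      rw [hf]
      field_simp
      linarith [hsplit k]
    rw [h1, hGam k, div_le_div_iff₀ (by positivity) (by positivity)]
    have h2 := hLle k
    have hfact : (Nat.factorial (k+1) : ℝ) = (k+1) * (Nat.factorial k : ℝ) := by
      rw [Nat.factorial_succ]; push_cast; ring
    calc (∫ t in Set.Ioc 0 x, t ^ k * Real.exp (-t)) * (Nat.factorial (k+1) : ℝ)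
        ≤ (x ^ (k+1) / (k+1)) * ((k+1) * (Nat.factorial k : ℝ)) := by
          rw [← hfact]
          apply mul_le_mul_of_nonneg_right h2 (by positivity)
      _ = x ^ (k+1) * (Nat.factorial k : ℝ) := by field_simp
  -- summable bound
  have hbsum : Summable (fun n : ℕ => x ^ (n+2) / Nat.factorial (n+2)) := by
    have := Real.summable_pow_div_factorial x
    exact (summable_nat_add_iff 2).mpr this
  obtain ⟨P, hP, hT⟩ := key_prod (fun n => f (n + 1)) (fun n => hf0 _) (fun n => hf1 _)
    (fun n : ℕ => x ^ (n+2) / Nat.factorial (n+2)) hbsum (fun n => by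
      have := hfb (n + 1); simpa using this)
  refine ⟨P, hP, ?_⟩
  convert hT using 2 with N
  rw [show Finset.Icc 1 N = Finset.Ico 1 (N+1) by rw [Finset.Ico_add_one_right_eq_Icc],
    Finset.prod_Ico_eq_prod_range]
  simp [hf, add_comm]
end

section
/- For the complex Ginibre ensemble, the left tail of the minimum modulus distribution is asymptotically Rayleigh with parameter 1/√2: as r → 0, lim_{N→∞} P(r_min^{(N)}(A) < r) = 1 − e^{−r²}(1 − O(r⁴)); equivalently, lim_{N→∞} ∏_{k=0}^{N−1} Γ(k+1, r²)/Γ(k+1) = e^{−r²}(1 + O(r⁴)) as r → 0. -/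
open MeasureTheory Real Filter Finset Topology Asymptotics

-- integrand for Gamma
lemma integrand_eq (k : ℕ) : (fun t : ℝ => t ^ (((k : ℝ) + 1) - 1) * Real.exp (-t))
    = fun t => Real.exp (-t) * t ^ (((k : ℝ) + 1) - 1) := by
  funext t; ring

lemma gamma_integrable (k : ℕ) : IntegrableOn
    (fun t : ℝ => t ^ (((k : ℝ) + 1) - 1) * Real.exp (-t)) (Set.Ioi 0) := by
  rw [integrand_eq]
  exact Real.GammaIntegral_convergent (by positivity)

lemma uGamma_split (k : ℕ) {x : ℝ} (hx : 0 < x) :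
    Real.Gamma ((k : ℝ) + 1) =
      (∫ t in Set.Ioc 0 x, t ^ (((k : ℝ) + 1) - 1) * Real.exp (-t)) + uGamma ((k : ℝ) + 1) x := by
  rw [Real.Gamma_eq_integral (by positivity), ← integrand_eq k, uGamma,
    ← setIntegral_union (Set.Ioc_disjoint_Ioi le_rfl) measurableSet_Ioi
      ((gamma_integrable k).mono_set (Set.Ioc_subset_Ioi_self))
      ((gamma_integrable k).mono_set (Set.Ioi_subset_Ioi hx.le)),
    Set.Ioc_union_Ioi_eq_Ioi hx.le]

lemma lower_nonneg (k : ℕ) {x : ℝ} (hx : 0 < x) :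
    0 ≤ ∫ t in Set.Ioc 0 x, t ^ (((k : ℝ) + 1) - 1) * Real.exp (-t) := by
  apply setIntegral_nonneg measurableSet_Ioc
  intro t ht
  have := ht.1
  positivity

lemma uGamma_nonneg (k : ℕ) {x : ℝ} (hx : 0 < x) : 0 ≤ uGamma ((k : ℝ) + 1) x := by
  apply setIntegral_nonneg measurableSet_Ioi
  intro t ht
  have : (0:ℝ) < t := hx.trans ht
  positivity

lemma lower_le (k : ℕ) {x : ℝ} (hx : 0 < x) :
    (∫ t in Set.Ioc 0 x, t ^ (((k : ℝ) + 1) - 1) * Real.exp (-t)) ≤ x ^ (k + 1) := by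
  have h1 : (∫ t in Set.Ioc 0 x, t ^ (((k : ℝ) + 1) - 1) * Real.exp (-t))
      ≤ ∫ _t in Set.Ioc 0 x, x ^ k := by
    apply setIntegral_mono_on
    · exact (gamma_integrable k).mono_set Set.Ioc_subset_Ioi_self
    · exact integrableOn_const (by simp [Real.volume_Ioc])
    · exact measurableSet_Ioc
    · intro t ht
      have ht0 : 0 < t := ht.1
      have : t ^ (((k : ℝ) + 1) - 1) = t ^ k := by
        rw [add_sub_cancel_right, Real.rpow_natCast]
      rw [this]
      calc t ^ k * Real.exp (-t) ≤ t ^ k * 1 := by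
            apply mul_le_mul_of_nonneg_left _ (by positivity)
            exact Real.exp_le_one_iff.2 (by linarith)
        _ = t ^ k := mul_one _
        _ ≤ x ^ k := pow_le_pow_left₀ ht0.le ht.2 k
  calc (∫ t in Set.Ioc 0 x, t ^ (((k : ℝ) + 1) - 1) * Real.exp (-t))
      ≤ ∫ _t in Set.Ioc 0 x, x ^ k := h1
    _ = x ^ k * x := by
        rw [setIntegral_const, Measure.real, Real.volume_Ioc, ENNReal.toReal_ofReal (by linarith), smul_eq_mul]
        ring
    _ = x ^ (k + 1) := by ring

noncomputable def q (k : ℕ) (x : ℝ) : ℝ := uGamma ((k : ℝ) + 1) x / Real.Gamma ((k : ℝ) + 1)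

lemma gamma_pos (k : ℕ) : 0 < Real.Gamma ((k : ℝ) + 1) := Real.Gamma_pos_of_pos (by positivity)

lemma q_nonneg (k : ℕ) {x : ℝ} (hx : 0 < x) : 0 ≤ q k x :=
  div_nonneg (uGamma_nonneg k hx) (gamma_pos k).le

lemma q_le_one (k : ℕ) {x : ℝ} (hx : 0 < x) : q k x ≤ 1 := by
  rw [q, div_le_one (gamma_pos k)]
  nlinarith [uGamma_split k hx, lower_nonneg k hx]

lemma one_sub_q_le (k : ℕ) {x : ℝ} (hx : 0 < x) :
    1 - q k x ≤ x ^ (k + 1) / (k.factorial : ℝ) := by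
  have hfac : (0:ℝ) < (k.factorial : ℝ) := by positivity
  have hG : Real.Gamma ((k : ℝ) + 1) = (k.factorial : ℝ) := Real.Gamma_nat_eq_factorial k
  have hs := uGamma_split k hx
  rw [hG] at hs
  have h1 : 1 - q k x = (∫ t in Set.Ioc 0 x, t ^ (((k : ℝ) + 1) - 1) * Real.exp (-t)) / (k.factorial : ℝ) := by
    rw [q, hG]
    field_simp
    simp only [add_sub_cancel_right, Real.rpow_natCast] at hs ⊢
    linarith [hs]
  rw [h1]
  gcongr
  exact lower_le k hx

lemma q_zero {x : ℝ} (hx : 0 < x) : q 0 x = Real.exp (-x) := by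
  have : uGamma ((0 : ℕ) + 1 : ℝ) x = Real.exp (-x) := by
    rw [uGamma]
    have : (fun t : ℝ => t ^ ((((0:ℕ) : ℝ) + 1) - 1) * Real.exp (-t)) =ᵐ[volume.restrict (Set.Ioi x)]
        fun t => Real.exp (-t) := by
      filter_upwards [] with t
      norm_num
    rw [integral_congr_ae this, integral_exp_neg_Ioi]
  rw [q, this]
  norm_num [Real.Gamma_one]

lemma prod_ge_one_sub_sum (s : Finset ℕ) (f : ℕ → ℝ) (h0 : ∀ i ∈ s, 0 ≤ f i)
    (h1 : ∀ i ∈ s, f i ≤ 1) : 1 - ∑ i ∈ s, (1 - f i) ≤ ∏ i ∈ s, f i := by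
  induction s using Finset.cons_induction with
  | empty => simp
  | cons a s ha ih =>
    rw [Finset.prod_cons, Finset.sum_cons]
    have hfa0 := h0 a (Finset.mem_cons_self a s)
    have hfa1 := h1 a (Finset.mem_cons_self a s)
    have ihs := ih (fun i hi => h0 i (Finset.mem_cons_of_mem hi))
      (fun i hi => h1 i (Finset.mem_cons_of_mem hi))
    have hS : 0 ≤ ∑ i ∈ s, (1 - f i) :=
      Finset.sum_nonneg fun i hi => by linarith [h1 i (Finset.mem_cons_of_mem hi)]
    nlinarith [mul_le_mul_of_nonneg_left ihs hfa0]

lemma two_pow_le_fac (i : ℕ) : (2:ℝ) ^ i ≤ (((i+1).factorial : ℕ) : ℝ) := by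
  have : 2 ^ i ≤ (i+1).factorial := by
    induction i with
    | zero => simp
    | succ n ih =>
      calc 2 ^ (n+1) = 2 * 2 ^ n := by ring
        _ ≤ 2 * (n+1).factorial := by omega
        _ ≤ (n+2) * (n+1).factorial := by
            apply Nat.mul_le_mul_right; omega
        _ = (n+2).factorial := (Nat.factorial_succ (n+1)).symm
  calc (2:ℝ) ^ i = ((2 ^ i : ℕ) : ℝ) := by push_cast; ring
    _ ≤ _ := Nat.cast_le.2 this

lemma sum_tail_le {x : ℝ} (hx : 0 < x) (hx1 : x ≤ 1) (M : ℕ) :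
    ∑ i ∈ Finset.range M, (1 - q (i+1) x) ≤ 2 * x ^ 2 := by
  have h1 : ∀ i ∈ Finset.range M, 1 - q (i+1) x ≤ x ^ 2 * (1/2 : ℝ) ^ i := by
    intro i _
    have h := one_sub_q_le (i+1) hx
    have hfac := two_pow_le_fac i
    have hfpos : (0:ℝ) < ((i+1).factorial : ℝ) := by positivity
    have hxp : x ^ (i + 1 + 1) ≤ x ^ 2 := by
      calc x ^ (i+2) = x ^ 2 * x ^ i := by ring
        _ ≤ x ^ 2 * 1 := by
            apply mul_le_mul_of_nonneg_left _ (by positivity)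
            exact pow_le_one₀ hx.le hx1
        _ = x ^ 2 := mul_one _
    calc 1 - q (i+1) x ≤ x ^ (i+1+1) / ((i+1).factorial : ℝ) := h
      _ ≤ x ^ 2 / (2:ℝ) ^ i := by
          apply div_le_div₀ (by positivity) hxp (by positivity) hfac
      _ = x ^ 2 * (1/2:ℝ) ^ i := by
          rw [div_pow, one_pow]; ring
  calc ∑ i ∈ Finset.range M, (1 - q (i+1) x) ≤ ∑ i ∈ Finset.range M, x ^ 2 * (1/2:ℝ) ^ i :=
        Finset.sum_le_sum h1
    _ = x ^ 2 * ∑ i ∈ Finset.range M, (1/2:ℝ) ^ i := by rw [Finset.mul_sum]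
    _ ≤ x ^ 2 * 2 := by
        apply mul_le_mul_of_nonneg_left (sum_geometric_two_le M) (by positivity)
    _ = 2 * x ^ 2 := by ring

lemma key_lemma (r : ℝ) (hr : 0 < r) :
    ∃ L, Filter.Tendsto (fun N : ℕ => ∏ k ∈ Finset.range N,
        uGamma ((k : ℝ) + 1) (r ^ 2) / Real.Gamma ((k : ℝ) + 1)) Filter.atTop (nhds L) ∧
      (r ≤ 1 → Real.exp (-r ^ 2) * (1 - 2 * r ^ 4) ≤ L ∧ L ≤ Real.exp (-r ^ 2)) := by
  set x := r ^ 2 with hxdef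
  have hx : 0 < x := by positivity
  have hP : ∀ N, (fun N : ℕ => ∏ k ∈ Finset.range N,
      uGamma ((k : ℝ) + 1) x / Real.Gamma ((k : ℝ) + 1)) N = ∏ k ∈ Finset.range N, q k x := by
    intro N; rfl
  set P : ℕ → ℝ := fun N => ∏ k ∈ Finset.range N, q k x with hPdef
  have hPnn : ∀ N, 0 ≤ P N := fun N => Finset.prod_nonneg fun i _ => q_nonneg i hx
  have hanti : Antitone P := by
    apply antitone_nat_of_succ_le
    intro n
    rw [hPdef]
    simp only [Finset.prod_range_succ]
    exact mul_le_of_le_one_right (hPnn n) (q_le_one n hx)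
  have hbdd : BddBelow (Set.range P) := ⟨0, by rintro _ ⟨N, rfl⟩; exact hPnn N⟩
  refine ⟨⨅ N, P N, tendsto_atTop_ciInf hanti hbdd, ?_⟩
  intro hr1
  have hx1 : x ≤ 1 := by nlinarith
  have hub : ∀ M : ℕ, P (M + 1) ≤ Real.exp (-x) := by
    intro M
    rw [hPdef]
    simp only [Finset.prod_range_succ' (fun k => q k x) M]
    rw [q_zero hx]
    calc (∏ i ∈ Finset.range M, q (i+1) x) * Real.exp (-x)
        ≤ 1 * Real.exp (-x) := by
          apply mul_le_mul_of_nonneg_right _ (Real.exp_pos _).le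
          exact Finset.prod_le_one (fun i _ => q_nonneg (i+1) hx) (fun i _ => q_le_one (i+1) hx)
      _ = Real.exp (-x) := one_mul _
  have hlb : ∀ M : ℕ, Real.exp (-x) * (1 - 2 * x ^ 2) ≤ P (M + 1) := by
    intro M
    rw [hPdef]
    simp only [Finset.prod_range_succ' (fun k => q k x) M]
    rw [q_zero hx]
    have h1 : 1 - 2 * x ^ 2 ≤ ∏ i ∈ Finset.range M, q (i+1) x := by
      calc 1 - 2 * x ^ 2 ≤ 1 - ∑ i ∈ Finset.range M, (1 - q (i+1) x) := by
            linarith [sum_tail_le hx hx1 M]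
        _ ≤ ∏ i ∈ Finset.range M, q (i+1) x :=
            prod_ge_one_sub_sum _ _ (fun i _ => q_nonneg (i+1) hx) (fun i _ => q_le_one (i+1) hx)
    calc Real.exp (-x) * (1 - 2 * x ^ 2) = (1 - 2 * x ^ 2) * Real.exp (-x) := by ring
      _ ≤ (∏ i ∈ Finset.range M, q (i+1) x) * Real.exp (-x) :=
          mul_le_mul_of_nonneg_right h1 (Real.exp_pos _).le
  have hx4 : x ^ 2 = r ^ 4 := by rw [hxdef]; ring
  constructor
  · rw [← hx4]
    apply ge_of_tendsto (tendsto_atTop_ciInf hanti hbdd)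
    filter_upwards [Filter.eventually_atTop.2 ⟨1, fun N hN => hN⟩] with N hN
    obtain ⟨M, rfl⟩ := Nat.exists_eq_add_of_le hN
    rw [Nat.add_comm]; exact hlb M
  · apply le_of_tendsto (tendsto_atTop_ciInf hanti hbdd)
    filter_upwards [Filter.eventually_atTop.2 ⟨1, fun N hN => hN⟩] with N hN
    obtain ⟨M, rfl⟩ := Nat.exists_eq_add_of_le hN
    rw [Nat.add_comm]; exact hub M

/-- For the complex Ginibre ensemble, the left tail of the minimum-modulus distribution is
asymptotically Rayleigh(1/√2): with `F(r) = lim_{N} ∏_{k=0}^{N-1} Γ(k+1,r²)/Γ(k+1)` the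
limiting survival probability of `r_min`, one has `F(r) = e^{-r²}(1 + O(r⁴))` as `r → 0⁺`,
equivalently `lim_N P(r_min < r) = 1 - F(r) = 1 - e^{-r²}(1 - O(r⁴))`. -/
theorem ginibre_min_modulus_left_tail_rayleigh :
    ∃ F : ℝ → ℝ,
      (∀ r : ℝ, 0 < r →
        Filter.Tendsto
          (fun N : ℕ => ∏ k ∈ Finset.range N, uGamma ((k : ℝ) + 1) (r ^ 2) /
            Real.Gamma ((k : ℝ) + 1)) Filter.atTop (nhds (F r))) ∧
      (fun r : ℝ => F r - Real.exp (-r ^ 2)) =O[𝓝[>] (0 : ℝ)] (fun r : ℝ => r ^ 4) ∧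
      (fun r : ℝ => (1 - F r) - (1 - Real.exp (-r ^ 2)))
        =O[𝓝[>] (0 : ℝ)] (fun r : ℝ => r ^ 4) := by
  classical
  refine ⟨fun r => if h : 0 < r then (key_lemma r h).choose else 0, ?_, ?_, ?_⟩
  · intro r hr
    simp only [dif_pos hr]
    exact (key_lemma r hr).choose_spec.1
  · rw [Asymptotics.isBigO_iff]
    refine ⟨2, ?_⟩
    filter_upwards [Ioc_mem_nhdsGT_of_mem (Set.mem_Ico.2 ⟨le_refl (0:ℝ), one_pos⟩)] with r hr
    obtain ⟨hr0, hr1⟩ := hr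
    simp only [dif_pos hr0]
    obtain ⟨hl, hu⟩ := (key_lemma r hr0).choose_spec.2 hr1
    rw [Real.norm_eq_abs, Real.norm_eq_abs, abs_le]
    have he : Real.exp (-r ^ 2) ≤ 1 := Real.exp_le_one_iff.2 (neg_nonpos.2 (by positivity))
    have hr4 : (0:ℝ) ≤ r ^ 4 := by positivity
    have habs : |r ^ 4| = r ^ 4 := abs_of_nonneg hr4
    rw [habs]
    constructor
    · nlinarith [Real.exp_pos (-r ^ 2)]
    · nlinarith
  · rw [Asymptotics.isBigO_iff]
    refine ⟨2, ?_⟩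
    filter_upwards [Ioc_mem_nhdsGT_of_mem (Set.mem_Ico.2 ⟨le_refl (0:ℝ), one_pos⟩)] with r hr
    obtain ⟨hr0, hr1⟩ := hr
    simp only [dif_pos hr0]
    obtain ⟨hl, hu⟩ := (key_lemma r hr0).choose_spec.2 hr1
    rw [Real.norm_eq_abs, Real.norm_eq_abs, abs_le]
    have he : Real.exp (-r ^ 2) ≤ 1 := Real.exp_le_one_iff.2 (neg_nonpos.2 (by positivity))
    have hr4 : (0:ℝ) ≤ r ^ 4 := by positivity
    have habs : |r ^ 4| = r ^ 4 := abs_of_nonneg hr4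
    rw [habs]
    constructor
    · nlinarith
    · nlinarith [Real.exp_pos (-r ^ 2)]
end

section
/- For the complex Ginibre ensemble, the scaled minimum modulus satisfies a large deviation principle at speed N²/4 with rate function I(z) = z⁴: for fixed 0 < |λ| ≤ 1, lim_{N→∞} −(4/N²) log P(r_min^{(N)}(A)/√N ≥ |λ|) = |λ|⁴. -/
open MeasureTheory Real Filter Finset Topology Asymptotics

lemma integral_pow_mul_exp_neg (k : ℕ) {x : ℝ} (hx : 0 ≤ x) :
    ∫ t in Set.Ioi x, t ^ k * Real.exp (-t)
      = (∑ j ∈ Finset.range (k+1), ((k.factorial : ℝ)/(j.factorial : ℝ)) * x ^ j)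
          * Real.exp (-x) := by
  set p : ℝ → ℝ := fun t => ∑ j ∈ Finset.range (k+1), ((k.factorial : ℝ)/(j.factorial : ℝ)) * t ^ j with hp_def
  have he : ∀ t : ℝ, HasDerivAt (fun t : ℝ => Real.exp (-t)) (-Real.exp (-t)) t := by
    intro t
    exact ((Real.hasDerivAt_exp (-t)).comp t (hasDerivAt_neg t)).congr_deriv (by ring)
  have hderiv : ∀ t : ℝ, HasDerivAt (fun t => -(p t) * Real.exp (-t)) (t ^ k * Real.exp (-t)) t := by
    intro t
    have hp : HasDerivAt p
        (∑ j ∈ Finset.range (k+1), ((k.factorial : ℝ)/(j.factorial : ℝ)) * ((j : ℝ) * t ^ (j-1))) t := by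
      exact HasDerivAt.fun_sum fun j hj => (hasDerivAt_pow j t).const_mul _
    have h := (hp.neg.mul (he t))
    refine h.congr_deriv ?_
    have hsum2 : (∑ j ∈ Finset.range (k+1), ((k.factorial : ℝ)/(j.factorial : ℝ)) * ((j : ℝ) * t ^ (j-1)))
        = ∑ i ∈ Finset.range k, ((k.factorial : ℝ)/(i.factorial : ℝ)) * t ^ i := by
      rw [Finset.sum_range_succ']
      simp only [Nat.cast_zero, zero_mul, mul_zero, add_zero]
      refine Finset.sum_congr rfl fun i _ => ?_
      have : ((i+1).factorial : ℝ) = ((i:ℝ)+1) * (i.factorial : ℝ) := by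
        rw [Nat.factorial_succ]; push_cast; ring
      rw [this]
      have h1 : ((i:ℝ)+1) ≠ 0 := by positivity
      have h2 : (i.factorial : ℝ) ≠ 0 := by positivity
      field_simp
      rw [Nat.add_sub_cancel]; push_cast; ring
    have hsum1 : p t = (∑ i ∈ Finset.range k, ((k.factorial : ℝ)/(i.factorial : ℝ)) * t ^ i)
        + t ^ k := by
      rw [hp_def]
      simp only []
      rw [Finset.sum_range_succ, div_self (by positivity : (k.factorial : ℝ) ≠ 0), one_mul]
    simp only [Pi.neg_apply]
    rw [hsum2, hsum1]
    ring
  have hnonneg : ∀ t ∈ Set.Ioi x, 0 ≤ t ^ k * Real.exp (-t) := by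
    intro t ht
    have : (0:ℝ) ≤ t := hx.trans ht.le
    positivity
  have htend : Tendsto (fun t => -(p t) * Real.exp (-t)) atTop (𝓝 0) := by
    have : ∀ t : ℝ, -(p t) * Real.exp (-t)
        = ∑ j ∈ Finset.range (k+1), (-((k.factorial : ℝ)/(j.factorial : ℝ))) * (t ^ j * Real.exp (-t)) := by
      intro t
      simp only [hp_def, Finset.sum_mul, neg_mul, ← Finset.sum_neg_distrib]
      exact Finset.sum_congr rfl fun j _ => by ring
    rw [funext this]
    have := tendsto_finset_sum (Finset.range (k+1)) (fun j _ =>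
      ((Real.tendsto_pow_mul_exp_neg_atTop_nhds_zero j).const_mul (-((k.factorial : ℝ)/(j.factorial : ℝ)))))
    simpa using this
  have := integral_Ioi_of_hasDerivAt_of_nonneg' (g' := fun t => t ^ k * Real.exp (-t))
    (fun t _ => hderiv t) hnonneg htend
  rw [this]
  ring

lemma uGamma_ratio (k : ℕ) {x : ℝ} (hx : 0 ≤ x) :
    uGamma ((k : ℝ) + 1) x / Real.Gamma ((k : ℝ) + 1)
      = Real.exp (-x) * ∑ j ∈ Finset.range (k+1), x ^ j / (j.factorial : ℝ) := by
  have h1 : uGamma ((k : ℝ) + 1) x = ∫ t in Set.Ioi x, t ^ k * Real.exp (-t) := by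
    unfold uGamma
    refine integral_congr_ae (Filter.Eventually.of_forall fun t => ?_)
    simp only [add_sub_cancel_right]
    rw [Real.rpow_natCast]
  rw [h1, integral_pow_mul_exp_neg k hx, Real.Gamma_nat_eq_factorial]
  rw [Finset.sum_mul, Finset.sum_div, mul_comm (Real.exp (-x)), Finset.sum_mul]
  refine Finset.sum_congr rfl fun j _ => ?_
  have h2 : (k.factorial : ℝ) ≠ 0 := by positivity
  have h3 : (j.factorial : ℝ) ≠ 0 := by positivity
  field_simp

lemma log_succ_sub_log (m : ℕ) (hm : 1 ≤ m) :
    Real.log (m+1 : ℝ) - Real.log (m : ℝ) ≤ 1 / (m : ℝ) := by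
  have hm0 : (0:ℝ) < m := by exact_mod_cast hm
  have h := Real.log_le_sub_one_of_pos (x := ((m:ℝ)+1)/(m:ℝ)) (by positivity)
  rw [Real.log_div (by positivity) (ne_of_gt hm0)] at h
  have : ((m:ℝ)+1)/(m:ℝ) - 1 = 1/(m:ℝ) := by field_simp; ring
  push_cast
  linarith [this ▸ h]

lemma log_sub_log_succ (m : ℕ) (hm : 1 ≤ m) :
    1 / ((m : ℝ)+1) ≤ Real.log (m+1 : ℝ) - Real.log (m : ℝ) := by
  have hm0 : (0:ℝ) < m := by exact_mod_cast hm
  have h := Real.log_le_sub_one_of_pos (x := (m:ℝ)/((m:ℝ)+1)) (by positivity)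
  rw [Real.log_div (ne_of_gt hm0) (by positivity)] at h
  have : (m:ℝ)/((m:ℝ)+1) - 1 = -(1/((m:ℝ)+1)) := by field_simp; ring
  linarith [this ▸ h]

lemma logfact_upper : ∀ m : ℕ, 1 ≤ m →
    Real.log (m.factorial : ℝ) ≤ 1 + Real.log m + m * Real.log m - m := by
  intro m hm
  induction m, hm using Nat.le_induction with
  | base => simp
  | succ m hm ih =>
    have hm0 : (0:ℝ) < m := by exact_mod_cast hm
    have hfact : ((m+1).factorial : ℝ) = ((m:ℝ)+1) * (m.factorial : ℝ) := by
      rw [Nat.factorial_succ]; push_cast; ring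
    have hlog : Real.log ((m+1).factorial : ℝ)
        = Real.log ((m:ℝ)+1) + Real.log (m.factorial : ℝ) := by
      rw [hfact, Real.log_mul (by positivity) (by positivity)]
    have key := log_sub_log_succ m hm
    -- (m+1) log(m+1) ≥ m log m + log m + 1
    have key2 : (m:ℝ) * Real.log m + Real.log m + 1 ≤ ((m:ℝ)+1) * Real.log ((m:ℝ)+1) := by
      have h1 : ((m:ℝ)+1) * (Real.log ((m:ℝ)+1) - Real.log (m:ℝ)) ≥ 1 := by
        have := mul_le_mul_of_nonneg_left key (by positivity : (0:ℝ) ≤ (m:ℝ)+1)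
        rw [mul_one_div, div_self (by positivity)] at this
        push_cast at this ⊢
        linarith
      nlinarith
    push_cast at hlog ih ⊢
    rw [hlog]
    linarith

lemma logfact_lower : ∀ m : ℕ, 1 ≤ m →
    (m : ℝ) * Real.log m - m + 1 ≤ Real.log (m.factorial : ℝ) := by
  intro m hm
  induction m, hm using Nat.le_induction with
  | base => simp
  | succ m hm ih =>
    have hm0 : (0:ℝ) < m := by exact_mod_cast hm
    have hfact : ((m+1).factorial : ℝ) = ((m:ℝ)+1) * (m.factorial : ℝ) := by
      rw [Nat.factorial_succ]; push_cast; ring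
    have hlog : Real.log ((m+1).factorial : ℝ)
        = Real.log ((m:ℝ)+1) + Real.log (m.factorial : ℝ) := by
      rw [hfact, Real.log_mul (by positivity) (by positivity)]
    have key := log_succ_sub_log m hm
    have key2 : ((m:ℝ)+1) * Real.log ((m:ℝ)+1) ≤ (m:ℝ) * Real.log m + Real.log ((m:ℝ)+1) + 1 := by
      have h1 : (m:ℝ) * (Real.log ((m:ℝ)+1) - Real.log (m:ℝ)) ≤ 1 := by
        have := mul_le_mul_of_nonneg_left key (le_of_lt hm0)
        rw [mul_one_div, div_self (ne_of_gt hm0)] at this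
        push_cast at this ⊢
        linarith
      nlinarith
    push_cast at hlog ih ⊢
    rw [hlog]
    linarith

noncomputable def pS (x : ℝ) (k : ℕ) : ℝ := ∑ j ∈ Finset.range (k+1), x ^ j / (j.factorial : ℝ)

lemma pS_one_le {x : ℝ} (hx : 0 ≤ x) (k : ℕ) : 1 ≤ pS x k := by
  unfold pS
  have h0 : (0:ℕ) ∈ Finset.range (k+1) := by simp
  calc (1:ℝ) = x ^ 0 / ((0).factorial : ℝ) := by norm_num
  _ ≤ _ := Finset.single_le_sum (fun j _ => div_nonneg (pow_nonneg hx j) (Nat.cast_nonneg _)) h0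

lemma pS_pos {x : ℝ} (hx : 0 ≤ x) (k : ℕ) : 0 < pS x k :=
  lt_of_lt_of_le one_pos (pS_one_le hx k)

lemma term_le_pS {x : ℝ} (hx : 0 ≤ x) {j k : ℕ} (hjk : j ≤ k) :
    x ^ j / (j.factorial : ℝ) ≤ pS x k := by
  unfold pS
  exact Finset.single_le_sum (f := fun i => x ^ i / (i.factorial : ℝ)) (fun i _ => div_nonneg (pow_nonneg hx i) (Nat.cast_nonneg _)) (Finset.mem_range.2 (Nat.lt_succ_of_le hjk))

lemma pS_le_exp {x : ℝ} (hx : 0 ≤ x) (k : ℕ) : pS x k ≤ Real.exp x :=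
  Real.sum_le_exp_of_nonneg hx (k+1)

lemma term_mono {x : ℝ} (hx : 0 ≤ x) {j : ℕ} : ∀ k : ℕ, j ≤ k → (k : ℝ) ≤ x →
    x ^ j / (j.factorial : ℝ) ≤ x ^ k / (k.factorial : ℝ) := by
  intro k hjk
  induction k, hjk using Nat.le_induction with
  | base => exact fun _ => le_refl _
  | succ k hk ih =>
    intro hkx
    push_cast at hkx
    have hk1 : (k : ℝ) ≤ x := by linarith
    refine (ih hk1).trans ?_
    have hfac : (((k+1).factorial : ℝ)) = ((k:ℝ)+1) * (k.factorial : ℝ) := by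
      rw [Nat.factorial_succ]; push_cast; ring
    have heq : x ^ (k+1) / (((k+1).factorial : ℝ)) = (x / ((k:ℝ)+1)) * (x ^ k / (k.factorial : ℝ)) := by
      rw [hfac, pow_succ]
      have h1 : ((k:ℝ)+1) ≠ 0 := by positivity
      have h2 : ((k.factorial : ℝ)) ≠ 0 := by positivity
      field_simp
    rw [heq]
    have h1 : 1 ≤ x / ((k:ℝ)+1) := by
      rw [le_div_iff₀ (show (0:ℝ) < (k:ℝ)+1 by positivity)]
      linarith
    nlinarith [div_nonneg (pow_nonneg hx k) (le_of_lt ((Nat.cast_pos (α := ℝ)).2 k.factorial_pos))]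

lemma pS_le_of_le {x : ℝ} (hx : 0 ≤ x) {k : ℕ} (hk : (k : ℝ) ≤ x) :
    pS x k ≤ ((k:ℝ)+1) * (x ^ k / (k.factorial : ℝ)) := by
  unfold pS
  have := Finset.sum_le_card_nsmul (Finset.range (k+1)) (fun j => x ^ j / (j.factorial : ℝ))
    (x ^ k / (k.factorial : ℝ)) (fun j hj => term_mono hx k (Nat.lt_succ_iff.1 (Finset.mem_range.1 hj)) hk)
  simpa [Finset.card_range, nsmul_eq_mul, add_comm] using this

lemma log_pS_lower {x : ℝ} (hx : 0 < x) (k : ℕ) :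
    (k : ℝ) * Real.log x - Real.log (k.factorial : ℝ) ≤ Real.log (pS x k) := by
  have h := term_le_pS hx.le (le_refl k)
  have h2 : Real.log (x ^ k / (k.factorial : ℝ)) = (k:ℝ) * Real.log x - Real.log (k.factorial : ℝ) := by
    rw [Real.log_div (by positivity) (by positivity), Real.log_pow]
  rw [← h2]
  exact Real.log_le_log (by positivity) h

lemma log_pS_upper_exp {x : ℝ} (hx : 0 ≤ x) (k : ℕ) : Real.log (pS x k) ≤ x := by
  calc Real.log (pS x k) ≤ Real.log (Real.exp x) :=
        Real.log_le_log (pS_pos hx k) (pS_le_exp hx k)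
  _ = x := Real.log_exp x

lemma log_pS_upper {x : ℝ} (hx : 0 < x) {k : ℕ} (hk : (k : ℝ) ≤ x) :
    Real.log (pS x k) ≤ Real.log ((k:ℝ)+1) + ((k : ℝ) * Real.log x - Real.log (k.factorial : ℝ)) := by
  have h := pS_le_of_le hx.le hk
  have h2 : Real.log (((k:ℝ)+1) * (x ^ k / (k.factorial : ℝ)))
      = Real.log ((k:ℝ)+1) + ((k:ℝ) * Real.log x - Real.log (k.factorial : ℝ)) := by
    rw [Real.log_mul (by positivity) (by positivity), Real.log_div (by positivity) (by positivity),
      Real.log_pow]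
  rw [← h2]
  exact Real.log_le_log (pS_pos hx.le k) h

lemma gauss_sum_cast (p : ℕ) :
    ∑ k ∈ Finset.range (p+1), (k:ℝ) = ((p:ℝ)+1)*(p:ℝ)/2 := by
  induction p with
  | zero => simp
  | succ p ih =>
    rw [Finset.sum_range_succ, ih]
    push_cast
    ring

lemma sum_logfact_identity (p : ℕ) :
    ∑ k ∈ Finset.range (p+1), Real.log (k.factorial : ℝ)
      = ((p:ℝ)+1) * Real.log (p.factorial : ℝ)
        - ∑ j ∈ Finset.range (p+1), (j:ℝ) * Real.log (j:ℝ) := by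
  induction p with
  | zero => simp
  | succ p ih =>
    have hfact : Real.log (((p+1).factorial : ℝ))
        = Real.log ((p:ℝ)+1) + Real.log ((p.factorial : ℝ)) := by
      rw [Nat.factorial_succ]
      push_cast
      rw [Real.log_mul (by positivity) (by positivity)]
    rw [Finset.sum_range_succ, Finset.sum_range_succ (f := fun j => (j:ℝ) * Real.log (j:ℝ)), ih,
      hfact]
    push_cast
    ring

lemma integral_t_log_t {b : ℝ} (hb : 1 ≤ b) :
    ∫ t in (1:ℝ)..b, t * Real.log t = b^2/2 * Real.log b - b^2/4 + 1/4 := by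
  have huIcc : Set.uIcc (1:ℝ) b = Set.Icc 1 b := Set.uIcc_of_le hb
  have hderiv : ∀ t ∈ Set.uIcc (1:ℝ) b,
      HasDerivAt (fun t : ℝ => t^2/2 * Real.log t - t^2/4) (t * Real.log t) t := by
    intro t ht
    rw [huIcc] at ht
    have ht0 : 0 < t := lt_of_lt_of_le one_pos ht.1
    have h1 : HasDerivAt (fun t : ℝ => t^2/2 * Real.log t)
        ((2 * t / 2) * Real.log t + t^2/2 * (1/t)) t := by
      have := (((hasDerivAt_pow 2 t).div_const 2).mul (Real.hasDerivAt_log (ne_of_gt ht0)))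
      refine this.congr_deriv ?_
      push_cast
      ring_nf
    have h2 : HasDerivAt (fun t : ℝ => t^2/4) (2 * t / 4) t := by
      have := (hasDerivAt_pow 2 t).div_const 4
      refine this.congr_deriv ?_
      push_cast
      ring
    have := h1.sub h2
    refine this.congr_deriv ?_
    field_simp
    ring
  have hint : IntervalIntegrable (fun t : ℝ => t * Real.log t) volume 1 b := by
    apply ContinuousOn.intervalIntegrable
    rw [huIcc]
    exact continuousOn_id.mul (Real.continuousOn_log.mono (fun t ht => ne_of_gt (lt_of_lt_of_le one_pos ht.1)))
  have := intervalIntegral.integral_eq_sub_of_hasDerivAt hderiv hint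
  rw [this]
  norm_num

lemma D_upper (p : ℕ) :
    ∑ j ∈ Finset.range (p+1), (j:ℝ) * Real.log (j:ℝ)
      ≤ ((p:ℝ)+1)^2/2 * Real.log ((p:ℝ)+1) - ((p:ℝ)+1)^2/4 + 1/4 := by
  have hmono : MonotoneOn (fun t : ℝ => t * Real.log t) (Set.Icc (1:ℝ) (1 + (p:ℕ))) := by
    intro a ha b hb hab
    have ha1 : (1:ℝ) ≤ a := ha.1
    have hb1 : (1:ℝ) ≤ b := hb.1
    exact mul_le_mul hab (Real.log_le_log (by linarith) hab) (Real.log_nonneg ha1) (by linarith)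
  have h := hmono.sum_le_integral
  have hsum : ∑ i ∈ Finset.range p, ((1:ℝ) + (i:ℕ)) * Real.log ((1:ℝ) + (i:ℕ))
      = ∑ j ∈ Finset.range (p+1), (j:ℝ) * Real.log (j:ℝ) := by
    rw [Finset.sum_range_succ' (f := fun j => (j:ℝ) * Real.log (j:ℝ))]
    simp only [Nat.cast_zero, zero_mul, add_zero]
    refine Finset.sum_congr rfl fun i _ => ?_
    push_cast
    rw [add_comm]
  have hint : ∫ x in (1:ℝ)..(1 + (p:ℕ)), x * Real.log x
      = ((p:ℝ)+1)^2/2 * Real.log ((p:ℝ)+1) - ((p:ℝ)+1)^2/4 + 1/4 := by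
    have h1 : (1:ℝ) + (p:ℕ) = (p:ℝ) + 1 := by push_cast; ring
    rw [h1, integral_t_log_t (by push_cast; linarith [Nat.cast_nonneg (α := ℝ) p])]
  rw [← hsum, ← hint]
  exact h

lemma D_lower (p : ℕ) :
    ((p:ℝ)+1)^2/2 * Real.log ((p:ℝ)+1) - ((p:ℝ)+1)^2/4 + 1/4
      ≤ (∑ j ∈ Finset.range (p+1), (j:ℝ) * Real.log (j:ℝ)) + ((p:ℝ)+1) * Real.log ((p:ℝ)+1) := by
  set g : ℕ → ℝ := fun j => (j:ℝ) * Real.log (j:ℝ) with hg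
  have hmono : MonotoneOn (fun t : ℝ => t * Real.log t) (Set.Icc (1:ℝ) (1 + (p:ℕ))) := by
    intro a ha b hb hab
    have ha1 : (1:ℝ) ≤ a := ha.1
    have hb1 : (1:ℝ) ≤ b := hb.1
    exact mul_le_mul hab (Real.log_le_log (by linarith) hab) (Real.log_nonneg ha1) (by linarith)
  have h := hmono.integral_le_sum
  have hsum : ∑ i ∈ Finset.range p, ((1:ℝ) + ((i+1:ℕ):ℝ)) * Real.log ((1:ℝ) + ((i+1:ℕ):ℝ))
      = ∑ i ∈ Finset.range p, g (i+2) := by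
    refine Finset.sum_congr rfl fun i _ => ?_
    rw [hg]
    push_cast
    ring_nf
  have e1 : ∑ i ∈ Finset.range p, g (i+2)
      = (∑ j ∈ Finset.range (p+1), g j) + g (p+1) - g 1 - g 0 := by
    have h2 := Finset.sum_range_succ' g (p+1)
    have h3 := Finset.sum_range_succ' (fun i => g (i+1)) p
    have h4 := Finset.sum_range_succ g (p+1)
    have : ∀ i : ℕ, g (i + 1 + 1) = g (i + 2) := fun i => by norm_num
    simp only [this] at h3
    linarith [h2, h3, h4]
  have hg1 : g 1 = 0 := by simp [hg]
  have hg0 : g 0 = 0 := by simp [hg]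
  have hint : ∫ x in (1:ℝ)..(1 + (p:ℕ)), x * Real.log x
      = ((p:ℝ)+1)^2/2 * Real.log ((p:ℝ)+1) - ((p:ℝ)+1)^2/4 + 1/4 := by
    have h1 : (1:ℝ) + (p:ℕ) = (p:ℝ) + 1 := by push_cast; ring
    rw [h1, integral_t_log_t (by linarith [Nat.cast_nonneg (α := ℝ) p])]
  rw [hint, hsum, e1, hg1, hg0] at h
  have hgp : g (p+1) = ((p:ℝ)+1) * Real.log ((p:ℝ)+1) := by rw [hg]; push_cast; ring_nf
  rw [hgp] at h
  linarith
noncomputable def xv (c : ℝ) (N : ℕ) : ℝ := (N:ℝ) * c^2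
noncomputable def mv (c : ℝ) (N : ℕ) : ℝ := (⌊xv c N⌋₊ : ℝ)

noncomputable def TT (c : ℝ) (N : ℕ) : ℝ := ∑ k ∈ Finset.range N, Real.log (pS (xv c N) k)

noncomputable def coreF (c : ℝ) (N : ℕ) : ℝ :=
  ((N:ℝ) - mv c N) * xv c N
  + (mv c N * (mv c N - 1)/2) * (Real.log (xv c N) - Real.log (mv c N - 1))
  + (mv c N * (mv c N - 1)/2) * (Real.log (mv c N) - Real.log (mv c N - 1))
  + (mv c N/2) * Real.log (mv c N)
  + mv c N * (mv c N - 1) - (mv c N)^2/4 + 1/4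

noncomputable def lowF (c : ℝ) (N : ℕ) : ℝ :=
  coreF c N - ((N:ℝ) - mv c N) * (2 + Real.log (xv c N)) - mv c N
    - mv c N * Real.log (mv c N - 1) - mv c N * Real.log (mv c N)

noncomputable def highF (c : ℝ) (N : ℕ) : ℝ :=
  coreF c N + mv c N * Real.log ((N:ℝ)+1) - mv c N

lemma TT_bounds (c : ℝ) (hc0 : 0 < c) (hc1 : c ≤ 1) {N : ℕ} (hN : 2 ≤ xv c N) :
    lowF c N ≤ TT c N ∧ TT c N ≤ highF c N := by
  set x : ℝ := xv c N with hxdef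
  have hx0 : 0 < x := by linarith
  have hc2 : c^2 ≤ 1 := by nlinarith
  have hxN : x ≤ (N:ℝ) := by
    rw [hxdef, xv]
    nlinarith [Nat.cast_nonneg (α := ℝ) N]
  set m : ℕ := ⌊x⌋₊ with hmdef
  have hmv : mv c N = (m:ℝ) := rfl
  have hm2 : 2 ≤ m := Nat.le_floor (by exact_mod_cast hN)
  have hmx : (m:ℝ) ≤ x := Nat.floor_le hx0.le
  have hxm1 : x < (m:ℝ) + 1 := Nat.lt_floor_add_one x
  have hmN : m ≤ N := by
    have : (m:ℝ) ≤ (N:ℝ) := hmx.trans hxN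
    exact_mod_cast this
  obtain ⟨p, hp⟩ : ∃ p, m = p + 1 := ⟨m - 1, by omega⟩
  have hp1 : 1 ≤ p := by omega
  have hp0 : (0:ℝ) < (p:ℝ) := by exact_mod_cast hp1
  have hmp : (m:ℝ) = (p:ℝ) + 1 := by rw [hp]; push_cast; ring
  have hm0 : (0:ℝ) < (m:ℝ) := by rw [hmp]; linarith
  -- split the sum
  have hsplit : TT c N = (∑ k ∈ Finset.range m, Real.log (pS x k))
      + ∑ k ∈ Finset.Ico m N, Real.log (pS x k) := by
    rw [TT, ← hxdef, Finset.range_eq_Ico, Finset.range_eq_Ico]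
    exact (Finset.sum_Ico_consecutive (fun k => Real.log (pS x k)) (Nat.zero_le m) hmN).symm
  -- notation for logs
  set lx : ℝ := Real.log x with hlx
  set lp : ℝ := Real.log (p:ℝ) with hlp
  set lm : ℝ := Real.log ((p:ℝ)+1) with hlm
  have hlplx : lp ≤ lx := Real.log_le_log hp0 (by rw [hmp] at hmx; linarith)
  have hlmlx : lm ≤ lx := Real.log_le_log (by linarith) (by rw [hmp] at hmx; linarith)
  have hlp0 : 0 ≤ lp := Real.log_nonneg (by exact_mod_cast hp1)
  have hlm0 : 0 ≤ lm := Real.log_nonneg (by linarith)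
  have hlx0 : 0 ≤ lx := Real.log_nonneg (by linarith)
  -- first part: sum over range m
  set Lsum : ℝ := ∑ k ∈ Finset.range m, ((k:ℝ) * lx - Real.log (k.factorial : ℝ)) with hLsum
  have hlow1 : Lsum ≤ ∑ k ∈ Finset.range m, Real.log (pS x k) :=
    Finset.sum_le_sum fun k _ => log_pS_lower hx0 k
  have hup1 : (∑ k ∈ Finset.range m, Real.log (pS x k))
      ≤ Lsum + (m:ℝ) * Real.log ((N:ℝ)+1) := by
    have h1 : (∑ k ∈ Finset.range m, Real.log (pS x k))
        ≤ ∑ k ∈ Finset.range m, (Real.log ((k:ℝ)+1) + ((k:ℝ) * lx - Real.log (k.factorial : ℝ))) := by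
      refine Finset.sum_le_sum fun k hk => ?_
      have hkm : k < m := Finset.mem_range.1 hk
      have hkx : (k:ℝ) ≤ x := le_trans (by exact_mod_cast hkm.le) hmx
      exact log_pS_upper hx0 hkx
    rw [Finset.sum_add_distrib] at h1
    have h2 : (∑ k ∈ Finset.range m, Real.log ((k:ℝ)+1)) ≤ (m:ℝ) * Real.log ((N:ℝ)+1) := by
      have := Finset.sum_le_card_nsmul (Finset.range m) (fun k => Real.log ((k:ℝ)+1))
        (Real.log ((N:ℝ)+1)) (fun k hk => by
          refine Real.log_le_log (by positivity) ?_
          have : k < m := Finset.mem_range.1 hk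
          have : (k:ℝ) ≤ (N:ℝ) := by exact_mod_cast (le_trans this.le hmN)
          linarith)
      simpa [Finset.card_range, nsmul_eq_mul] using this
    linarith
  -- closed form estimates for Lsum
  have hLeq : Lsum = (((p:ℝ)+1)*(p:ℝ)/2) * lx - (((p:ℝ)+1) * Real.log (p.factorial : ℝ)
      - ∑ j ∈ Finset.range (p+1), (j:ℝ) * Real.log (j:ℝ)) := by
    rw [hLsum, Finset.sum_sub_distrib, ← Finset.sum_mul, hp, gauss_sum_cast, sum_logfact_identity]
  have hF1 : (p:ℝ) * lp - (p:ℝ) + 1 ≤ Real.log (p.factorial : ℝ) := logfact_lower p hp1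
  have hF2 : Real.log (p.factorial : ℝ) ≤ 1 + lp + (p:ℝ) * lp - (p:ℝ) := logfact_upper p hp1
  have hD2 : (∑ j ∈ Finset.range (p+1), (j:ℝ) * Real.log (j:ℝ))
      ≤ ((p:ℝ)+1)^2/2 * lm - ((p:ℝ)+1)^2/4 + 1/4 := D_upper p
  have hD1 : ((p:ℝ)+1)^2/2 * lm - ((p:ℝ)+1)^2/4 + 1/4 - ((p:ℝ)+1) * lm
      ≤ ∑ j ∈ Finset.range (p+1), (j:ℝ) * Real.log (j:ℝ) := by
    have := D_lower p
    linarith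
  have hFmul1 : ((p:ℝ)+1) * ((p:ℝ) * lp - (p:ℝ) + 1) ≤ ((p:ℝ)+1) * Real.log (p.factorial : ℝ) :=
    mul_le_mul_of_nonneg_left hF1 (by positivity)
  have hFmul2 : ((p:ℝ)+1) * Real.log (p.factorial : ℝ) ≤ ((p:ℝ)+1) * (1 + lp + (p:ℝ) * lp - (p:ℝ)) :=
    mul_le_mul_of_nonneg_left hF2 (by positivity)
  -- second part: sum over Ico m N
  have hcard : ((Finset.Ico m N).card : ℝ) = (N:ℝ) - (m:ℝ) := by
    rw [Nat.card_Ico, Nat.cast_sub hmN]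
  have hup2 : (∑ k ∈ Finset.Ico m N, Real.log (pS x k)) ≤ ((N:ℝ) - (m:ℝ)) * x := by
    have := Finset.sum_le_card_nsmul (Finset.Ico m N) (fun k => Real.log (pS x k)) x
      (fun k _ => log_pS_upper_exp hx0.le k)
    rw [nsmul_eq_mul, hcard] at this
    exact this
  have hlow2 : ((N:ℝ) - (m:ℝ)) * (x - 2 - lx) ≤ ∑ k ∈ Finset.Ico m N, Real.log (pS x k) := by
    have hterm : ∀ k ∈ Finset.Ico m N, x - 2 - lx ≤ Real.log (pS x k) := by
      intro k hk
      have hmk : m ≤ k := (Finset.mem_Ico.1 hk).1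
      have h1 : x ^ m / (m.factorial : ℝ) ≤ pS x k := term_le_pS hx0.le hmk
      have h2 : (m:ℝ) * lx - Real.log (m.factorial : ℝ) ≤ Real.log (pS x k) := by
        have h3 : Real.log (x ^ m / (m.factorial : ℝ))
            = (m:ℝ) * lx - Real.log (m.factorial : ℝ) := by
          rw [Real.log_div (by positivity) (by positivity), Real.log_pow, hlx]
        rw [← h3]
        exact Real.log_le_log (by positivity) h1
      have hFm : Real.log (m.factorial : ℝ) ≤ 1 + Real.log (m:ℝ) + (m:ℝ) * Real.log (m:ℝ) - (m:ℝ) :=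
        logfact_upper m (by omega)
      have hlogm_le : Real.log (m:ℝ) ≤ lx := Real.log_le_log hm0 hmx
      have hmono : (m:ℝ) * Real.log (m:ℝ) ≤ (m:ℝ) * lx :=
        mul_le_mul_of_nonneg_left hlogm_le (by positivity)
      have hm_ge : x - 1 ≤ (m:ℝ) := by linarith
      -- m*lx - log m! ≥ m*lx - 1 - log m - m*log m + m ≥ x - 2 - lx
      have hlogm_0 : 0 ≤ Real.log (m:ℝ) := Real.log_nonneg (by exact_mod_cast (by omega : 1 ≤ m))
      linarith only [h2, hFm, hmono, hm_ge, hlogm_le]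
    have := Finset.card_nsmul_le_sum (Finset.Ico m N) (fun k => Real.log (pS x k)) (x - 2 - lx) hterm
    rw [nsmul_eq_mul, hcard] at this
    exact this
  -- combine
  have hNm : (m:ℝ) ≤ (N:ℝ) := by exact_mod_cast hmN
  have hGlow : (((p:ℝ)+1)*(p:ℝ)/2) * lx - (((p:ℝ)+1) * (1 + lp + (p:ℝ) * lp - (p:ℝ)))
      + (((p:ℝ)+1)^2/2 * lm - ((p:ℝ)+1)^2/4 + 1/4 - ((p:ℝ)+1) * lm) ≤ Lsum := by
    linarith only [hLeq, hFmul2, hD1]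
  have hGhigh : Lsum ≤ (((p:ℝ)+1)*(p:ℝ)/2) * lx - (((p:ℝ)+1) * ((p:ℝ) * lp - (p:ℝ) + 1))
      + (((p:ℝ)+1)^2/2 * lm - ((p:ℝ)+1)^2/4 + 1/4) := by
    linarith only [hLeq, hFmul1, hD2]
  constructor
  · -- lowF ≤ TT
    have heq : lowF c N = (((p:ℝ)+1)*(p:ℝ)/2) * lx
        - (((p:ℝ)+1) * (1 + lp + (p:ℝ) * lp - (p:ℝ)))
        + (((p:ℝ)+1)^2/2 * lm - ((p:ℝ)+1)^2/4 + 1/4 - ((p:ℝ)+1) * lm)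
        + ((N:ℝ) - (m:ℝ)) * (x - 2 - lx) := by
      simp only [lowF, coreF]
      rw [← hxdef, hmv, hmp, ← hlx, ← hlm]
      have h9 : (p:ℝ) + 1 - 1 = (p:ℝ) := by ring
      rw [h9, ← hlp]
      ring
    rw [hsplit, heq]
    linarith only [hGlow, hlow1, hlow2]
  · -- TT ≤ highF
    have heq : highF c N = (((p:ℝ)+1)*(p:ℝ)/2) * lx
        - (((p:ℝ)+1) * ((p:ℝ) * lp - (p:ℝ) + 1))
        + (((p:ℝ)+1)^2/2 * lm - ((p:ℝ)+1)^2/4 + 1/4)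
        + ((N:ℝ) - (m:ℝ)) * x + (m:ℝ) * Real.log ((N:ℝ)+1) := by
      simp only [highF, coreF]
      rw [← hxdef, hmv, hmp, ← hlx, ← hlm]
      have h9 : (p:ℝ) + 1 - 1 = (p:ℝ) := by ring
      rw [h9, ← hlp]
      ring
    rw [hsplit, heq]
    linarith only [hGhigh, hup1, hup2]
lemma aux_sq {a n : ℝ} (hn : 1 ≤ n) (h0 : 0 ≤ a) (han : a ≤ n) : |a / n^2| ≤ 1/n := by
  have hn0 : 0 < n := by linarith
  rw [abs_of_nonneg (div_nonneg h0 (by positivity)), div_le_div_iff₀ (by positivity) hn0]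
  nlinarith

lemma aux_sq' {a n L : ℝ} (hn : 1 ≤ n) (h0 : 0 ≤ a) (hL : 0 ≤ L) (han : a ≤ n * L) :
    |a / n^2| ≤ L/n := by
  have hn0 : 0 < n := by linarith
  rw [abs_of_nonneg (div_nonneg h0 (by positivity)), div_le_div_iff₀ (by positivity) hn0]
  nlinarith

lemma log_div_nat_tendsto :
    Tendsto (fun N : ℕ => Real.log ((N:ℝ)+1) / (N:ℝ)) atTop (𝓝 0) := by
  have h1 : Tendsto (fun y : ℝ => Real.log y / y) atTop (𝓝 0) :=
    Real.isLittleO_log_id_atTop.tendsto_div_nhds_zero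
  have h2 : Tendsto (fun N : ℕ => (N:ℝ)+1) atTop atTop :=
    tendsto_atTop_add_const_right _ 1 tendsto_natCast_atTop_atTop
  have h3 : Tendsto (fun N : ℕ => Real.log ((N:ℝ)+1) / ((N:ℝ)+1)) atTop (𝓝 0) := h1.comp h2
  apply squeeze_zero_norm' (a := fun N : ℕ => 2 * (Real.log ((N:ℝ)+1) / ((N:ℝ)+1)))
  · filter_upwards [eventually_ge_atTop 1] with N hN
    have hn : (1:ℝ) ≤ (N:ℝ) := by exact_mod_cast hN
    have hn0 : (0:ℝ) < (N:ℝ) := by linarith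
    have hl : 0 ≤ Real.log ((N:ℝ)+1) := Real.log_nonneg (by linarith)
    rw [Real.norm_eq_abs, abs_of_nonneg (div_nonneg hl hn0.le)]
    have h4 : 2 * (Real.log ((N:ℝ)+1)/((N:ℝ)+1)) = (2*Real.log ((N:ℝ)+1))/((N:ℝ)+1) := by ring
    rw [h4, div_le_div_iff₀ hn0 (by linarith : (0:ℝ) < (N:ℝ)+1)]
    nlinarith
  · simpa using h3.const_mul 2

lemma xv_tendsto (c : ℝ) (hc0 : 0 < c) : Tendsto (fun N : ℕ => xv c N) atTop atTop := by
  unfold xv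
  exact Tendsto.atTop_mul_const (by positivity) tendsto_natCast_atTop_atTop

lemma basic_facts (c : ℝ) (hc0 : 0 < c) (hc1 : c ≤ 1) {N : ℕ} (hN1 : 1 ≤ N) (hN : 2 ≤ xv c N) :
    2 ≤ mv c N ∧ mv c N ≤ xv c N ∧ xv c N < mv c N + 1 ∧ mv c N ≤ (N:ℝ)
      ∧ xv c N ≤ (N:ℝ) ∧ 1 ≤ (N:ℝ) := by
  have hx0 : (0:ℝ) < xv c N := by linarith
  have hc2 : c^2 ≤ 1 := by nlinarith
  have hn1 : (1:ℝ) ≤ (N:ℝ) := by exact_mod_cast hN1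
  have hxN : xv c N ≤ (N:ℝ) := by
    rw [xv]; nlinarith
  refine ⟨?_, Nat.floor_le hx0.le, Nat.lt_floor_add_one _, ?_, hxN, hn1⟩
  · have h9 : (2:ℕ) ≤ ⌊xv c N⌋₊ := Nat.le_floor (by exact_mod_cast hN)
    show (2:ℝ) ≤ ((⌊xv c N⌋₊ : ℕ) : ℝ)
    exact_mod_cast h9
  · exact le_trans (Nat.floor_le hx0.le) hxN

lemma m_div_tendsto (c : ℝ) (hc0 : 0 < c) (hc1 : c ≤ 1) :
    Tendsto (fun N : ℕ => mv c N / (N:ℝ)) atTop (𝓝 (c^2)) := by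
  have hev := (xv_tendsto c hc0).eventually_ge_atTop 2
  apply tendsto_of_tendsto_of_tendsto_of_le_of_le'
    (g := fun N : ℕ => c^2 - 1/(N:ℝ)) (h := fun _ : ℕ => c^2)
  · simpa using tendsto_const_nhds.sub (tendsto_one_div_atTop_nhds_zero_nat (𝕜 := ℝ))
  · exact tendsto_const_nhds
  · filter_upwards [hev, eventually_ge_atTop 1] with N hN hN1
    obtain ⟨h2m, hmx, hxm, hmn, hxn, hn1⟩ := basic_facts c hc0 hc1 hN1 hN
    have hn0 : (0:ℝ) < (N:ℝ) := by linarith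
    have hxv : xv c N = (N:ℝ) * c^2 := rfl
    rw [sub_le_iff_le_add, ← add_div, le_div_iff₀ hn0]
    nlinarith [hxm]
  · filter_upwards [hev, eventually_ge_atTop 1] with N hN hN1
    obtain ⟨h2m, hmx, hxm, hmn, hxn, hn1⟩ := basic_facts c hc0 hc1 hN1 hN
    have hn0 : (0:ℝ) < (N:ℝ) := by linarith
    have hxv : xv c N = (N:ℝ) * c^2 := rfl
    rw [div_le_iff₀ hn0]
    nlinarith [hmx]
lemma core_div_tendsto (c : ℝ) (hc0 : 0 < c) (hc1 : c ≤ 1) :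
    Tendsto (fun N : ℕ => coreF c N / (N:ℝ)^2) atTop (𝓝 (c^2 - c^4/4)) := by
  have hu := m_div_tendsto c hc0 hc1
  have hv : Tendsto (fun N : ℕ => 1/(N:ℝ)) atTop (𝓝 0) := tendsto_one_div_atTop_nhds_zero_nat
  have hev := (xv_tendsto c hc0).eventually_ge_atTop 2
  have tE2 : Tendsto (fun N : ℕ => (mv c N * (mv c N - 1)/2)
      * (Real.log (xv c N) - Real.log (mv c N - 1)) / (N:ℝ)^2) atTop (𝓝 0) := by
    apply squeeze_zero_norm' (a := fun N : ℕ => 1/(N:ℝ)) _ hv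
    filter_upwards [hev, eventually_ge_atTop 1] with N hN hN1
    obtain ⟨h2m, hmx, hxm, hmn, hxn, hn1⟩ := basic_facts c hc0 hc1 hN1 hN
    have hM1 : (1:ℝ) ≤ mv c N - 1 := by linarith
    have hd0 : 0 ≤ Real.log (xv c N) - Real.log (mv c N - 1) :=
      sub_nonneg.2 (Real.log_le_log (by linarith) (by linarith))
    have hd2 : Real.log (xv c N) - Real.log (mv c N - 1) ≤ 2/(mv c N - 1) := by
      rw [← Real.log_div (by linarith) (by linarith)]
      have h5 := Real.log_le_sub_one_of_pos
        (show (0:ℝ) < xv c N/(mv c N - 1) by positivity)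
      have h6 : xv c N/(mv c N - 1) - 1 ≤ 2/(mv c N - 1) := by
        rw [div_sub_one (by linarith : mv c N - 1 ≠ 0), div_le_div_iff₀ (by linarith) (by linarith)]
        nlinarith
      linarith
    have ha0 : 0 ≤ mv c N * (mv c N - 1)/2 * (Real.log (xv c N) - Real.log (mv c N - 1)) := by
      apply mul_nonneg _ hd0
      nlinarith
    have haN : mv c N * (mv c N - 1)/2 * (Real.log (xv c N) - Real.log (mv c N - 1)) ≤ (N:ℝ) := by
      have h7 := mul_le_mul_of_nonneg_left hd2 (show 0 ≤ mv c N * (mv c N - 1)/2 by nlinarith)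
      have heq : mv c N * (mv c N - 1)/2 * (2/(mv c N - 1)) = mv c N := by
        field_simp
      rw [heq] at h7
      linarith
    rw [Real.norm_eq_abs]
    exact aux_sq hn1 ha0 haN
  have tE3 : Tendsto (fun N : ℕ => (mv c N * (mv c N - 1)/2)
      * (Real.log (mv c N) - Real.log (mv c N - 1)) / (N:ℝ)^2) atTop (𝓝 0) := by
    apply squeeze_zero_norm' (a := fun N : ℕ => 1/(N:ℝ)) _ hv
    filter_upwards [hev, eventually_ge_atTop 1] with N hN hN1
    obtain ⟨h2m, hmx, hxm, hmn, hxn, hn1⟩ := basic_facts c hc0 hc1 hN1 hN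
    have hM1 : (1:ℝ) ≤ mv c N - 1 := by linarith
    have hd0 : 0 ≤ Real.log (mv c N) - Real.log (mv c N - 1) :=
      sub_nonneg.2 (Real.log_le_log (by linarith) (by linarith))
    have hd2 : Real.log (mv c N) - Real.log (mv c N - 1) ≤ 1/(mv c N - 1) := by
      rw [← Real.log_div (by linarith) (by linarith)]
      have h5 := Real.log_le_sub_one_of_pos
        (show (0:ℝ) < mv c N/(mv c N - 1) by positivity)
      have h6 : mv c N/(mv c N - 1) - 1 ≤ 1/(mv c N - 1) := by
        rw [div_sub_one (by linarith : mv c N - 1 ≠ 0), div_le_div_iff₀ (by linarith) (by linarith)]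
        nlinarith
      linarith
    have ha0 : 0 ≤ mv c N * (mv c N - 1)/2 * (Real.log (mv c N) - Real.log (mv c N - 1)) := by
      apply mul_nonneg _ hd0
      nlinarith
    have haN : mv c N * (mv c N - 1)/2 * (Real.log (mv c N) - Real.log (mv c N - 1)) ≤ (N:ℝ) := by
      have h7 := mul_le_mul_of_nonneg_left hd2 (show 0 ≤ mv c N * (mv c N - 1)/2 by nlinarith)
      have heq : mv c N * (mv c N - 1)/2 * (1/(mv c N - 1)) = mv c N / 2 := by
        field_simp
      rw [heq] at h7
      linarith
    rw [Real.norm_eq_abs]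
    exact aux_sq hn1 ha0 haN
  have tE4 : Tendsto (fun N : ℕ => (mv c N/2) * Real.log (mv c N) / (N:ℝ)^2) atTop (𝓝 0) := by
    apply squeeze_zero_norm' (a := fun N : ℕ => Real.log ((N:ℝ)+1)/(N:ℝ)) _ log_div_nat_tendsto
    filter_upwards [hev, eventually_ge_atTop 1] with N hN hN1
    obtain ⟨h2m, hmx, hxm, hmn, hxn, hn1⟩ := basic_facts c hc0 hc1 hN1 hN
    have hlm0 : 0 ≤ Real.log (mv c N) := Real.log_nonneg (by linarith)
    have hlm1 : Real.log (mv c N) ≤ Real.log ((N:ℝ)+1) := Real.log_le_log (by linarith) (by linarith)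
    have hL0 : 0 ≤ Real.log ((N:ℝ)+1) := Real.log_nonneg (by linarith)
    rw [Real.norm_eq_abs]
    apply aux_sq' hn1 (by positivity) hL0
    have h8 : mv c N / 2 ≤ (N:ℝ) := by linarith
    exact mul_le_mul h8 hlm1 hlm0 (by linarith)
  have hmain : Tendsto (fun N : ℕ =>
      (1 - mv c N/(N:ℝ))*c^2
      + (mv c N * (mv c N - 1)/2) * (Real.log (xv c N) - Real.log (mv c N - 1)) / (N:ℝ)^2
      + (mv c N * (mv c N - 1)/2) * (Real.log (mv c N) - Real.log (mv c N - 1)) / (N:ℝ)^2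
      + (mv c N/2) * Real.log (mv c N) / (N:ℝ)^2
      + ((mv c N/(N:ℝ)) * (mv c N/(N:ℝ)) - (mv c N/(N:ℝ)) * (1/(N:ℝ)))
      - (mv c N/(N:ℝ)) * (mv c N/(N:ℝ))/4
      + (1/(N:ℝ)) * (1/(N:ℝ))/4) atTop
      (𝓝 ((1 - c^2)*c^2 + 0 + 0 + 0 + (c^2*c^2 - c^2*0) - c^2*c^2/4 + 0*0/4)) := by
    exact (((((((tendsto_const_nhds.sub hu).mul_const (c^2)).add tE2).add tE3).add tE4).add
      ((hu.mul hu).sub (hu.mul hv))).sub ((hu.mul hu).div_const 4)).add ((hv.mul hv).div_const 4)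
  have hmain' : Tendsto (fun N : ℕ =>
      (1 - mv c N/(N:ℝ))*c^2
      + (mv c N * (mv c N - 1)/2) * (Real.log (xv c N) - Real.log (mv c N - 1)) / (N:ℝ)^2
      + (mv c N * (mv c N - 1)/2) * (Real.log (mv c N) - Real.log (mv c N - 1)) / (N:ℝ)^2
      + (mv c N/2) * Real.log (mv c N) / (N:ℝ)^2
      + ((mv c N/(N:ℝ)) * (mv c N/(N:ℝ)) - (mv c N/(N:ℝ)) * (1/(N:ℝ)))
      - (mv c N/(N:ℝ)) * (mv c N/(N:ℝ))/4
      + (1/(N:ℝ)) * (1/(N:ℝ))/4) atTop (𝓝 (c^2 - c^4/4)) := by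
    convert hmain using 2
    ring
  apply hmain'.congr'
  filter_upwards [eventually_ge_atTop 1] with N hN1
  have hn0 : (0:ℝ) < (N:ℝ) := by exact_mod_cast hN1
  simp only [coreF, xv]
  field_simp
lemma two_log_div_tendsto :
    Tendsto (fun N : ℕ => (2 + Real.log ((N:ℝ)+1))/(N:ℝ)) atTop (𝓝 0) := by
  have h : Tendsto (fun N : ℕ => 2 * (1/(N:ℝ)) + Real.log ((N:ℝ)+1)/(N:ℝ)) atTop (𝓝 (2*0+0)) :=
    (tendsto_one_div_atTop_nhds_zero_nat.const_mul 2).add log_div_nat_tendsto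
  simp only [mul_zero, add_zero] at h
  apply h.congr
  intro N
  rw [add_div]
  ring
lemma lowF_div_tendsto (c : ℝ) (hc0 : 0 < c) (hc1 : c ≤ 1) :
    Tendsto (fun N : ℕ => lowF c N / (N:ℝ)^2) atTop (𝓝 (c^2 - c^4/4)) := by
  have hev := (xv_tendsto c hc0).eventually_ge_atTop 2
  have tE5 : Tendsto (fun N : ℕ => ((N:ℝ) - mv c N) * (2 + Real.log (xv c N)) / (N:ℝ)^2)
      atTop (𝓝 0) := by
    apply squeeze_zero_norm' (a := fun N : ℕ => (2 + Real.log ((N:ℝ)+1))/(N:ℝ)) _ two_log_div_tendsto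
    filter_upwards [hev, eventually_ge_atTop 1] with N hN hN1
    obtain ⟨h2m, hmx, hxm, hmn, hxn, hn1⟩ := basic_facts c hc0 hc1 hN1 hN
    have hlx0 : 0 ≤ Real.log (xv c N) := Real.log_nonneg (by linarith)
    have hlx1 : Real.log (xv c N) ≤ Real.log ((N:ℝ)+1) := Real.log_le_log (by linarith) (by linarith)
    have hL0 : (0:ℝ) ≤ 2 + Real.log ((N:ℝ)+1) := by
      have := Real.log_nonneg (show (1:ℝ) ≤ (N:ℝ)+1 by linarith)
      linarith
    rw [Real.norm_eq_abs]
    apply aux_sq' hn1 (by nlinarith) hL0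
    apply mul_le_mul (by linarith) (by linarith) (by linarith) (by linarith)
  have tE6 : Tendsto (fun N : ℕ => mv c N / (N:ℝ)^2) atTop (𝓝 0) := by
    apply squeeze_zero_norm' (a := fun N : ℕ => 1/(N:ℝ)) _ tendsto_one_div_atTop_nhds_zero_nat
    filter_upwards [hev, eventually_ge_atTop 1] with N hN hN1
    obtain ⟨h2m, hmx, hxm, hmn, hxn, hn1⟩ := basic_facts c hc0 hc1 hN1 hN
    rw [Real.norm_eq_abs]
    exact aux_sq hn1 (by linarith) hmn
  have tE7 : Tendsto (fun N : ℕ => mv c N * Real.log (mv c N - 1) / (N:ℝ)^2) atTop (𝓝 0) := by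
    apply squeeze_zero_norm' (a := fun N : ℕ => Real.log ((N:ℝ)+1)/(N:ℝ)) _ log_div_nat_tendsto
    filter_upwards [hev, eventually_ge_atTop 1] with N hN hN1
    obtain ⟨h2m, hmx, hxm, hmn, hxn, hn1⟩ := basic_facts c hc0 hc1 hN1 hN
    have hl0 : 0 ≤ Real.log (mv c N - 1) := Real.log_nonneg (by linarith)
    have hl1 : Real.log (mv c N - 1) ≤ Real.log ((N:ℝ)+1) := Real.log_le_log (by linarith) (by linarith)
    have hL0 : 0 ≤ Real.log ((N:ℝ)+1) := Real.log_nonneg (by linarith)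
    rw [Real.norm_eq_abs]
    apply aux_sq' hn1 (by nlinarith) hL0
    apply mul_le_mul hmn hl1 hl0 (by linarith)
  have tE8 : Tendsto (fun N : ℕ => mv c N * Real.log (mv c N) / (N:ℝ)^2) atTop (𝓝 0) := by
    apply squeeze_zero_norm' (a := fun N : ℕ => Real.log ((N:ℝ)+1)/(N:ℝ)) _ log_div_nat_tendsto
    filter_upwards [hev, eventually_ge_atTop 1] with N hN hN1
    obtain ⟨h2m, hmx, hxm, hmn, hxn, hn1⟩ := basic_facts c hc0 hc1 hN1 hN
    have hl0 : 0 ≤ Real.log (mv c N) := Real.log_nonneg (by linarith)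
    have hl1 : Real.log (mv c N) ≤ Real.log ((N:ℝ)+1) := Real.log_le_log (by linarith) (by linarith)
    have hL0 : 0 ≤ Real.log ((N:ℝ)+1) := Real.log_nonneg (by linarith)
    rw [Real.norm_eq_abs]
    apply aux_sq' hn1 (by nlinarith) hL0
    apply mul_le_mul hmn hl1 hl0 (by linarith)
  have h := ((((core_div_tendsto c hc0 hc1).sub tE5).sub tE6).sub tE7).sub tE8
  simp only [sub_zero] at h
  apply h.congr
  intro N
  simp only [lowF]
  ring
lemma highF_div_tendsto (c : ℝ) (hc0 : 0 < c) (hc1 : c ≤ 1) :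
    Tendsto (fun N : ℕ => highF c N / (N:ℝ)^2) atTop (𝓝 (c^2 - c^4/4)) := by
  have hev := (xv_tendsto c hc0).eventually_ge_atTop 2
  have tE6 : Tendsto (fun N : ℕ => mv c N / (N:ℝ)^2) atTop (𝓝 0) := by
    apply squeeze_zero_norm' (a := fun N : ℕ => 1/(N:ℝ)) _ tendsto_one_div_atTop_nhds_zero_nat
    filter_upwards [hev, eventually_ge_atTop 1] with N hN hN1
    obtain ⟨h2m, hmx, hxm, hmn, hxn, hn1⟩ := basic_facts c hc0 hc1 hN1 hN
    rw [Real.norm_eq_abs]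
    exact aux_sq hn1 (by linarith) hmn
  have tE9 : Tendsto (fun N : ℕ => mv c N * Real.log ((N:ℝ)+1) / (N:ℝ)^2) atTop (𝓝 0) := by
    apply squeeze_zero_norm' (a := fun N : ℕ => Real.log ((N:ℝ)+1)/(N:ℝ)) _ log_div_nat_tendsto
    filter_upwards [hev, eventually_ge_atTop 1] with N hN hN1
    obtain ⟨h2m, hmx, hxm, hmn, hxn, hn1⟩ := basic_facts c hc0 hc1 hN1 hN
    have hL0 : 0 ≤ Real.log ((N:ℝ)+1) := Real.log_nonneg (by linarith)
    rw [Real.norm_eq_abs]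
    apply aux_sq' hn1 (by nlinarith) hL0
    apply mul_le_mul hmn (le_refl _) hL0 (by linarith)
  have h := ((core_div_tendsto c hc0 hc1).add tE9).sub tE6
  simp only [add_zero, sub_zero] at h
  apply h.congr
  intro N
  simp only [highF]
  ring
lemma TT_div_tendsto (c : ℝ) (hc0 : 0 < c) (hc1 : c ≤ 1) :
    Tendsto (fun N : ℕ => TT c N / (N:ℝ)^2) atTop (𝓝 (c^2 - c^4/4)) := by
  apply tendsto_of_tendsto_of_tendsto_of_le_of_le' (lowF_div_tendsto c hc0 hc1)
    (highF_div_tendsto c hc0 hc1)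
  · filter_upwards [(xv_tendsto c hc0).eventually_ge_atTop 2, eventually_ge_atTop 1] with N hN hN1
    have hn1 : (1:ℝ) ≤ (N:ℝ) := by exact_mod_cast hN1
    have hn2 : (0:ℝ) < (N:ℝ)^2 := by positivity
    exact (div_le_div_iff_of_pos_right hn2).2 (TT_bounds c hc0 hc1 hN).1
  · filter_upwards [(xv_tendsto c hc0).eventually_ge_atTop 2, eventually_ge_atTop 1] with N hN hN1
    have hn1 : (1:ℝ) ≤ (N:ℝ) := by exact_mod_cast hN1
    have hn2 : (0:ℝ) < (N:ℝ)^2 := by positivity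
    exact (div_le_div_iff_of_pos_right hn2).2 (TT_bounds c hc0 hc1 hN).2
/-- Large-deviation principle for the scaled minimum modulus of the complex Ginibre ensemble:
for fixed `0 < c ≤ 1`, with `P(r_min^{(N)} ≥ √N c) = ∏_{k=0}^{N-1} Γ(k+1, N c²)/Γ(k+1)`,
one has `lim_{N→∞} -(4/N²) log P(r_min^{(N)}/√N ≥ c) = c⁴` (speed `N²/4`, rate `I(z)=z⁴`). -/
theorem ginibre_scaled_min_modulus_ldp (c : ℝ) (hc0 : 0 < c) (hc1 : c ≤ 1) :
    Filter.Tendsto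
      (fun N : ℕ =>
        -(4 / (N : ℝ) ^ 2) *
          Real.log (∏ k ∈ Finset.range N,
            uGamma ((k : ℝ) + 1) ((Real.sqrt N * c) ^ 2) / Real.Gamma ((k : ℝ) + 1)))
      Filter.atTop (nhds (c ^ 4)) := by
  have hT := TT_div_tendsto c hc0 hc1
  have hfinal : Tendsto (fun N : ℕ => 4*c^2 - 4*(TT c N/(N:ℝ)^2)) atTop
      (𝓝 (4*c^2 - 4*(c^2 - c^4/4))) := tendsto_const_nhds.sub (hT.const_mul 4)
  have hval : 4*c^2 - 4*(c^2 - c^4/4) = c^4 := by ring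
  rw [hval] at hfinal
  apply hfinal.congr'
  filter_upwards [(xv_tendsto c hc0).eventually_ge_atTop 2, eventually_ge_atTop 1] with N hNx hN1
  have hn1 : (1:ℝ) ≤ (N:ℝ) := by exact_mod_cast hN1
  have hn0 : (0:ℝ) < (N:ℝ) := by linarith
  have hx0 : (0:ℝ) < xv c N := by linarith
  have hsq : (Real.sqrt (N:ℝ) * c)^2 = xv c N := by
    rw [mul_pow, Real.sq_sqrt (Nat.cast_nonneg N)]
    rfl
  rw [hsq]
  have hprod : ∀ k ∈ Finset.range N, uGamma ((k:ℝ)+1) (xv c N) / Real.Gamma ((k:ℝ)+1)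
      = Real.exp (-(xv c N)) * pS (xv c N) k := by
    intro k _
    rw [uGamma_ratio k hx0.le]
    rfl
  rw [Finset.prod_congr rfl hprod,
    Real.log_prod (fun k _ => ne_of_gt (mul_pos (Real.exp_pos _) (pS_pos hx0.le k)))]
  have hlog : ∀ k ∈ Finset.range N, Real.log (Real.exp (-(xv c N)) * pS (xv c N) k)
      = -(xv c N) + Real.log (pS (xv c N) k) := by
    intro k _
    rw [Real.log_mul (Real.exp_ne_zero _) (ne_of_gt (pS_pos hx0.le k)), Real.log_exp]
  rw [Finset.sum_congr rfl hlog, Finset.sum_add_distrib, Finset.sum_const, Finset.card_range,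
    nsmul_eq_mul]
  have hTT : (∑ k ∈ Finset.range N, Real.log (pS (xv c N) k)) = TT c N := rfl
  rw [hTT]
  have hxv : xv c N = (N:ℝ)*c^2 := rfl
  rw [hxv]
  field_simp
  ring
end
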